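/- arXiv:2603.25110 — 10 statements merged into one kernel-verified Lean document; each statement's English description precedes it below -/
import Mathlib

section
/- If G is a nilpotent group such that the quotient G/Z(G) by its center contains a nontrivial divisible subgroup, then G itself contains a nontrivial divisible subgroup. -/
/-- A subgroup `D` of a group is *divisible* if every element of `D` has an
`n`-th root in `D` for every positive integer `n`. -/
def Subgroup.IsDivisible {G : Type*} [Group G] (D : Subgroup G) : Prop :=
  ∀ d ∈ D, ∀ n : ℕ, 0 < n → ∃ x ∈ D, x ^ n = d

section Aux

open Subgroup QuotientGroup

variable {G : Type*} [Group G]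

lemma aux_comm_pow (a g : G) (hc : ∀ k : ℕ, a ^ k * g * (a ^ k)⁻¹ * g⁻¹ ∈ center G) :
    ∀ n : ℕ, a ^ n * g * (a ^ n)⁻¹ * g⁻¹ = (a * g * a⁻¹ * g⁻¹) ^ n := by
  intro n
  induction n with
  | zero => group
  | succ k ih =>
    have hck := hc k
    rw [Subgroup.mem_center_iff] at hck
    have key : a ^ (k + 1) * g * (a ^ (k + 1))⁻¹ * g⁻¹
        = (a ^ k * g * (a ^ k)⁻¹ * g⁻¹) * (a * g * a⁻¹ * g⁻¹) := by
      have := hck a  -- a * c = c * a where c = a^k g a^{-k} g⁻¹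
      calc a ^ (k + 1) * g * (a ^ (k + 1))⁻¹ * g⁻¹
          = a * (a ^ k * g * (a ^ k)⁻¹ * g⁻¹) * (g * a⁻¹ * g⁻¹) := by
            rw [pow_succ']; group
        _ = (a ^ k * g * (a ^ k)⁻¹ * g⁻¹) * a * (g * a⁻¹ * g⁻¹) := by
            rw [← this]
        _ = (a ^ k * g * (a ^ k)⁻¹ * g⁻¹) * (a * g * a⁻¹ * g⁻¹) := by group
    rw [key, ih, pow_succ]

/-- Core lemma: if the quotient `G ⧸ Z(G)` has a nontrivial divisible subgroup contained in
its center, then `Z(G)` contains a nontrivial divisible subgroup. -/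
lemma aux_central_case (E : Subgroup (G ⧸ center G)) (hbot : E ≠ ⊥) (hdiv : E.IsDivisible)
    (hcent : E ≤ center (G ⧸ center G)) :
    ∃ K : Subgroup G, K ≠ ⊥ ∧ K.IsDivisible ∧ K ≤ center G := by
  set π : G →* G ⧸ center G := QuotientGroup.mk' (center G) with hπ
  set H : Subgroup G := E.comap π with hH
  set S : Set G := {x | ∃ h ∈ H, ∃ g : G, x = h * g * h⁻¹ * g⁻¹} with hS
  set K : Subgroup G := Subgroup.closure S with hK
  -- every element of S is central
  have hScent : ∀ x ∈ S, x ∈ center G := by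
    rintro x ⟨h, hh, g, rfl⟩
    have : π (h * g * h⁻¹ * g⁻¹) = 1 := by
      have hcomm := Subgroup.mem_center_iff.mp (hcent hh) (π g)
      simp only [map_mul, map_inv]
      rw [← hcomm]
      group
    rwa [← QuotientGroup.ker_mk' (center G), MonoidHom.mem_ker]
  have hKcent : K ≤ center G := (Subgroup.closure_le _).mpr hScent
  -- K is nontrivial
  have hKbot : K ≠ ⊥ := by
    obtain ⟨⟨e, he⟩, hne⟩ := Subgroup.ne_bot_iff_exists_ne_one.mp hbot
    obtain ⟨h, rfl⟩ := QuotientGroup.mk'_surjective (center G) e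
    have hhH : h ∈ H := he
    have hhnc : h ∉ center G := by
      intro hc
      apply hne
      have : π h = 1 := by rwa [← QuotientGroup.ker_mk' (center G), MonoidHom.mem_ker] at hc
      exact Subtype.ext this
    rw [Subgroup.mem_center_iff] at hhnc
    push_neg at hhnc
    obtain ⟨g, hg⟩ := hhnc
    have hmem : h * g * h⁻¹ * g⁻¹ ∈ K := Subgroup.subset_closure ⟨h, hhH, g, rfl⟩
    intro hKb
    rw [hKb, Subgroup.mem_bot] at hmem
    apply hg
    have heq : h * g = g * h := by
      calc h * g = (h * g * h⁻¹ * g⁻¹) * (g * h) := by group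
        _ = g * h := by rw [hmem]; group
    rw [heq]
  -- generators of K have n-th roots in K
  have hroot : ∀ x ∈ S, ∀ n : ℕ, 0 < n → ∃ y ∈ K, y ^ n = x := by
    rintro x ⟨h, hh, g, rfl⟩ n hn
    obtain ⟨y, hyE, hyn⟩ := hdiv (π h) hh n hn
    obtain ⟨a, rfl⟩ := QuotientGroup.mk'_surjective (center G) y
    have haH : a ∈ H := hyE
    -- h = a^n * z with z central
    have hz : (a ^ n)⁻¹ * h ∈ center G := by
      rw [← QuotientGroup.ker_mk' (center G), MonoidHom.mem_ker]
      simp only [map_mul, map_inv, map_pow]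
      rw [hyn]
      exact inv_mul_cancel _
    have hzc := Subgroup.mem_center_iff.mp hz
    have hcomm_eq : h * g * h⁻¹ * g⁻¹ = a ^ n * g * (a ^ n)⁻¹ * g⁻¹ := by
      have h1 : h = a ^ n * ((a ^ n)⁻¹ * h) := by group
      set z := (a ^ n)⁻¹ * h with hzdef
      have h2 : z * g = g * z := (hzc g).symm
      calc h * g * h⁻¹ * g⁻¹ = a ^ n * (z * g) * z⁻¹ * (a ^ n)⁻¹ * g⁻¹ := by
            rw [h1]; group
        _ = a ^ n * (g * z) * z⁻¹ * (a ^ n)⁻¹ * g⁻¹ := by rw [h2]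
        _ = a ^ n * g * (a ^ n)⁻¹ * g⁻¹ := by group
    have hc : ∀ k : ℕ, a ^ k * g * (a ^ k)⁻¹ * g⁻¹ ∈ center G := fun k =>
      hScent _ ⟨a ^ k, pow_mem haH k, g, rfl⟩
    refine ⟨a * g * a⁻¹ * g⁻¹, Subgroup.subset_closure ⟨a, haH, g, rfl⟩, ?_⟩
    rw [← aux_comm_pow a g hc n, ← hcomm_eq]
  -- K is divisible
  have hKdiv : K.IsDivisible := by
    intro d hd n hn
    set T : Subgroup G :=
      { carrier := {x | ∃ y ∈ K, y ^ n = x}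
        one_mem' := ⟨1, K.one_mem, one_pow n⟩
        mul_mem' := by
          rintro x₁ x₂ ⟨y₁, hy₁, rfl⟩ ⟨y₂, hy₂, rfl⟩
          refine ⟨y₁ * y₂, K.mul_mem hy₁ hy₂, ?_⟩
          have hcomm : Commute y₁ y₂ := (Subgroup.mem_center_iff.mp (hKcent hy₁) y₂).symm
          exact hcomm.mul_pow n
        inv_mem' := by
          rintro x ⟨y, hy, rfl⟩
          exact ⟨y⁻¹, K.inv_mem hy, by rw [inv_pow]⟩ } with hT
    have hle : K ≤ T := (Subgroup.closure_le T).mpr (fun x hx => hroot x hx n hn)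
    exact hle hd
  exact ⟨K, hKbot, hKdiv, hKcent⟩

/-- If a nilpotent group has a nontrivial divisible subgroup, then its center contains a
nontrivial divisible subgroup. -/
lemma aux_center (n : ℕ) : ∀ (N : Type*) [Group N] [Group.IsNilpotent N],
    Group.nilpotencyClass N = n → ∀ D : Subgroup N, D ≠ ⊥ → D.IsDivisible →
    ∃ E : Subgroup N, E ≠ ⊥ ∧ E.IsDivisible ∧ E ≤ center N := by
  induction n using Nat.strong_induction_on with
  | _ n ih =>
    intro N _ _ hclass D hbot hdiv
    by_cases hDc : D ≤ center N
    · exact ⟨D, hbot, hdiv, hDc⟩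
    · -- pass to the quotient N ⧸ center N
      have hnontriv : ¬ Subsingleton N := by
        intro hs
        exact hDc (fun d _ => Subsingleton.elim d 1 ▸ (center N).one_mem)
      have hn0 : n ≠ 0 := by
        intro h0
        rw [h0, nilpotencyClass_zero_iff_subsingleton] at hclass
        exact hnontriv hclass
      set π : N →* N ⧸ center N := QuotientGroup.mk' (center N) with hπ
      set D' : Subgroup (N ⧸ center N) := D.map π with hD'
      have hD'bot : D' ≠ ⊥ := by
        rw [Subgroup.ne_bot_iff_exists_ne_one]
        obtain ⟨d, hdD, hdnc⟩ := SetLike.not_le_iff_exists.mp hDc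
        refine ⟨⟨π d, Subgroup.mem_map_of_mem π hdD⟩, ?_⟩
        intro hone
        apply hdnc
        have : π d = 1 := congrArg Subtype.val hone
        rwa [← QuotientGroup.ker_mk' (center N), MonoidHom.mem_ker]
      have hD'div : D'.IsDivisible := by
        intro d hd m hm
        obtain ⟨d₀, hd₀, rfl⟩ := Subgroup.mem_map.mp hd
        obtain ⟨x, hx, hxm⟩ := hdiv d₀ hd₀ m hm
        exact ⟨π x, Subgroup.mem_map_of_mem π hx, by rw [← map_pow, hxm]⟩
      have hclass' : Group.nilpotencyClass (N ⧸ center N) = n - 1 := by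
        rw [nilpotencyClass_quotient_center, hclass]
      have hlt : n - 1 < n := Nat.sub_lt (Nat.pos_of_ne_zero hn0) one_pos
      obtain ⟨E, hEbot, hEdiv, hEcent⟩ :=
        ih (n - 1) hlt (N ⧸ center N) hclass' D' hD'bot hD'div
      obtain ⟨K, hKbot, hKdiv, hKcent⟩ := aux_central_case E hEbot hEdiv hEcent
      exact ⟨K, hKbot, hKdiv, hKcent⟩

end Aux

theorem stmt0 {G : Type*} [Group G] [Group.IsNilpotent G]
    (h : ∃ D : Subgroup (G ⧸ Subgroup.center G), D ≠ ⊥ ∧ D.IsDivisible) :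
    ∃ D : Subgroup G, D ≠ ⊥ ∧ D.IsDivisible := by
  obtain ⟨D, hbot, hdiv⟩ := h
  obtain ⟨E, hEbot, hEdiv, hEcent⟩ :=
    aux_center (Group.nilpotencyClass (G ⧸ Subgroup.center G)) (G ⧸ Subgroup.center G)
      rfl D hbot hdiv
  obtain ⟨K, hKbot, hKdiv, _⟩ := aux_central_case E hEbot hEdiv hEcent
  exact ⟨K, hKbot, hKdiv⟩
end

section
/- If G is a reduced nilpotent group (i.e., G has no nontrivial divisible subgroup), then the quotient G/Z(G) is also reduced. -/
/-- A group is *reduced* if its only divisible subgroup is trivial. -/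
def Group.IsReduced (G : Type*) [Group G] : Prop :=
  ∀ D : Subgroup G, D.IsDivisible → D = ⊥

open scoped commutatorElement

lemma comm_pow {G : Type*} [Group G] (a g : G)
    (h : ∀ i : ℕ, ⁅a ^ i, g⁆ ∈ Subgroup.center G) :
    ∀ m : ℕ, ⁅a ^ m, g⁆ = ⁅a, g⁆ ^ m := by
  intro m
  induction m with
  | zero => simp
  | succ m ih =>
    have hc := Subgroup.mem_center_iff.mp (h m)
    have key : ⁅a ^ (m + 1), g⁆ = a * ⁅a ^ m, g⁆ * (g * a⁻¹ * g⁻¹) := by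
      simp only [commutatorElement_def]
      group
    rw [key, hc a]
    have : ⁅a ^ m, g⁆ * a * (g * a⁻¹ * g⁻¹) = ⁅a ^ m, g⁆ * ⁅a, g⁆ := by
      simp only [commutatorElement_def]; group
    rw [mul_assoc, ← mul_assoc (⁅a ^ m, g⁆), this, ih, ← pow_succ]

lemma lift_lemma {G : Type*} [Group G] (B' : Subgroup (G ⧸ Subgroup.center G))
    (hd : B'.IsDivisible) (hb : B' ≠ ⊥) (hc : B' ≤ Subgroup.center (G ⧸ Subgroup.center G)) :
    ∃ B : Subgroup G, B.IsDivisible ∧ B ≠ ⊥ ∧ B ≤ Subgroup.center G := by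
  set Z := Subgroup.center G with hZ
  let mk : G →* G ⧸ Z := QuotientGroup.mk' Z
  -- commutators of elements over B' with anything are central
  have f1 : ∀ k : G, (mk k) ∈ B' → ∀ g : G, ⁅k, g⁆ ∈ Z := by
    intro k hk g
    have hcen := Subgroup.mem_center_iff.mp (hc hk)
    have : mk ⁅k, g⁆ = 1 := by
      have : mk ⁅k, g⁆ = ⁅mk k, mk g⁆ := by
        simp [commutatorElement_def]
      rw [this, commutatorElement_def, ← hcen (mk g)]
      group
    exact (QuotientGroup.eq_one_iff _).mp this
  set S : Set G := {x | ∃ k g : G, (mk k) ∈ B' ∧ x = ⁅k, g⁆} with hS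
  refine ⟨Subgroup.closure S, ?_, ?_, ?_⟩
  · -- divisible
    have hSZ : S ⊆ Z := by
      rintro x ⟨k, g, hk, rfl⟩; exact f1 k hk g
    have hBZ : Subgroup.closure S ≤ Z := Subgroup.closure_le Z |>.mpr hSZ
    intro d hd' n hn
    induction hd' using Subgroup.closure_induction with
    | mem x hx =>
      obtain ⟨k, g, hk, rfl⟩ := hx
      obtain ⟨x', hx', hxn⟩ := hd (mk k) hk n hn
      obtain ⟨x, rfl⟩ := QuotientGroup.mk'_surjective Z x'
      have hz : (x ^ n)⁻¹ * k ∈ Z := by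
        have h1 : mk (x ^ n) = mk k := by rw [map_pow]; exact hxn
        have h2 : mk ((x ^ n)⁻¹ * k) = 1 := by rw [map_mul, map_inv, h1]; simp
        exact (QuotientGroup.eq_one_iff _).mp h2
      set z := (x ^ n)⁻¹ * k with hzdef
      have hk_eq : k = x ^ n * z := by rw [hzdef]; group
      have hxi : ∀ i : ℕ, ⁅x ^ i, g⁆ ∈ Z := by
        intro i
        apply f1 _ _ g
        rw [map_pow]
        exact pow_mem hx' i
      have hcz := Subgroup.mem_center_iff.mp hz
      have e1 : ⁅k, g⁆ = ⁅x ^ n, g⁆ := by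
        rw [hk_eq]
        simp only [commutatorElement_def, mul_inv_rev]
        rw [show x ^ n * z * g * (z⁻¹ * (x ^ n)⁻¹) * g⁻¹
              = x ^ n * (z * g * z⁻¹) * (x ^ n)⁻¹ * g⁻¹ by group]
        rw [show z * g * z⁻¹ = g by rw [← hcz g]; group]
      rw [e1, comm_pow x g hxi n]
      exact ⟨⁅x, g⁆, Subgroup.subset_closure ⟨x, g, hx', rfl⟩, rfl⟩
    | one => exact ⟨1, one_mem _, one_pow n⟩
    | mul a b ha hb iha ihb =>
      obtain ⟨u, hu, hun⟩ := iha
      obtain ⟨v, hv, hvn⟩ := ihb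
      refine ⟨u * v, mul_mem hu hv, ?_⟩
      have : Commute u v := (Subgroup.mem_center_iff.mp (hBZ hu) v).symm
      rw [this.mul_pow, hun, hvn]
    | inv a ha iha =>
      obtain ⟨u, hu, hun⟩ := iha
      exact ⟨u⁻¹, inv_mem hu, by rw [inv_pow, hun]⟩
  · -- nontrivial
    obtain ⟨b, hbne⟩ := Subgroup.ne_bot_iff_exists_ne_one.mp hb
    obtain ⟨k, hkmk⟩ := QuotientGroup.mk'_surjective Z (b : G ⧸ Z)
    have hbB : mk k ∈ B' := by rw [show mk k = (b : G ⧸ Z) from hkmk]; exact b.2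
    have hknc : k ∉ Z := by
      intro hkZ
      apply hbne
      have h1 : mk k = 1 := (QuotientGroup.eq_one_iff k).mpr hkZ
      exact Subtype.ext (by rw [← hkmk]; exact h1)
    obtain ⟨g, hg⟩ : ∃ g : G, g * k ≠ k * g := by
      by_contra hall
      push_neg at hall
      exact hknc (Subgroup.mem_center_iff.mpr hall)
    have hcomm : ⁅k, g⁆ ≠ 1 := by
      intro h1
      apply hg
      have := commutatorElement_eq_one_iff_commute.mp h1
      exact this.symm.eq
    intro hbot
    apply hcomm
    have : ⁅k, g⁆ ∈ Subgroup.closure S := Subgroup.subset_closure ⟨k, g, hbB, rfl⟩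
    rwa [hbot, Subgroup.mem_bot] at this
  · exact Subgroup.closure_le Z |>.mpr (by rintro x ⟨k, g, hk, rfl⟩; exact f1 k hk g)

lemma map_divisible {G H : Type*} [Group G] [Group H] (f : G →* H)
    (A : Subgroup G) (hA : A.IsDivisible) : (A.map f).IsDivisible := by
  rintro d hd n hn
  obtain ⟨a, ha, rfl⟩ := hd
  obtain ⟨x, hx, hxn⟩ := hA a ha n hn
  exact ⟨f x, ⟨x, hx, rfl⟩, by rw [← map_pow, hxn]⟩

lemma push_to_center : ∀ (n : ℕ) {G : Type u} [Group G] [Group.IsNilpotent G],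
    Group.nilpotencyClass G ≤ n → ∀ A : Subgroup G, A.IsDivisible → A ≠ ⊥ →
    ∃ B : Subgroup G, B.IsDivisible ∧ B ≠ ⊥ ∧ B ≤ Subgroup.center G := by
  intro n
  induction n with
  | zero =>
    intro G _ _ hcls A _ hA
    have : Subsingleton G := nilpotencyClass_zero_iff_subsingleton.mp (Nat.le_zero.mp hcls)
    exact absurd (Subgroup.eq_bot_of_subsingleton A) hA
  | succ n ih =>
    intro G _ _ hcls A hAdiv hAbot
    by_cases hAc : A ≤ Subgroup.center G
    · exact ⟨A, hAdiv, hAbot, hAc⟩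
    · have hq : Group.nilpotencyClass (G ⧸ Subgroup.center G) ≤ n := by
        rw [nilpotencyClass_quotient_center]
        omega
      set mk := QuotientGroup.mk' (Subgroup.center G) with hmk
      have hmapdiv := map_divisible mk A hAdiv
      have hmapbot : A.map mk ≠ ⊥ := by
        obtain ⟨a, haA, hanc⟩ := SetLike.not_le_iff_exists.mp hAc
        intro hbot
        have : mk a ∈ A.map mk := ⟨a, haA, rfl⟩
        rw [hbot, Subgroup.mem_bot] at this
        exact hanc ((QuotientGroup.eq_one_iff a).mp this)
      obtain ⟨B', hB'div, hB'bot, hB'c⟩ := ih hq (A.map mk) hmapdiv hmapbot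
      exact lift_lemma B' hB'div hB'bot hB'c

theorem stmt1 {G : Type*} [Group G] [Group.IsNilpotent G]
    (h : Group.IsReduced G) :
    Group.IsReduced (G ⧸ Subgroup.center G) := by
  intro D hDdiv
  by_contra hDbot
  obtain ⟨B', hB'div, hB'bot, hB'c⟩ :=
    push_to_center (Group.nilpotencyClass (G ⧸ Subgroup.center G)) le_rfl D hDdiv hDbot
  obtain ⟨B, hBdiv, hBbot, _⟩ := lift_lemma B' hB'div hB'bot hB'c
  exact hBbot (h B hBdiv)
end

section
/- Let G be a nilpotent group of nilpotency class s and n a positive integer. Then the subgroup generated by the set of (n^s)-th powers { x^(n^s) : x ∈ G } is contained in the set of n-th powers { x^n : x ∈ G }. -/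
open Subgroup
open scoped commutatorElement

set_option linter.unnecessarySimpa false

/-- If generators commute mod a normal subgroup `N`, the commutator of closures lies in `N`. -/
private theorem commClosure {G : Type*} [Group G] (S T : Set G) (N : Subgroup G) [N.Normal]
    (h : ∀ a ∈ S, ∀ b ∈ T, ⁅a, b⁆ ∈ N) :
    ⁅closure S, closure T⁆ ≤ N := by
  rw [Subgroup.commutator_le]
  intro g₁ hg₁ g₂ hg₂
  have key : ∀ x ∈ closure S, ∀ y ∈ closure T,
      Commute (QuotientGroup.mk' N x) (QuotientGroup.mk' N y) := by
    intro x hx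
    induction hx using closure_induction with
    | mem a ha =>
      intro y hy
      induction hy using closure_induction with
      | mem b hb =>
        refine commutatorElement_eq_one_iff_commute.mp ?_
        rw [← map_commutatorElement]
        rw [QuotientGroup.mk'_apply, QuotientGroup.eq_one_iff]
        exact h a ha b hb
      | one => simpa using Commute.one_right _
      | mul b c _ _ hb hc => simpa [map_mul] using Commute.mul_right hb hc
      | inv b _ hb => simpa [map_inv] using Commute.inv_right hb
    | one => intro y hy; simpa using Commute.one_left _
    | mul b c _ _ hb hc => intro y hy; simpa [map_mul] using Commute.mul_left (hb y hy) (hc y hy)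
    | inv b _ hb => intro y hy; simpa [map_inv] using Commute.inv_left (hb y hy)
  have h1 : QuotientGroup.mk' N ⁅g₁, g₂⁆ = 1 := by
    rw [map_commutatorElement]
    exact commutatorElement_eq_one_iff_commute.mpr (key g₁ hg₁ g₂ hg₂)
  rwa [QuotientGroup.mk'_apply, QuotientGroup.eq_one_iff] at h1

/-- The closure of the set of `m`-th powers of a normal subgroup is normal. -/
private theorem powClosureNormal {G : Type*} [Group G] (K : Subgroup G) [hK : K.Normal] (m : ℕ) :
    (closure {w : G | ∃ c ∈ K, c ^ m = w}).Normal := by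
  constructor
  intro x hx g
  induction hx using closure_induction with
  | mem a ha =>
    obtain ⟨c, hc, rfl⟩ := ha
    refine subset_closure ⟨g * c * g⁻¹, hK.conj_mem c hc g, ?_⟩
    induction m with
    | zero => group
    | succ k ih => rw [pow_succ, pow_succ, ih]; group
  | one => simpa using (Subgroup.closure _).one_mem
  | mul x y _ _ hx hy =>
    have := mul_mem hx hy
    rwa [show (g * x * g⁻¹) * (g * y * g⁻¹) = g * (x * y) * g⁻¹ by group] at this
  | inv x _ hx =>
    have := inv_mem hx
    rwa [show (g * x * g⁻¹)⁻¹ = g * x⁻¹ * g⁻¹ by group] at this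

/-- `⁅a ^ k, b⁆ = ⁅a, b⁆ ^ k` when `⁅a, b⁆` is central. -/
private theorem commPowLeft {G : Type*} [Group G] (a b : G)
    (hc : ∀ g : G, Commute ⁅a, b⁆ g) (k : ℕ) : ⁅a ^ k, b⁆ = ⁅a, b⁆ ^ k := by
  induction k with
  | zero => simp
  | succ k ih =>
    have h1 : ⁅a ^ (k + 1), b⁆ = a * ⁅a ^ k, b⁆ * a⁻¹ * ⁅a, b⁆ := by
      simp only [commutatorElement_def, pow_succ']
      group
    rw [h1, ih, ← ((hc a).pow_left k).eq, mul_inv_cancel_right, ← pow_succ]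

private theorem commPowRight {G : Type*} [Group G] (a b : G)
    (hc : ∀ g : G, Commute ⁅a, b⁆ g) (k : ℕ) : ⁅a, b ^ k⁆ = ⁅a, b⁆ ^ k := by
  have hc' : ∀ g : G, Commute ⁅b, a⁆ g := by
    intro g
    have := (hc g).inv_left
    rwa [commutatorElement_inv] at this
  calc ⁅a, b ^ k⁆ = (⁅b ^ k, a⁆)⁻¹ := by rw [commutatorElement_inv]
    _ = (⁅b, a⁆ ^ k)⁻¹ := by rw [commPowLeft b a hc' k]
    _ = (⁅b, a⁆⁻¹) ^ k := by rw [inv_pow]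
    _ = ⁅a, b⁆ ^ k := by rw [commutatorElement_inv]

/-- Lower central series of a quotient (surjective image) is contained in the image. -/
private theorem lcsLeMap {G H : Type*} [Group G] [Group H] (f : G →* H)
    (hf : Function.Surjective f) (k : ℕ) :
    (⊤ : Subgroup H).lowerCentralSeries k ≤ Subgroup.map f ((⊤ : Subgroup G).lowerCentralSeries k) := by
  have htop : Subgroup.map f ⊤ = (⊤ : Subgroup H) := by
    rw [← MonoidHom.range_eq_map, MonoidHom.range_eq_top]
    exact hf
  induction k with
  | zero => rw [Subgroup.lowerCentralSeries_zero, Subgroup.lowerCentralSeries_zero, htop]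
  | succ k ih =>
    show ⁅(⊤ : Subgroup H).lowerCentralSeries k, (⊤ : Subgroup H)⁆ ≤ _
    calc ⁅(⊤ : Subgroup H).lowerCentralSeries k, (⊤ : Subgroup H)⁆
        ≤ ⁅Subgroup.map f ((⊤ : Subgroup G).lowerCentralSeries k), Subgroup.map f ⊤⁆ :=
          Subgroup.commutator_mono ih (le_of_eq htop.symm)
      _ = Subgroup.map f ⁅(⊤ : Subgroup G).lowerCentralSeries k, ⊤⁆ :=
          (Subgroup.map_commutator _ _ f).symm
      _ = Subgroup.map f ((⊤ : Subgroup G).lowerCentralSeries (k + 1)) := rfl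
/-- Generator commutator computation. -/
private theorem genComm {G : Type*} [Group G] (n i : ℕ) {c x : G}
    (hc : c ∈ (⊤ : Subgroup G).lowerCentralSeries i) :
    ⁅c ^ n ^ (i + 1), x ^ n⁆ ∈
      closure {w : G | ∃ d ∈ (⊤ : Subgroup G).lowerCentralSeries (i + 1), d ^ n ^ (i + 2) = w} ⊔
        (⊤ : Subgroup G).lowerCentralSeries (i + 2) := by
  set M := (⊤ : Subgroup G).lowerCentralSeries (i + 2) with hM
  let π := QuotientGroup.mk' M
  have hcent : ∀ u ∈ (⊤ : Subgroup G).lowerCentralSeries (i + 1), ∀ q : G ⧸ M, Commute (π u) q := by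
    intro u hu q
    obtain ⟨v, rfl⟩ := QuotientGroup.mk'_surjective M q
    refine commutatorElement_eq_one_iff_commute.mp ?_
    rw [← map_commutatorElement, QuotientGroup.mk'_apply, QuotientGroup.eq_one_iff]
    exact Subgroup.commutator_mem_commutator hu (Subgroup.mem_top v)
  have hcx : ⁅c, x⁆ ∈ (⊤ : Subgroup G).lowerCentralSeries (i + 1) :=
    Subgroup.commutator_mem_commutator hc (Subgroup.mem_top x)
  have hcent1 : ∀ g : G ⧸ M, Commute ⁅π c, π x⁆ g := by
    intro g
    rw [← map_commutatorElement]
    exact hcent _ hcx g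
  have step1 : ⁅π c, π x ^ n⁆ = ⁅π c, π x⁆ ^ n := commPowRight _ _ hcent1 n
  have hcent2 : ∀ g : G ⧸ M, Commute ⁅π c, π x ^ n⁆ g := by
    intro g
    rw [step1]
    exact (hcent1 g).pow_left n
  have step2 : ⁅π c ^ n ^ (i + 1), π x ^ n⁆ = ⁅π c, π x ^ n⁆ ^ n ^ (i + 1) :=
    commPowLeft _ _ hcent2 _
  have key : π ⁅c ^ n ^ (i + 1), x ^ n⁆ = π (⁅c, x⁆ ^ n ^ (i + 2)) := by
    rw [map_commutatorElement, map_pow, map_pow, step2, step1, ← pow_mul, map_pow,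
      map_commutatorElement, ← pow_succ']
  have hd : (⁅c, x⁆ ^ n ^ (i + 2))⁻¹ * ⁅c ^ n ^ (i + 1), x ^ n⁆ ∈ M := by
    have : π ((⁅c, x⁆ ^ n ^ (i + 2))⁻¹ * ⁅c ^ n ^ (i + 1), x ^ n⁆) = 1 := by
      rw [map_mul, map_inv, key]
      simp
    rwa [QuotientGroup.mk'_apply, QuotientGroup.eq_one_iff] at this
  have he : ⁅c, x⁆ ^ n ^ (i + 2) ∈
      closure {w : G | ∃ d ∈ (⊤ : Subgroup G).lowerCentralSeries (i + 1), d ^ n ^ (i + 2) = w} :=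
    subset_closure ⟨⁅c, x⁆, hcx, rfl⟩
  have := mul_mem (Subgroup.mem_sup_left he) (Subgroup.mem_sup_right hd)
  rwa [mul_inv_cancel_left] at this

private theorem genComm' {G : Type*} [Group G] (n i : ℕ) {c x : G}
    (hc : c ∈ (⊤ : Subgroup G).lowerCentralSeries (i + 1)) :
    ⁅c, x ^ n⁆ ∈
      closure {w : G | ∃ d ∈ (⊤ : Subgroup G).lowerCentralSeries (i + 1), d ^ n ^ (i + 2) = w} ⊔
        (⊤ : Subgroup G).lowerCentralSeries (i + 2) :=
  Subgroup.mem_sup_right (Subgroup.commutator_mem_commutator hc (Subgroup.mem_top (x ^ n)))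

/-- The chain claim: the `i`-th lower central series term of the subgroup generated by
`n`-th powers is contained in `⟨(lcs G i)^(n^(i+1))⟩ ⊔ lcs G (i+1)`. -/
private theorem chain {G : Type*} [Group G] (n : ℕ) (H : Subgroup G)
    (hH : H ≤ closure {x : G | ∃ y : G, y ^ n = x}) (i : ℕ) :
    Subgroup.map H.subtype ((⊤ : Subgroup (↥H)).lowerCentralSeries i) ≤
      closure {w : G | ∃ c ∈ (⊤ : Subgroup G).lowerCentralSeries i, c ^ n ^ (i + 1) = w} ⊔
        (⊤ : Subgroup G).lowerCentralSeries (i + 1) := by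
  induction i with
  | zero =>
    intro w hw
    refine Subgroup.mem_sup_left ?_
    obtain ⟨z, -, rfl⟩ := hw
    have : (z : G) ∈ closure {x : G | ∃ y : G, y ^ n = x} := hH z.2
    refine (Subgroup.closure_mono ?_) this
    rintro w ⟨y, rfl⟩
    exact ⟨y, Subgroup.mem_top y, by rw [pow_one]⟩
  | succ i ih =>
    have h1 : (⊤ : Subgroup (↥H)).lowerCentralSeries (i + 1) = ⁅(⊤ : Subgroup (↥H)).lowerCentralSeries i, ⊤⁆ := rfl
    rw [h1, Subgroup.map_commutator]
    have h2 : Subgroup.map H.subtype ⊤ ≤ closure {x : G | ∃ y : G, y ^ n = x} := by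
      rintro w ⟨z, -, rfl⟩
      exact hH z.2
    refine le_trans (Subgroup.commutator_mono ih h2) ?_
    have hun : closure {w : G | ∃ c ∈ (⊤ : Subgroup G).lowerCentralSeries i, c ^ n ^ (i + 1) = w} ⊔
        (⊤ : Subgroup G).lowerCentralSeries (i + 1) =
        closure ({w : G | ∃ c ∈ (⊤ : Subgroup G).lowerCentralSeries i, c ^ n ^ (i + 1) = w} ∪
          ↑((⊤ : Subgroup G).lowerCentralSeries (i + 1))) := by
      rw [Subgroup.closure_union, Subgroup.closure_eq]
    rw [hun]
    haveI : (closure {w : G | ∃ d ∈ (⊤ : Subgroup G).lowerCentralSeries (i + 1),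
        d ^ n ^ (i + 2) = w}).Normal := powClosureNormal _ _
    refine commClosure _ _ _ ?_
    rintro a ha b ⟨y, rfl⟩
    rcases ha with ⟨c, hc, rfl⟩ | ha
    · exact genComm n i hc
    · exact genComm' n i ha
private theorem mainAux (n : ℕ) : ∀ (s : ℕ) {G : Type u} [Group G],
    (⊤ : Subgroup G).lowerCentralSeries s = ⊥ →
    ∀ g ∈ Subgroup.closure {x : G | ∃ y : G, y ^ n ^ s = x}, ∃ y : G, y ^ n = g := by
  intro s
  induction s with
  | zero =>
    intro G _ hs g _
    refine ⟨1, ?_⟩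
    have h0 : g ∈ (⊤ : Subgroup G).lowerCentralSeries 0 := by rw [Subgroup.lowerCentralSeries_zero]; trivial
    rw [hs, Subgroup.mem_bot] at h0
    rw [one_pow, h0]
  | succ s IH =>
    intro G _ hs g hg
    set H : Subgroup G := closure {x : G | ∃ y : G, y ^ n = x} with hHdef
    -- Step A: g is in the image of the closure of (n^s)-th powers of H
    have hA : closure {x : G | ∃ y : G, y ^ n ^ (s + 1) = x} ≤
        Subgroup.map H.subtype (closure {h : ↥H | ∃ y : ↥H, y ^ n ^ s = h}) := by
      rw [Subgroup.closure_le]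
      rintro x ⟨y, rfl⟩
      have hyn : y ^ n ∈ H := subset_closure ⟨y, rfl⟩
      refine ⟨(⟨y ^ n, hyn⟩ : ↥H) ^ n ^ s, subset_closure ⟨⟨y ^ n, hyn⟩, rfl⟩, ?_⟩
      show ((⟨y ^ n, hyn⟩ : ↥H) ^ n ^ s : G) = y ^ n ^ (s + 1)
      push_cast
      rw [← pow_mul, ← pow_succ']
    obtain ⟨g', hg'T, rfl⟩ := hA hg
    -- Step B: the quotient of H by the s-th term
    set N : Subgroup ↥H := (⊤ : Subgroup (↥H)).lowerCentralSeries s with hNdef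
    have hH1 : (⊤ : Subgroup (↥H)).lowerCentralSeries (s + 1) = ⊥ := by
      rw [eq_bot_iff]
      intro x hx
      have h1 : H.subtype x ∈ (⊤ : Subgroup G).lowerCentralSeries (s + 1) :=
        Subgroup.lowerCentralSeries_map_subtype_le H (s + 1) ⟨x, hx, rfl⟩
      rw [hs, Subgroup.mem_bot] at h1
      exact Subgroup.mem_bot.mpr (Subtype.ext (by simpa using h1))
    have hQ : (⊤ : Subgroup (↥H ⧸ N)).lowerCentralSeries s = ⊥ := by
      rw [eq_bot_iff]
      refine le_trans (lcsLeMap (QuotientGroup.mk' N) (QuotientGroup.mk'_surjective N) s) ?_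
      rintro x ⟨y, hy, rfl⟩
      rw [Subgroup.mem_bot, QuotientGroup.mk'_apply, QuotientGroup.eq_one_iff]
      exact hy
    -- Step C: apply induction hypothesis in the quotient
    have hmap : closure {h : ↥H | ∃ y : ↥H, y ^ n ^ s = h} ≤
        Subgroup.comap (QuotientGroup.mk' N)
          (closure {x : ↥H ⧸ N | ∃ y : ↥H ⧸ N, y ^ n ^ s = x}) := by
      rw [Subgroup.closure_le]
      rintro t ⟨y, rfl⟩
      exact Subgroup.mem_comap.mpr (subset_closure ⟨QuotientGroup.mk' N y, by rw [← map_pow]⟩)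
    obtain ⟨yb, hyb⟩ := IH hQ _ (Subgroup.mem_comap.mp (hmap hg'T))
    obtain ⟨y₀, rfl⟩ := QuotientGroup.mk'_surjective N yb
    have hz : (y₀ ^ n)⁻¹ * g' ∈ N := by
      have h1 : QuotientGroup.mk' N ((y₀ ^ n)⁻¹ * g') = 1 := by
        rw [map_mul, map_inv, map_pow, hyb]
        simp
      rwa [QuotientGroup.mk'_apply, QuotientGroup.eq_one_iff] at h1
    -- Step D: the discrepancy is an n-th power of a central element
    have hchain : H.subtype ((y₀ ^ n)⁻¹ * g') ∈
        closure {w : G | ∃ c ∈ (⊤ : Subgroup G).lowerCentralSeries s, c ^ n ^ (s + 1) = w} := by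
      have h1 := chain n H le_rfl s ⟨_, hz, rfl⟩
      rwa [hs, sup_bot_eq] at h1
    have hZcent : ∀ c ∈ (⊤ : Subgroup G).lowerCentralSeries s, ∀ x : G, Commute c x := by
      intro c hc x
      refine commutatorElement_eq_one_iff_commute.mp ?_
      have h1 : ⁅c, x⁆ ∈ (⊤ : Subgroup G).lowerCentralSeries (s + 1) :=
        Subgroup.commutator_mem_commutator hc (Subgroup.mem_top x)
      rwa [hs, Subgroup.mem_bot] at h1
    have hP : ∀ v ∈ closure {w : G | ∃ c ∈ (⊤ : Subgroup G).lowerCentralSeries s, c ^ n ^ (s + 1) = w},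
        ∃ w ∈ (⊤ : Subgroup G).lowerCentralSeries s, w ^ n = v := by
      intro v hv
      induction hv using closure_induction with
      | mem a ha =>
        obtain ⟨c, hc, rfl⟩ := ha
        exact ⟨c ^ n ^ s, pow_mem hc _, by rw [← pow_mul, ← pow_succ]⟩
      | one => exact ⟨1, one_mem _, one_pow n⟩
      | mul a b _ _ ha hb =>
        obtain ⟨w₁, hw₁, rfl⟩ := ha
        obtain ⟨w₂, hw₂, rfl⟩ := hb
        exact ⟨w₁ * w₂, mul_mem hw₁ hw₂, (hZcent w₁ hw₁ w₂).mul_pow n⟩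
      | inv a _ ha =>
        obtain ⟨w, hw, rfl⟩ := ha
        exact ⟨w⁻¹, inv_mem hw, by rw [inv_pow]⟩
    obtain ⟨w, hwZ, hw⟩ := hP _ hchain
    -- Final assembly
    refine ⟨(y₀ : G) * w, ?_⟩
    rw [((hZcent w hwZ (y₀ : G)).symm).mul_pow n, hw]
    show ((y₀ : G)) ^ n * (H.subtype ((y₀ ^ n)⁻¹ * g')) = (H.subtype g' : G)
    simp [mul_assoc]

/-- In a nilpotent group of class `s`, the subgroup generated by `(n^s)`-th powers is
contained in the set of `n`-th powers. Here class `s` means `γ_{s+1}(G) = 1`, i.e.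
`(⊤ : Subgroup G).lowerCentralSeries s = ⊥`. -/
theorem stmt2 {G : Type*} [Group G] (s : ℕ) (hs : (⊤ : Subgroup G).lowerCentralSeries s = ⊥)
    (n : ℕ) (hn : 0 < n) :
    ∀ g ∈ Subgroup.closure {x : G | ∃ y : G, y ^ (n ^ s) = x}, ∃ y : G, y ^ n = g :=
  fun g hg => mainAux n s hs g hg
end

section
/- Let G be a nilpotent p-group (every element has order a power of the prime p). Then the set G₀ of elements of infinite p-height is a normal subgroup of G. -/
open Subgroup
open scoped commutatorElement

private def Pw (p m : ℕ) (H : Type*) [Group H] : Subgroup H :=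
  Subgroup.closure (Set.range fun x : H => x ^ p ^ m)

private lemma mem_Pw {p m : ℕ} {H : Type*} [Group H] (x : H) : x ^ p ^ m ∈ Pw p m H :=
  Subgroup.subset_closure ⟨x, rfl⟩

private instance Pw_normal (p m : ℕ) (H : Type*) [Group H] : (Pw p m H).Normal := by
  constructor
  intro g hg h
  refine Subgroup.closure_induction (fun x hx => ?_) ?_ (fun x y _ _ ihx ihy => ?_)
    (fun x _ ihx => ?_) hg
  · obtain ⟨z, rfl⟩ := hx
    have : h * z ^ p ^ m * h⁻¹ = (h * z * h⁻¹) ^ p ^ m := by rw [conj_pow]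
    rw [this]
    exact mem_Pw _
  · simpa using (Pw p m H).one_mem
  · rw [← conj_mul]; exact mul_mem ihx ihy
  · rw [← conj_inv]; exact inv_mem ihx

private lemma lcs_succ_comm {H : Type*} [Group H] (k : ℕ) :
    (⊤ : Subgroup H).lowerCentralSeries (k + 1) = ⁅(⊤ : Subgroup H).lowerCentralSeries k, ⊤⁆ := rfl

/-- lower central series of a quotient is contained in the image. -/
private lemma lcs_le_map {H Q : Type*} [Group H] [Group Q] (f : H →* Q)
    (hf : Function.Surjective f) (k : ℕ) :
    (⊤ : Subgroup Q).lowerCentralSeries k ≤ ((⊤ : Subgroup H).lowerCentralSeries k).map f := by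
  induction k with
  | zero => simp [Subgroup.map_top_of_surjective f hf]
  | succ k ih =>
      rw [lcs_succ_comm, lcs_succ_comm, Subgroup.map_commutator]
      exact Subgroup.commutator_mono ih (by simp [Subgroup.map_top_of_surjective f hf])

/-- Key theorem: in a group of nilpotency class `< c`, for every `n` there is `m` such that
every element of the subgroup generated by `p^m`-th powers is a `p^n`-th power. -/
private theorem main (p : ℕ) : ∀ (c : ℕ) {H : Type*} [Group H],
    (⊤ : Subgroup H).lowerCentralSeries c = ⊥ → ∀ n : ℕ, ∃ m : ℕ,
      ∀ g ∈ Pw p m H, ∃ z : H, z ^ p ^ n = g := by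
  intro c
  induction c with
  | zero =>
      intro H _ hbot n
      refine ⟨0, fun g hg => ⟨1, ?_⟩⟩
      have : g ∈ (⊥ : Subgroup H) := by
        rw [← hbot, Subgroup.lowerCentralSeries_zero]; trivial
      rw [Subgroup.mem_bot] at this
      simp [this]
  | succ c ih =>
      intro H _ hbot n
      -- the layer `(⊤ : Subgroup H).lowerCentralSeries c` is central
      have hcenter : (⊤ : Subgroup H).lowerCentralSeries c ≤ Subgroup.center H := by
        intro u hu
        rw [Subgroup.mem_center_iff]
        intro y
        have h1 : ⁅u, y⁆ ∈ (⊤ : Subgroup H).lowerCentralSeries (c + 1) := by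
          rw [lcs_succ_comm]
          exact Subgroup.commutator_mem_commutator hu (Subgroup.mem_top y)
        rw [hbot, Subgroup.mem_bot, commutatorElement_eq_one_iff_commute] at h1
        exact h1.symm.eq
      cases c with
      | zero =>
          -- abelian case
          have hcomm : ∀ x y : H, Commute x y := by
            intro x y
            have := hcenter (by rw [Subgroup.lowerCentralSeries_zero]; trivial : x ∈ (⊤ : Subgroup H).lowerCentralSeries 0)
            rw [Subgroup.mem_center_iff] at this
            exact (this y).symm
          refine ⟨n, fun g hg => ?_⟩
          let T : Subgroup H :=
            { carrier := {u | ∃ z : H, z ^ p ^ n = u}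
              one_mem' := ⟨1, one_pow _⟩
              mul_mem' := by
                rintro a b ⟨z, rfl⟩ ⟨w, rfl⟩
                exact ⟨z * w, (hcomm z w).mul_pow _⟩
              inv_mem' := by
                rintro a ⟨z, rfl⟩
                exact ⟨z⁻¹, by rw [inv_pow]⟩ }
          have hle : Pw p n H ≤ T := by
            rw [Pw, Subgroup.closure_le]
            rintro _ ⟨x, rfl⟩
            exact ⟨x, rfl⟩
          exact hle hg
      | succ k =>
          -- general step; `K := ⁅lcs H k, Pw p n H⁆`
          set K : Subgroup H := ⁅(⊤ : Subgroup H).lowerCentralSeries k, Pw p n H⁆ with hKdef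
          haveI : K.Normal := Subgroup.commutator_normal _ _
          -- value of iterated commutators with lcs k are central
          have hvals : ∀ a ∈ (⊤ : Subgroup H).lowerCentralSeries k, ∀ y : H, ⁅a, y⁆ ∈ Subgroup.center H := by
            intro a ha y
            refine hcenter ?_
            rw [lcs_succ_comm]
            exact Subgroup.commutator_mem_commutator ha (Subgroup.mem_top y)
          -- hom-like property of commutators with fixed a
          have homlike : ∀ a ∈ (⊤ : Subgroup H).lowerCentralSeries k, ∀ x y : H,
              ⁅a, x * y⁆ = ⁅a, x⁆ * ⁅a, y⁆ := by
            intro a ha x y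
            have h1 : ⁅a, x * y⁆ = ⁅a, x⁆ * (x * ⁅a, y⁆ * x⁻¹) := by
              simp only [commutatorElement_def]; group
            have h2 : x * ⁅a, y⁆ * x⁻¹ = ⁅a, y⁆ := by
              have := (Subgroup.mem_center_iff.mp (hvals a ha y)) x
              rw [this, mul_inv_cancel_right]
            rw [h1, h2]
          have powlike : ∀ a ∈ (⊤ : Subgroup H).lowerCentralSeries k, ∀ (x : H) (q : ℕ),
              ⁅a, x ^ q⁆ = ⁅a, x⁆ ^ q := by
            intro a ha x q
            induction q with
            | zero => simp
            | succ q ihq => rw [pow_succ, homlike a ha, ihq, pow_succ]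
          -- every element of K is a `p^n`-th power of a central element
          have hK : ∀ u ∈ K, ∃ v : H, v ∈ Subgroup.center H ∧ v ^ p ^ n = u := by
            let T : Subgroup H :=
              { carrier := {u | ∃ v : H, v ∈ Subgroup.center H ∧ v ^ p ^ n = u}
                one_mem' := ⟨1, (Subgroup.center H).one_mem, one_pow _⟩
                mul_mem' := by
                  rintro a b ⟨v, hv, rfl⟩ ⟨w, hw, rfl⟩
                  have hc : Commute v w := (Subgroup.mem_center_iff.mp hw v)
                  exact ⟨v * w, mul_mem hv hw, hc.mul_pow _⟩
                inv_mem' := by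
                  rintro a ⟨v, hv, rfl⟩
                  exact ⟨v⁻¹, inv_mem hv, by rw [inv_pow]⟩ }
            have hle : K ≤ T := by
              rw [hKdef, Subgroup.commutator_le]
              intro a ha b hb
              refine Subgroup.closure_induction (fun x hx => ?_) ?_
                (fun x y _ _ ihx ihy => ?_) (fun x hx ihx => ?_) hb
              · obtain ⟨z, rfl⟩ := hx
                exact ⟨⁅a, z⁆, hvals a ha z, (powlike a ha z _).symm⟩
              · exact ⟨1, (Subgroup.center H).one_mem, by simp⟩
              · obtain ⟨v, hv, hve⟩ := ihx
                obtain ⟨w, hw, hwe⟩ := ihy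
                have hc : Commute v w := (Subgroup.mem_center_iff.mp hw v)
                exact ⟨v * w, mul_mem hv hw, by
                  rw [hc.mul_pow, hve, hwe, ← homlike a ha]⟩
              · obtain ⟨v, hv, hve⟩ := ihx
                have hinv : ⁅a, x⁻¹⁆ = ⁅a, x⁆⁻¹ := by
                  have h0 := homlike a ha x x⁻¹
                  rw [mul_inv_cancel, commutatorElement_one_right] at h0
                  exact (eq_inv_of_mul_eq_one_right h0.symm)
                exact ⟨v⁻¹, inv_mem hv, by rw [inv_pow, hve, hinv]⟩
            intro u hu
            exact hle hu
          -- quotient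
          let π := QuotientGroup.mk' K
          have hπs : Function.Surjective π := QuotientGroup.mk'_surjective K
          set W : Subgroup (H ⧸ K) := (Pw p n H).map π with hWdef
          have hmapK : K.map π = ⊥ := by
            rw [Subgroup.map_eq_bot_iff, QuotientGroup.ker_mk']
          have hW : (⊤ : Subgroup W).lowerCentralSeries (k + 1) = ⊥ := by
            have h1 : ((⊤ : Subgroup W).lowerCentralSeries (k + 1)).map W.subtype = ⊥ := by
              rw [eq_bot_iff, lcs_succ_comm, Subgroup.map_commutator]
              calc ⁅((⊤ : Subgroup W).lowerCentralSeries k).map W.subtype, (⊤ : Subgroup W).map W.subtype⁆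
                  ≤ ⁅((⊤ : Subgroup (H ⧸ K)).lowerCentralSeries k), W⁆ := by
                    exact Subgroup.commutator_mono (Subgroup.lowerCentralSeries_map_subtype_le _ _)
                      (Subgroup.map_subtype_le _)
                _ ≤ ⁅((⊤ : Subgroup H).lowerCentralSeries k).map π, (Pw p n H).map π⁆ :=
                    Subgroup.commutator_mono (lcs_le_map π hπs k) (le_of_eq hWdef)
                _ = ⊥ := by rw [← Subgroup.map_commutator, ← hKdef, hmapK]
            rwa [Subgroup.map_eq_bot_iff_of_injective _ (Subgroup.subtype_injective W)] at h1
          obtain ⟨m₁, hm₁⟩ := ih hW n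
          refine ⟨n + m₁, fun g hg => ?_⟩
          -- push g into the quotient picture
          have hg' : π g ∈ (Pw p m₁ W).map W.subtype := by
            have hle : Pw p (n + m₁) H ≤
                Subgroup.comap π ((Pw p m₁ W).map W.subtype) := by
              rw [Pw, Subgroup.closure_le]
              rintro _ ⟨x, rfl⟩
              have hxW : (π x) ^ p ^ n ∈ W := by
                rw [hWdef]
                exact ⟨x ^ p ^ n, mem_Pw x, by rw [map_pow]⟩
              refine ⟨(⟨(π x) ^ p ^ n, hxW⟩ : W) ^ p ^ m₁, mem_Pw _, ?_⟩
              show ((((⟨(π x) ^ p ^ n, hxW⟩ : W) ^ p ^ m₁ : W) : H ⧸ K)) = π (x ^ p ^ (n + m₁))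
              rw [SubmonoidClass.coe_pow]
              simp only [map_pow]
              rw [← pow_mul, ← pow_add]
            exact hle hg
          obtain ⟨zW, hzW, hzWeq⟩ := hg'
          obtain ⟨w, hw⟩ := hm₁ zW hzW
          obtain ⟨z, hz, hzeq⟩ := (hWdef ▸ w.2 : (w : H ⧸ K) ∈ (Pw p n H).map π)
          have hπz : π (z ^ p ^ n) = π g := by
            rw [map_pow, hzeq]
            calc (w : H ⧸ K) ^ p ^ n = ((w ^ p ^ n : W) : H ⧸ K) := by
                  rw [SubmonoidClass.coe_pow]
              _ = ((zW : W) : H ⧸ K) := by rw [hw]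
              _ = π g := hzWeq
          have hu : (z ^ p ^ n)⁻¹ * g ∈ K := by
            have : π ((z ^ p ^ n)⁻¹ * g) = 1 := by
              rw [map_mul, map_inv, hπz]
              simp
            rwa [← QuotientGroup.ker_mk' K, MonoidHom.mem_ker]
          obtain ⟨v, hvc, hveq⟩ := hK _ hu
          refine ⟨z * v, ?_⟩
          have hc : Commute z v := ((Subgroup.mem_center_iff.mp hvc) z)
          rw [hc.mul_pow, hveq, mul_inv_cancel_left]

/-- In a nilpotent `p`-group, the set of elements of infinite `p`-height is a normal
subgroup. -/
theorem stmt3 {G : Type*} [Group G] [Group.IsNilpotent G] (p : ℕ) (hp : p.Prime)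
    (hpG : IsPGroup p G) :
    ∃ N : Subgroup G, (↑N = {g : G | ∀ n : ℕ, ∃ h : G, h ^ (p ^ n) = g}) ∧ N.Normal := by
  obtain ⟨c, hc⟩ := Subgroup.nilpotent_iff_lowerCentralSeries.mp (inferInstance : Group.IsNilpotent G)
  refine ⟨{ carrier := {g : G | ∀ n : ℕ, ∃ h : G, h ^ (p ^ n) = g}
            one_mem' := fun n => ⟨1, one_pow _⟩
            mul_mem' := ?_
            inv_mem' := ?_ }, rfl, ?_⟩
  · rintro a b ha hb n
    obtain ⟨m, hm⟩ := main p c hc n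
    obtain ⟨x, hx⟩ := ha m
    obtain ⟨y, hy⟩ := hb m
    exact hm (a * b) (mul_mem (hx ▸ mem_Pw x) (hy ▸ mem_Pw y))
  · rintro a ha n
    obtain ⟨x, hx⟩ := ha n
    exact ⟨x⁻¹, by rw [inv_pow, hx]⟩
  · constructor
    intro g hg h n
    obtain ⟨x, hx⟩ := hg n
    exact ⟨h * x * h⁻¹, by rw [conj_pow, hx]⟩
end

section
/- Let G be a nilpotent p-group and G₀ the subgroup of elements of infinite p-height. Then the quotient group G/G₀ has no nontrivial elements of infinite p-height. -/
open scoped commutatorElement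

/-- `f` agrees with an integer combination of binomial coefficients `C(·,j)`, `j ≤ B`. -/
def PolyDeg (B : ℕ) (f : ℕ → ℤ) : Prop :=
  ∃ c : ℕ → ℤ, ∀ n, f n = ∑ j ∈ Finset.range (B + 1), c j * (n.choose j : ℤ)

def IsPolyE (f : ℕ → ℤ) : Prop := ∃ B, PolyDeg B f

theorem polyDeg_congr {B : ℕ} {f g : ℕ → ℤ} (h : ∀ n, f n = g n) (hf : PolyDeg B f) :
    PolyDeg B g := by
  obtain ⟨c, hc⟩ := hf
  exact ⟨c, fun n => (h n).symm.trans (hc n)⟩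

theorem polyDeg_mono {B B' : ℕ} {f : ℕ → ℤ} (h : B ≤ B') (hf : PolyDeg B f) :
    PolyDeg B' f := by
  obtain ⟨c, hc⟩ := hf
  refine ⟨fun j => if j ≤ B then c j else 0, fun n => ?_⟩
  rw [hc n]
  rw [← Finset.sum_subset (Finset.range_subset_range.2 (by omega : B + 1 ≤ B' + 1))]
  · refine Finset.sum_congr rfl fun j hj => ?_
    simp only [Finset.mem_range] at hj
    simp only [if_pos (by omega : j ≤ B)]
  · intro j _ hj
    simp only [Finset.mem_range, not_lt] at hj
    simp only [if_neg (by omega : ¬ j ≤ B), zero_mul]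

theorem polyDeg_const (k : ℤ) : PolyDeg 0 (fun _ => k) := by
  refine ⟨fun _ => k, fun n => ?_⟩
  simp

theorem polyDeg_id : PolyDeg 1 (fun n => (n : ℤ)) := by
  refine ⟨fun j => if j = 1 then 1 else 0, fun n => ?_⟩
  rw [Finset.sum_range_succ, Finset.sum_range_one]
  simp

theorem polyDeg_neg {B f} (hf : PolyDeg B f) : PolyDeg B (fun n => -(f n)) := by
  obtain ⟨c, hc⟩ := hf
  refine ⟨fun j => -(c j), fun n => ?_⟩
  show -(f n) = _
  rw [hc n, ← Finset.sum_neg_distrib]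
  exact Finset.sum_congr rfl fun j _ => by ring

theorem polyDeg_add {B₁ B₂ f g} (hf : PolyDeg B₁ f) (hg : PolyDeg B₂ g) :
    PolyDeg (max B₁ B₂) (fun n => f n + g n) := by
  obtain ⟨c, hc⟩ := polyDeg_mono (le_max_left B₁ B₂) hf
  obtain ⟨d, hd⟩ := polyDeg_mono (le_max_right B₁ B₂) hg
  refine ⟨fun j => c j + d j, fun n => ?_⟩
  show f n + g n = _
  rw [hc n, hd n, ← Finset.sum_add_distrib]
  exact Finset.sum_congr rfl fun j _ => by ring

theorem polyDeg_zero_const {f} (hf : PolyDeg 0 f) : ∀ n, f n = f 0 := by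
  obtain ⟨c, hc⟩ := hf
  intro n
  rw [hc n, hc 0]
  simp

/-- Forward difference of a polynomial drops the degree. -/
theorem polyDeg_delta {B f} (hf : PolyDeg (B + 1) f) :
    PolyDeg B (fun n => f (n + 1) - f n) := by
  obtain ⟨c, hc⟩ := hf
  refine ⟨fun j => c (j + 1), fun n => ?_⟩
  show f (n + 1) - f n = _
  have key : ∀ j : ℕ, ((n + 1).choose (j + 1) : ℤ) - (n.choose (j + 1) : ℤ) = (n.choose j : ℤ) := by
    intro j
    rw [Nat.choose_succ_succ]
    push_cast
    ring
  rw [hc (n + 1), hc n, ← Finset.sum_sub_distrib]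
  rw [Finset.sum_range_succ' (fun j => c j * (((n+1).choose j : ℤ)) - c j * ((n.choose j : ℤ)))]
  simp only [Nat.choose_zero_right, Nat.cast_one]
  rw [show (c 0 * 1 - c 0 * 1 : ℤ) = 0 by ring, add_zero]
  exact Finset.sum_congr rfl fun j _ => by rw [← mul_sub, key]

theorem polyDeg_shift {B f} (hf : PolyDeg B f) : PolyDeg B (fun n => f (n + 1)) := by
  cases B with
  | zero =>
    have h0 := polyDeg_zero_const hf
    refine polyDeg_congr (f := fun _ => f 0) (fun n => (h0 (n+1)).symm) (polyDeg_const _)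
  | succ B =>
    have h1 := polyDeg_delta hf
    have h2 := polyDeg_add hf h1
    have hm : max (B+1) B = B + 1 := by omega
    rw [hm] at h2
    exact polyDeg_congr (fun n => by show f n + (f (n+1) - f n) = f (n+1); ring) h2

theorem hockey (j : ℕ) : ∀ n : ℕ, (∑ k ∈ Finset.range n, (k.choose j : ℤ)) = (n.choose (j+1) : ℤ) := by
  intro n
  induction n with
  | zero => simp
  | succ n ih =>
    rw [Finset.sum_range_succ, ih, Nat.choose_succ_succ]
    push_cast; ring

theorem polyDeg_psum {B f} (hf : PolyDeg B f) :
    PolyDeg (B + 1) (fun n => ∑ k ∈ Finset.range n, f k) := by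
  obtain ⟨c, hc⟩ := hf
  refine ⟨fun j => if j = 0 then 0 else c (j - 1), fun n => ?_⟩
  show (∑ k ∈ Finset.range n, f k) = _
  have key : (∑ k ∈ Finset.range n, f k)
      = ∑ j ∈ Finset.range (B + 1), c j * (n.choose (j+1) : ℤ) := by
    calc (∑ k ∈ Finset.range n, f k)
        = ∑ k ∈ Finset.range n, ∑ j ∈ Finset.range (B+1), c j * (k.choose j : ℤ) :=
          Finset.sum_congr rfl fun k _ => hc k
      _ = ∑ j ∈ Finset.range (B+1), ∑ k ∈ Finset.range n, c j * (k.choose j : ℤ) :=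
          Finset.sum_comm
      _ = _ := by
          refine Finset.sum_congr rfl fun j _ => ?_
          rw [← Finset.mul_sum, hockey]
  rw [key]
  rw [Finset.sum_range_succ' (fun j => (if j = 0 then 0 else c (j-1)) * (n.choose j : ℤ))]
  simp only [if_neg (Nat.succ_ne_zero _), Nat.add_sub_cancel]
  simp

theorem isPolyE_neg {f} (hf : IsPolyE f) : IsPolyE (fun n => -(f n)) :=
  ⟨hf.choose, polyDeg_neg hf.choose_spec⟩

theorem isPolyE_psum {f} (hf : IsPolyE f) : IsPolyE (fun n => ∑ k ∈ Finset.range n, f k) :=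
  ⟨hf.choose + 1, polyDeg_psum hf.choose_spec⟩

theorem isPolyE_const (k : ℤ) : IsPolyE (fun _ => k) := ⟨0, polyDeg_const k⟩

theorem isPolyE_natCast : IsPolyE (fun n => (n : ℤ)) := ⟨1, polyDeg_id⟩

/-- Key valuation bound: a binomial-polynomial of degree `≤ B` vanishing at `0`
takes values divisible by `p^(N-B)` at `p^N`. -/
theorem polyDeg_val {p B : ℕ} (hp : p.Prime) {f : ℕ → ℤ} (hf : PolyDeg B f) (h0 : f 0 = 0) :
    ∀ N, ((p : ℤ) ^ (N - B)) ∣ f (p ^ N) := by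
  intro N
  rcases le_or_gt N B with hNB | hNB
  · simp [Nat.sub_eq_zero_of_le hNB]
  obtain ⟨c, hc⟩ := hf
  have hc0 : c 0 = 0 := by
    have := hc 0
    rw [h0] at this
    rw [Finset.sum_range_succ' (fun j => c j * (((0:ℕ).choose j : ℤ)))] at this
    simp at this
    -- this : 0 = sum + c 0 with sum of zero terms
    · revert this
      intro this
      have : (0:ℤ) = c 0 := by simpa using this
      omega
  rw [hc (p ^ N)]
  rw [Finset.sum_range_succ' (fun j => c j * (((p^N : ℕ).choose j : ℤ)))]
  rw [hc0]
  simp only [zero_mul, add_zero]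
  apply Finset.dvd_sum
  intro j hj
  simp only [Finset.mem_range] at hj
  apply Dvd.dvd.mul_left
  -- goal: (p:ℤ)^(N-B) ∣ ((p^N).choose (j+1) : ℤ)
  have hjB : j + 1 ≤ B := by omega
  -- key identity : (j+1) * C(p^N, j+1) = p^N * C(p^N - 1, j)
  have hkey : (p ^ N).choose (j+1) * (j+1) = p ^ N * (p ^ N - 1).choose j := by
    have hpos : p ^ N = (p ^ N - 1) + 1 := by
      have : 0 < p ^ N := Nat.pow_pos hp.pos
      omega
    calc (p ^ N).choose (j+1) * (j+1)
        = ((p^N - 1) + 1).choose (j+1) * (j+1) := by rw [← hpos]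
      _ = ((p^N - 1) + 1) * (p^N - 1).choose j := (Nat.add_one_mul_choose_eq (p^N - 1) j).symm
      _ = p ^ N * (p ^ N - 1).choose j := by rw [← hpos]
  -- p-adic valuation of j+1 is at most B
  set e := (j+1).factorization p with he
  have hje : p ^ e ∣ (j + 1) := Nat.ordProj_dvd (j+1) p
  have heB : e ≤ B := by
    have h1 : p ^ e ≤ j + 1 := Nat.le_of_dvd (by omega) hje
    have h2 : j + 1 ≤ 2 ^ B := le_trans hjB (Nat.le_of_lt B.lt_two_pow_self)
    have h3 : 2 ^ e ≤ p ^ e := Nat.pow_le_pow_left hp.two_le e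
    have : 2 ^ e ≤ 2 ^ B := le_trans h3 (le_trans h1 h2)
    exact Nat.pow_le_pow_iff_right (by omega) |>.1 this
  have hcop : Nat.Coprime p ((j+1) / p ^ e) := Nat.coprime_ordCompl hp (by omega)
  -- p^(N - e) ∣ choose
  have hdvd : p ^ (N - e) ∣ (p ^ N).choose (j+1) := by
    have hsplit : j + 1 = p ^ e * ((j+1) / p ^ e) := (Nat.ordProj_mul_ordCompl_eq_self (j+1) p).symm
    have h1 : p ^ N ∣ (p ^ N).choose (j+1) * (j+1) := ⟨_, hkey⟩
    nth_rewrite 2 [hsplit] at h1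
    have h2 : p ^ (N - e) * p ^ e ∣ ((p ^ N).choose (j+1) * ((j+1) / p ^ e)) * p ^ e := by
      calc p ^ (N - e) * p ^ e = p ^ N := by rw [← pow_add]; congr 1; omega
        _ ∣ (p ^ N).choose (j+1) * (p ^ e * ((j+1) / p ^ e)) := h1
        _ = ((p ^ N).choose (j+1) * ((j+1) / p ^ e)) * p ^ e := by ring
    have h3 : p ^ (N - e) ∣ (p ^ N).choose (j+1) * ((j+1) / p ^ e) :=
      (Nat.mul_dvd_mul_iff_right (Nat.pow_pos hp.pos)).1 h2
    exact (Nat.Coprime.pow_left (N - e) hcop).dvd_of_dvd_mul_right h3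
  have : p ^ (N - B) ∣ (p ^ N).choose (j+1) :=
    dvd_trans (Nat.pow_dvd_pow p (by omega)) hdvd
  exact_mod_cast Int.natCast_dvd_natCast.2 this
section Engine

variable {H : Type*} [Group H]

/-- Entries of symbolic representations: (element, exponent function, weight). -/
abbrev En (H : Type*) := H × (ℕ → ℤ) × ℕ

variable (A : ℕ → Subgroup H)

def EOk (w : ℕ) (e : En H) : Prop :=
  e.1 ∈ A e.2.2 ∧ IsPolyE e.2.1 ∧ w ≤ e.2.2 ∧ 1 ≤ e.2.2

def COk (w : ℕ) (L : List (En H)) : Prop := ∀ e ∈ L, EOk A w e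

def Van (L : List (En H)) : Prop := ∀ e ∈ L, e.2.1 0 = 0

def EvL (L : List (En H)) (n : ℕ) : H := (L.map (fun e => e.1 ^ (e.2.1 n))).prod

def cntw (w : ℕ) (L : List (En H)) : ℕ := L.countP (fun e => e.2.2 == w)

theorem EvL_nil (n : ℕ) : EvL ([] : List (En H)) n = 1 := rfl

theorem EvL_cons (e : En H) (L : List (En H)) (n : ℕ) :
    EvL (e :: L) n = e.1 ^ (e.2.1 n) * EvL L n := by
  simp [EvL]

theorem EvL_append (L₁ L₂ : List (En H)) (n : ℕ) :
    EvL (L₁ ++ L₂) n = EvL L₁ n * EvL L₂ n := by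
  simp [EvL]

theorem COk_mono {w w' : ℕ} (h : w' ≤ w) {L : List (En H)} (hL : COk A w L) : COk A w' L :=
  fun e he => ⟨(hL e he).1, (hL e he).2.1, le_trans h (hL e he).2.2.1, (hL e he).2.2.2⟩

theorem COk_append {w : ℕ} {L₁ L₂ : List (En H)} (h₁ : COk A w L₁) (h₂ : COk A w L₂) :
    COk A w (L₁ ++ L₂) := by
  intro e he
  rcases List.mem_append.1 he with h | h
  exacts [h₁ e h, h₂ e h]

theorem Van_append {L₁ L₂ : List (En H)} (h₁ : Van L₁) (h₂ : Van L₂) : Van (L₁ ++ L₂) := by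
  intro e he
  rcases List.mem_append.1 he with h | h
  exacts [h₁ e h, h₂ e h]

theorem cntw_eq_zero_of {w w' : ℕ} (h : w < w') {L : List (En H)} (hL : COk A w' L) :
    cntw w L = 0 := by
  rw [cntw, List.countP_eq_zero]
  intro e he
  have := (hL e he).2.2.1
  simp only [beq_iff_eq]
  omega

theorem COk_up {w : ℕ} {L : List (En H)} (hL : COk A w L) (hc : cntw w L = 0) :
    COk A (w + 1) L := by
  intro e he
  obtain ⟨ha, hb, hcc, hdd⟩ := hL e he
  have hne : ¬ (e.2.2 == w) = true := by
    rw [cntw, List.countP_eq_zero] at hc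
    exact hc e he
  simp only [beq_iff_eq] at hne
  exact ⟨ha, hb, by omega, hdd⟩

def LInv (L : List (En H)) : List (En H) :=
  (L.map (fun e => (e.1, fun n => -(e.2.1 n), e.2.2))).reverse

theorem EvL_LInv (L : List (En H)) (n : ℕ) : EvL (LInv L) n = (EvL L n)⁻¹ := by
  induction L with
  | nil => simp [LInv, EvL]
  | cons e L ih =>
    have hstep : LInv (e :: L) = LInv L ++ [(e.1, fun n => -(e.2.1 n), e.2.2)] := by
      unfold LInv
      rw [List.map_cons, List.reverse_cons]
    rw [hstep, EvL_append, ih, EvL_cons, EvL_nil, mul_one, EvL_cons, mul_inv_rev]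
    simp [zpow_neg]

theorem COk_LInv {w : ℕ} {L : List (En H)} (hL : COk A w L) : COk A w (LInv L) := by
  intro e he
  simp only [LInv, List.mem_reverse, List.mem_map] at he
  obtain ⟨x, hx, rfl⟩ := he
  exact ⟨(hL x hx).1, isPolyE_neg (hL x hx).2.1, (hL x hx).2.2.1, (hL x hx).2.2.2⟩

theorem Van_LInv {L : List (En H)} (hL : Van L) : Van (LInv L) := by
  intro e he
  simp only [LInv, List.mem_reverse, List.mem_map] at he
  obtain ⟨x, hx, rfl⟩ := he
  show -(x.2.1 0) = 0
  rw [hL x hx, neg_zero]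

variable (R : ℕ)

/-- Statement: commutators of monomials have a representation of the summed weight. -/
def E2S (i j : ℕ) : Prop :=
  ∀ d e : H, d ∈ A i → e ∈ A j → ∀ f g : ℕ → ℤ, IsPolyE f → IsPolyE g →
    ∃ L, COk A (i + j) L ∧ ((f 0 = 0 ∨ g 0 = 0) → Van L) ∧
      ∀ n, EvL L n = ⁅d ^ f n, e ^ g n⁆

/-- Statement: conjugation of a representation by a monomial. -/
def E1S (w i : ℕ) : Prop :=
  ∀ u : H, u ∈ A i → ∀ h : ℕ → ℤ, IsPolyE h → ∀ L, COk A w L →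
    ∃ L', COk A w L' ∧ cntw w L' ≤ cntw w L ∧ (Van L → Van L') ∧
      ∀ n, EvL L' n = u ^ h n * EvL L n * u ^ (-(h n))

/-- Statement: product-integrals of representations are representable. -/
def INTS (w : ℕ) : Prop :=
  ∀ L, COk A w L → ∀ c : ℕ → H, c 0 = 1 → (∀ n, c (n + 1) = EvL L n * c n) →
    ∃ L', COk A w L' ∧ Van L' ∧ ∀ n, EvL L' n = c n

variable (hA : ∀ i j : ℕ, i ≤ j → A j ≤ A i)
variable (hbot : ∀ x : H, x ∈ A R → x = 1)
variable (hcomm : ∀ i j : ℕ, 1 ≤ i → 1 ≤ j → ∀ x y : H, x ∈ A i → y ∈ A j → ⁅x, y⁆ ∈ A (i + j))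

section Base

include hA hbot in
theorem EvL_eq_one {w : ℕ} (hw : R ≤ w) {L : List (En H)} (hL : COk A w L) (n : ℕ) :
    EvL L n = 1 := by
  induction L with
  | nil => rfl
  | cons e L ih =>
    rw [EvL_cons]
    have h1 : e.1 = 1 := hbot _ (hA R e.2.2 (le_trans hw (hL e (by simp)).2.2.1) (hL e (by simp)).1)
    rw [h1, one_zpow, one_mul]
    exact ih (fun x hx => hL x (List.mem_cons_of_mem _ hx))

end Base

/-- Conjugation lemma, given commutator expansions at all needed weights. -/
theorem e1_of_e2 {w i : ℕ} (hw : 1 ≤ w) (hi : 1 ≤ i)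
    (hE2 : ∀ v, w ≤ v → 1 ≤ v → E2S A v i) : E1S A w i := by
  intro u hu h hh L hL
  induction L with
  | nil =>
    refine ⟨[], fun e he => absurd he (List.not_mem_nil), le_rfl, fun _ => fun e he => absurd he (List.not_mem_nil), fun n => ?_⟩
    simp [EvL_nil, zpow_neg]
  | cons e₀ L₀ ih =>
    obtain ⟨d, f, v⟩ := e₀
    have hhead := hL _ (List.mem_cons_self)
    obtain ⟨hd, hfp, hwv, hv1⟩ := hhead
    have hwv' : w ≤ v := hwv
    have hv1' : 1 ≤ v := hv1
    obtain ⟨L₀', hL₀'ok, hL₀'cnt, hL₀'van, hL₀'ev⟩ :=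
      ih (fun x hx => hL x (List.mem_cons_of_mem _ hx))
    obtain ⟨M, hMok, hMvan, hMev⟩ :=
      hE2 v hwv hv1 d u hd hu (fun n => -(f n)) h (isPolyE_neg hfp) hh
    refine ⟨(d, f, v) :: (M ++ L₀'), ?_, ?_, ?_, ?_⟩
    · intro x hx
      rcases List.mem_cons.1 hx with rfl | hx
      · exact ⟨hd, hfp, hwv, hv1⟩
      rcases List.mem_append.1 hx with hx | hx
      · exact (COk_mono A (Nat.le_trans hwv (Nat.le_add_right v i)) hMok) x hx
      · exact hL₀'ok x hx
    · show cntw w _ ≤ cntw w _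
      have hM0 : M.countP (fun e : En H => e.2.2 == w) = 0 := cntw_eq_zero_of A (show w < v + i by omega) hMok
      rw [cntw, cntw, List.countP_cons, List.countP_cons, List.countP_append, hM0, zero_add]
      have h := hL₀'cnt
      rw [cntw, cntw] at h
      exact Nat.add_le_add_right h _
    · intro hvan
      have hf0 : f 0 = 0 := hvan _ (List.mem_cons_self)
      have hMv : Van M := hMvan (Or.inl (by simp [hf0]))
      intro x hx
      rcases List.mem_cons.1 hx with rfl | hx
      · exact hf0
      rcases List.mem_append.1 hx with hx | hx
      · exact hMv x hx
      · exact hL₀'van (fun y hy => hvan y (List.mem_cons_of_mem _ hy)) x hx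
    · intro n
      rw [EvL_cons, EvL_append, hMev, hL₀'ev, EvL_cons]
      show d ^ f n * (⁅d ^ (-(f n)), u ^ h n⁆ * (u ^ h n * EvL L₀ n * u ^ (-(h n))))
          = u ^ h n * (d ^ f n * EvL L₀ n) * u ^ (-(h n))
      simp only [commutatorElement_def, zpow_neg]
      group

/-- Product-integral lemma. -/
theorem int_of {w : ℕ} (hw : 1 ≤ w)
    (hINT1 : INTS A (w + 1)) (hE1a : E1S A (w + 1) w) (hE1b : E1S A w w) : INTS A w := by
  have case0 : ∀ L, COk A w L → cntw w L = 0 → ∀ c : ℕ → H, c 0 = 1 →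
      (∀ n, c (n + 1) = EvL L n * c n) →
      ∃ L', COk A w L' ∧ Van L' ∧ ∀ n, EvL L' n = c n := by
    intro L hL hc c h0 hr
    obtain ⟨L', h1, h2, h3⟩ := hINT1 L (COk_up A hL hc) c h0 hr
    exact ⟨L', COk_mono A (Nat.le_succ w) h1, h2, h3⟩
  suffices key : ∀ m L, cntw w L ≤ m → COk A w L → ∀ c : ℕ → H, c 0 = 1 →
      (∀ n, c (n + 1) = EvL L n * c n) →
      ∃ L', COk A w L' ∧ Van L' ∧ ∀ n, EvL L' n = c n by
    intro L hL c h0 hr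
    exact key (cntw w L) L le_rfl hL c h0 hr
  intro m
  induction m with
  | zero =>
    intro L hc hL c h0 hr
    exact case0 L hL (by omega) c h0 hr
  | succ m ih =>
    intro L hcnt hL c h0 hr
    by_cases hc0 : cntw w L = 0
    · exact case0 L hL hc0 c h0 hr
    -- split at the first weight-w entry
    obtain ⟨P, e₀, S, hsplit, hPcnt, hqe⟩ : ∃ P e₀ S, L = P ++ e₀ :: S ∧
        P.countP (fun e : En H => e.2.2 == w) = 0 ∧ (e₀.2.2 == w) = true := by
      clear hr hcnt hL
      induction L with
      | nil => simp [cntw] at hc0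
      | cons a L ihh =>
        by_cases ha : (a.2.2 == w) = true
        · exact ⟨[], a, L, rfl, by simp, ha⟩
        · have : cntw w L ≠ 0 := by
            rw [cntw, List.countP_cons] at hc0
            rw [cntw]
            simp only [ha, if_false] at hc0
            simpa using hc0
          obtain ⟨P, e₀, S, h1, h2, h3⟩ := ihh this
          exact ⟨a :: P, e₀, S, by rw [h1, List.cons_append], by rw [List.countP_cons]; simp [ha, h2], h3⟩
    obtain ⟨d, f, v⟩ := e₀
    have hv : v = w := by simpa using hqe
    subst hv
    rw [hsplit] at hL
    have hhead := hL _ (List.mem_append.2 (Or.inr (List.mem_cons_self)))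
    obtain ⟨hd, hfp, -, hv1⟩ := hhead
    have hd' : d ∈ A v := hd
    have hP : COk A v P := fun x hx => hL x (List.mem_append.2 (Or.inl hx))
    have hS : COk A v S := fun x hx => hL x (List.mem_append.2 (Or.inr (List.mem_cons_of_mem _ hx)))
    have hP1 : COk A (v + 1) P := COk_up A hP hPcnt
    -- conjugate the prefix
    obtain ⟨P', hP'ok, -, -, hP'ev⟩ :=
      hE1a d hd (fun n => -(f n)) (isPolyE_neg hfp) P hP1
    -- partial sums
    set F : ℕ → ℤ := fun n => ∑ k ∈ Finset.range n, f k with hF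
    have hFp : IsPolyE F := isPolyE_psum hfp
    have hF0 : F 0 = 0 := by simp [hF]
    have hFrec : ∀ n, F (n + 1) = F n + f n := fun n => Finset.sum_range_succ f n
    set T : List (En H) := P' ++ S with hT
    have hTok : COk A v T := COk_append A (COk_mono A (Nat.le_succ v) hP'ok) hS
    obtain ⟨M, hMok, hMcnt, -, hMev⟩ := hE1b d hd (fun n => -(F n)) (isPolyE_neg hFp) T hTok
    -- count bookkeeping
    have hcM : cntw v M ≤ m := by
      have h1 : cntw v T = cntw v S := by
        rw [hT, cntw, List.countP_append, cntw]
        have : P'.countP (fun e : En H => e.2.2 == v) = 0 := cntw_eq_zero_of A (Nat.lt_succ_self v) hP'ok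
        omega
      have h2 : cntw v L = cntw v P + (1 + cntw v S) := by
        rw [hsplit, cntw, List.countP_append, List.countP_cons]
        simp only [cntw]
        simp [hqe]
        omega
      have hPc : cntw v P = 0 := hPcnt
      omega
    -- the residual function
    set r : ℕ → H := fun n => d ^ (-(F n)) * c n with hr'
    have hr0 : r 0 = 1 := by
      simp [hr', hF0, h0]
    have hrrec : ∀ n, r (n + 1) = EvL M n * r n := by
      intro n
      rw [hMev n]
      show d ^ (-(F (n+1))) * c (n+1) = d ^ (-(F n)) * EvL T n * d ^ (-(-(F n))) * (d ^ (-(F n)) * c n)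
      rw [hr n, hsplit, EvL_append, EvL_cons, hT, EvL_append, hP'ev n, hFrec n]
      show d ^ (-(F n + f n)) * (EvL P n * (d ^ f n * EvL S n) * c n) = _
      simp only [zpow_neg, zpow_add, neg_neg]
      group
    obtain ⟨Mr, hMrok, hMrvan, hMrev⟩ := ih M hcM hMok r hr0 hrrec
    refine ⟨(d, F, v) :: Mr, ?_, ?_, ?_⟩
    · intro x hx
      rcases List.mem_cons.1 hx with rfl | hx
      · exact ⟨hd, hFp, le_rfl, hv1⟩
      · exact hMrok x hx
    · intro x hx
      rcases List.mem_cons.1 hx with rfl | hx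
      · exact hF0
      · exact hMrvan x hx
    · intro n
      rw [EvL_cons, hMrev n, hr']
      show d ^ F n * (d ^ (-(F n)) * c n) = c n
      simp [zpow_neg]

end Engine
section Engine2

variable {H : Type*} [Group H] (A : ℕ → Subgroup H) (R : ℕ)
variable (hA : ∀ i j : ℕ, i ≤ j → A j ≤ A i)
variable (hbot : ∀ x : H, x ∈ A R → x = 1)
variable (hcomm : ∀ i j : ℕ, 1 ≤ i → 1 ≤ j → ∀ x y : H, x ∈ A i → y ∈ A j → ⁅x, y⁆ ∈ A (i + j))

theorem comm_expand (u δ v ε : H) :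
    ⁅u * δ, v * ε⁆ = (u * ⁅δ, v * ε⁆ * u⁻¹) * (⁅u, v⁆ * (v * ⁅u, ε⁆ * v⁻¹)) := by
  simp only [commutatorElement_def]
  group

include hcomm in
theorem e2const {i j : ℕ} (hi : 1 ≤ i) (hj : 1 ≤ j) (d e : H) (hd : d ∈ A i) (he : e ∈ A j)
    (f g : ℕ → ℤ) :
    ∃ KL, COk A (i + j) KL ∧ ((f 0 = 0 ∨ g 0 = 0) → Van KL) ∧
      ∀ n, EvL KL n = ⁅d ^ f 0, e ^ g 0⁆ := by
  by_cases hv : f 0 = 0 ∨ g 0 = 0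
  · refine ⟨[], fun x hx => absurd hx (List.not_mem_nil),
      fun _ => fun x hx => absurd hx (List.not_mem_nil), fun n => ?_⟩
    rcases hv with hv | hv <;> rw [hv] <;>
      simp [EvL_nil, commutatorElement_one_left, commutatorElement_one_right]
  · refine ⟨[(⁅d ^ f 0, e ^ g 0⁆, fun _ => (1 : ℤ), i + j)], ?_, fun hv' => absurd hv' hv,
      fun n => ?_⟩
    · intro x hx
      rw [List.mem_singleton] at hx
      subst hx
      exact ⟨hcomm i j hi hj _ _ (Subgroup.zpow_mem _ hd _) (Subgroup.zpow_mem _ he _),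
        isPolyE_const 1, le_rfl, show 1 ≤ i + j by omega⟩
    · rw [EvL_cons, EvL_nil, mul_one, zpow_one]

include hcomm in
theorem e2glue {i j : ℕ} (hi : 1 ≤ i) (hj : 1 ≤ j)
    (hINT : INTS A (i + j))
    {d e : H} (hd : d ∈ A i) (he : e ∈ A j)
    (f g : ℕ → ℤ)
    {LL RR : List (En H)} (hLLok : COk A (i + j) LL) (hRRok : COk A (i + j) RR)
    (hevL : ∀ n, EvL LL n = d ^ f n * ⁅d ^ (f (n + 1) - f n), e ^ g (n + 1)⁆ * d ^ (-(f n)))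
    (hevR : ∀ n, EvL RR n = (e ^ g n * ⁅d ^ f n, e ^ (g (n + 1) - g n)⁆ * e ^ (-(g n)))⁻¹) :
    ∃ L, COk A (i + j) L ∧ ((f 0 = 0 ∨ g 0 = 0) → Van L) ∧
      ∀ n, EvL L n = ⁅d ^ f n, e ^ g n⁆ := by
  obtain ⟨KL, hKLok, hKLvan, hKLev⟩ := e2const A hcomm hi hj d e hd he f g
  set cL : ℕ → H := fun n => Nat.rec 1 (fun k ck => EvL LL k * ck) n with hcL
  obtain ⟨Lc, hLcok, hLcvan, hLcev⟩ := hINT LL hLLok cL rfl (fun n => rfl)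
  set cR : ℕ → H := fun n => Nat.rec 1 (fun k ck => EvL RR k * ck) n with hcR
  obtain ⟨Rc, hRcok, hRcvan, hRcev⟩ := hINT RR hRRok cR rfl (fun n => rfl)
  have hkey : ∀ n, cL n * (⁅d ^ f 0, e ^ g 0⁆ * (cR n)⁻¹) = ⁅d ^ f n, e ^ g n⁆ := by
    intro n
    induction n with
    | zero => simp [hcL, hcR]
    | succ n ih =>
      have e1 : d ^ f (n + 1) = d ^ f n * d ^ (f (n + 1) - f n) := by
        rw [← zpow_add]; congr 1; ring
      have e2 : e ^ g (n + 1) = e ^ g n * e ^ (g (n + 1) - g n) := by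
        rw [← zpow_add]; congr 1; ring
      have hL' : cL (n + 1) = EvL LL n * cL n := rfl
      have hR' : cR (n + 1) = EvL RR n * cR n := rfl
      rw [hL', hR', mul_inv_rev]
      calc EvL LL n * cL n * (⁅d ^ f 0, e ^ g 0⁆ * ((cR n)⁻¹ * (EvL RR n)⁻¹))
          = EvL LL n * (cL n * (⁅d ^ f 0, e ^ g 0⁆ * (cR n)⁻¹)) * (EvL RR n)⁻¹ := by group
        _ = EvL LL n * ⁅d ^ f n, e ^ g n⁆ * (EvL RR n)⁻¹ := by rw [ih]
        _ = (d ^ f n * ⁅d ^ (f (n + 1) - f n), e ^ g (n + 1)⁆ * d ^ (-(f n))) *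
              ⁅d ^ f n, e ^ g n⁆ *
              (e ^ g n * ⁅d ^ f n, e ^ (g (n + 1) - g n)⁆ * e ^ (-(g n))) := by
            rw [hevL, hevR, inv_inv]
        _ = ⁅d ^ f (n + 1), e ^ g (n + 1)⁆ := by
            rw [e1, e2, comm_expand (d ^ f n) (d ^ (f (n+1) - f n)) (e ^ g n) (e ^ (g (n+1) - g n))]
            simp only [commutatorElement_def, zpow_neg]
            group
  refine ⟨Lc ++ (KL ++ LInv Rc), ?_, ?_, fun n => ?_⟩
  · exact COk_append A hLcok (COk_append A hKLok (COk_LInv A hRcok))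
  · intro hv
    exact Van_append hLcvan (Van_append (hKLvan hv) (Van_LInv hRcvan))
  · rw [EvL_append, EvL_append, hLcev, hKLev, EvL_LInv, hRcev]
    exact hkey n

include hcomm in
theorem e2core (M : ℕ) : ∀ {i j : ℕ}, 1 ≤ i → 1 ≤ j →
    INTS A (i + j) → E1S A (i + j) i → E1S A (i + j) j →
    ∀ {d e : H}, d ∈ A i → e ∈ A j → ∀ {f g : ℕ → ℤ} {Bf Bg : ℕ},
    PolyDeg Bf f → PolyDeg Bg g → Bf + Bg ≤ M →
    ∃ L, COk A (i + j) L ∧ ((f 0 = 0 ∨ g 0 = 0) → Van L) ∧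
      ∀ n, EvL L n = ⁅d ^ f n, e ^ g n⁆ := by
  induction M with
  | zero =>
    intro i j hi hj hINT hE1a hE1b d e hd he f g Bf Bg hf hg hM
    have hBf : Bf = 0 := by omega
    have hBg : Bg = 0 := by omega
    subst hBf; subst hBg
    have hcf := polyDeg_zero_const hf
    have hcg := polyDeg_zero_const hg
    obtain ⟨KL, h1, h2, h3⟩ := e2const A hcomm hi hj d e hd he f g
    exact ⟨KL, h1, h2, fun n => by rw [h3 n, hcf n, hcg n]⟩
  | succ M ih =>
    intro i j hi hj hINT hE1a hE1b d e hd he f g Bf Bg hf hg hM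
    -- left increment representation
    obtain ⟨LL, hLLok, hevL⟩ : ∃ LL, COk A (i + j) LL ∧
        ∀ n, EvL LL n = d ^ f n * ⁅d ^ (f (n + 1) - f n), e ^ g (n + 1)⁆ * d ^ (-(f n)) := by
      rcases Bf with _ | Bf'
      · refine ⟨[], fun x hx => absurd hx (List.not_mem_nil), fun n => ?_⟩
        have hδ : f (n + 1) - f n = 0 := by
          rw [polyDeg_zero_const hf (n + 1), polyDeg_zero_const hf n]; ring
        rw [EvL_nil, hδ]
        simp [commutatorElement_one_left, zpow_neg]
      · obtain ⟨L₁, hL₁ok, -, hL₁ev⟩ := ih hi hj hINT hE1a hE1b hd he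
          (polyDeg_delta hf) (polyDeg_shift hg) (by omega)
        obtain ⟨LL, hLLok, -, -, hLLev⟩ := hE1a d hd f ⟨_, hf⟩ L₁ hL₁ok
        exact ⟨LL, hLLok, fun n => by rw [hLLev n, hL₁ev n]⟩
    -- right increment representation
    obtain ⟨RR, hRRok, hevR⟩ : ∃ RR, COk A (i + j) RR ∧
        ∀ n, EvL RR n = (e ^ g n * ⁅d ^ f n, e ^ (g (n + 1) - g n)⁆ * e ^ (-(g n)))⁻¹ := by
      rcases Bg with _ | Bg'
      · refine ⟨[], fun x hx => absurd hx (List.not_mem_nil), fun n => ?_⟩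
        have hδ : g (n + 1) - g n = 0 := by
          rw [polyDeg_zero_const hg (n + 1), polyDeg_zero_const hg n]; ring
        rw [EvL_nil, hδ]
        simp [commutatorElement_one_right, zpow_neg]
      · obtain ⟨L₂, hL₂ok, -, hL₂ev⟩ := ih hi hj hINT hE1a hE1b hd he
          hf (polyDeg_delta hg) (by omega)
        obtain ⟨RR, hRRok, -, -, hRRev⟩ := hE1b e he g ⟨_, hg⟩ (LInv L₂) (COk_LInv A hL₂ok)
        refine ⟨RR, hRRok, fun n => ?_⟩
        rw [hRRev n, EvL_LInv, hL₂ev n]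
        simp only [zpow_neg, mul_inv_rev, inv_inv]
        group
    exact e2glue A hcomm hi hj hINT hd he f g hLLok hRRok hevL hevR

/-- The bundled statement pack. -/
def Pack (t : ℕ) : Prop :=
  (∀ w, 1 ≤ w → t ≤ w → INTS A w) ∧
  (∀ i j, 1 ≤ i → 1 ≤ j → t ≤ i + j → E2S A i j) ∧
  (∀ w i, 1 ≤ w → 1 ≤ i → t ≤ w + i → E1S A w i)

include hA hbot hcomm in
theorem pack_base (t : ℕ) (ht : R ≤ t) : Pack A t := by
  have hE2 : ∀ i j, 1 ≤ i → 1 ≤ j → t ≤ i + j → E2S A i j := by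
    intro i j hi hj hij d e hd he f g hf hg
    refine ⟨[], fun x hx => absurd hx (List.not_mem_nil),
      fun _ => fun x hx => absurd hx (List.not_mem_nil), fun n => ?_⟩
    rw [EvL_nil]
    refine (hbot _ (hA R (i + j) (by omega) ?_)).symm
    exact hcomm i j hi hj _ _ (Subgroup.zpow_mem _ hd _) (Subgroup.zpow_mem _ he _)
  refine ⟨?_, hE2, ?_⟩
  · intro w h1 htw L hL c h0 hrec
    refine ⟨[], fun x hx => absurd hx (List.not_mem_nil),
      fun x hx => absurd hx (List.not_mem_nil), fun n => ?_⟩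
    rw [EvL_nil]
    induction n with
    | zero => rw [h0]
    | succ n ihn => rw [hrec n, EvL_eq_one A R hA hbot (le_trans ht htw) hL, one_mul, ihn]
  · intro w i h1 hi hwi
    exact e1_of_e2 A h1 hi (fun v hv hv1 => hE2 v i hv1 hi (by omega))

include hA hbot hcomm in
theorem pack_step (t : ℕ) (ht1 : 1 ≤ t) (IH : Pack A (t + 1)) : Pack A t := by
  obtain ⟨ihINT, ihE2, ihE1⟩ := IH
  have hINT : ∀ w, 1 ≤ w → t ≤ w → INTS A w := by
    intro w h1 htw
    rcases eq_or_lt_of_le htw with heq | hlt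
    · subst heq
      exact int_of A h1 (ihINT (t + 1) (by omega) (by omega))
        (ihE1 (t + 1) t (by omega) h1 (by omega))
        (ihE1 t t h1 h1 (by omega))
    · exact ihINT w h1 (by omega)
  have hE2 : ∀ i j, 1 ≤ i → 1 ≤ j → t ≤ i + j → E2S A i j := by
    intro i j hi hj hij
    rcases eq_or_lt_of_le hij with heq | hlt
    · intro d e hd he f g hf hg
      obtain ⟨Bf, hf'⟩ := hf
      obtain ⟨Bg, hg'⟩ := hg
      exact e2core A hcomm (Bf + Bg) hi hj
        (hINT (i + j) (by omega) (by omega))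
        (ihE1 (i + j) i (by omega) hi (by omega))
        (ihE1 (i + j) j (by omega) hj (by omega))
        hd he hf' hg' le_rfl
    · exact ihE2 i j hi hj (by omega)
  refine ⟨hINT, hE2, ?_⟩
  · intro w i h1 hi hwi
    exact e1_of_e2 A h1 hi (fun v hv hv1 => hE2 v i hv1 hi (by omega))

include hA hbot hcomm in
theorem pack_all : ∀ k t, 1 ≤ t → R ≤ t + k → Pack A t := by
  intro k
  induction k with
  | zero =>
    intro t ht1 htR
    exact pack_base A R hA hbot hcomm t (by omega)
  | succ k ihk =>
    intro t ht1 htR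
    by_cases hR : R ≤ t
    · exact pack_base A R hA hbot hcomm t hR
    · exact pack_step A R hA hbot hcomm t ht1 (ihk (t + 1) (by omega) (by omega))

end Engine2
section EngineMain

variable {H : Type*} [Group H] (A : ℕ → Subgroup H) (R : ℕ)
variable (hA : ∀ i j : ℕ, i ≤ j → A j ≤ A i)
variable (hbot : ∀ x : H, x ∈ A R → x = 1)
variable (hcomm : ∀ i j : ℕ, 1 ≤ i → 1 ≤ j → ∀ x y : H, x ∈ A i → y ∈ A j → ⁅x, y⁆ ∈ A (i + j))

include hA hbot hcomm in
/-- Hall–Petrescu: `aⁿbⁿ = (ab)ⁿ · (correction)` with a uniform weight-2 representation. -/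
theorem engineMain (a b : H) (ha : a ∈ A 1) (hb : b ∈ A 1) :
    ∃ L, COk A 2 L ∧ Van L ∧ ∀ n : ℕ, a ^ n * b ^ n = (a * b) ^ n * EvL L n := by
  obtain ⟨hINT, hE2, hE1⟩ := pack_all A R hA hbot hcomm R 2 (by omega) (by omega)
  -- step 1: the commutator function w(n) = ⁅a⁻¹, (ab)^(-n)⁆
  obtain ⟨Lw, hLwok, hLwvan, hLwev⟩ := hE2 1 1 le_rfl le_rfl (by omega)
    a⁻¹ (a * b) (inv_mem ha) (mul_mem ha hb)
    (fun _ => (1 : ℤ)) (fun n => -(n : ℤ)) (isPolyE_const 1) (isPolyE_neg isPolyE_natCast)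
  have hLwvan' : Van Lw := hLwvan (Or.inr (by simp))
  -- step 2: conjugate by bⁿ
  obtain ⟨Lt, hLtok, -, hLtvan, hLtev⟩ := hE1 2 1 (by omega) le_rfl (by omega)
    b hb (fun n => (n : ℤ)) isPolyE_natCast Lw hLwok
  have hLtvan' : Van Lt := hLtvan hLwvan'
  -- step 3: product-integral
  set ct : ℕ → H := fun n => Nat.rec 1 (fun k ck => EvL Lt k * ck) n with hct0
  obtain ⟨Lc, hLcok, hLcvan, hLcev⟩ := hINT 2 (by omega) (by omega) Lt hLtok ct rfl (fun n => rfl)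
  -- the base HP function
  set Fc : ℕ → H := fun n => (a * b) ^ (-(n : ℤ)) * a ^ (n : ℤ) * b ^ (n : ℤ) with hFcdef
  have hsplit : ∀ n : ℕ, (a * b) ^ (-((n : ℤ) + 1)) = b⁻¹ * (a⁻¹ * (a * b) ^ (-(n : ℤ))) := by
    intro n
    rw [show (-((n : ℤ) + 1)) = (-1) + (-(n : ℤ)) by ring, zpow_add, zpow_neg_one, mul_inv_rev,
      mul_assoc]
  have hFrec : ∀ n : ℕ, Fc (n + 1)
      = b⁻¹ * ((a⁻¹ * (a * b) ^ (-(n : ℤ)) * a * (a * b) ^ ((n : ℤ))) * Fc n) * b := by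
    intro n
    show (a * b) ^ (-((n:ℕ) + 1 : ℤ)) * a ^ ((n:ℕ) + 1 : ℤ) * b ^ ((n:ℕ) + 1 : ℤ) = _
    push_cast
    rw [hsplit n]
    show _ = b⁻¹ * (_ * ((a * b) ^ (-(n : ℤ)) * a ^ (n : ℤ) * b ^ (n : ℤ))) * b
    group
  -- closed form for ct
  have hct : ∀ n : ℕ, ct n = b ^ (n : ℤ) * Fc n * b ^ (-(n : ℤ)) := by
    intro n
    induction n with
    | zero => rw [show ct 0 = 1 from rfl]; simp [hFcdef]
    | succ n ih =>
      have h1 : ct (n + 1) = EvL Lt n * ct n := rfl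
      rw [h1, ih, hLtev n, hLwev n, hFrec n]
      simp only [commutatorElement_def, zpow_one, zpow_neg, inv_inv]
      push_cast
      group
  -- step 4: undo the conjugation
  obtain ⟨Lf, hLfok, -, hLfvan, hLfev⟩ := hE1 2 1 (by omega) le_rfl (by omega)
    b hb (fun n => -(n : ℤ)) (isPolyE_neg isPolyE_natCast) Lc hLcok
  refine ⟨Lf, hLfok, hLfvan hLcvan, fun n => ?_⟩
  have h2 : EvL Lf n = Fc n := by
    rw [hLfev n, hLcev n, hct n]
    simp only [zpow_neg, neg_neg]
    group
  rw [h2, ← zpow_natCast a n, ← zpow_natCast b n, ← zpow_natCast (a * b) n, hFcdef]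
  show a ^ (n : ℤ) * b ^ (n : ℤ) = (a * b) ^ (n : ℤ) * ((a * b) ^ (-(n : ℤ)) * a ^ (n : ℤ) * b ^ (n : ℤ))
  group

end EngineMain
section LCS

open Subgroup

theorem lcs_succ_comm_s4 {G : Type*} [Group G] (n : ℕ) :
    Subgroup.lowerCentralSeries (⊤ : Subgroup G) (n + 1) = ⁅Subgroup.lowerCentralSeries (⊤ : Subgroup G) n, ⊤⁆ := rfl

theorem lcs_commutator_le (G : Type*) [Group G] (v u : ℕ) :
    ⁅Subgroup.lowerCentralSeries (⊤ : Subgroup G) u, Subgroup.lowerCentralSeries (⊤ : Subgroup G) v⁆ ≤ Subgroup.lowerCentralSeries (⊤ : Subgroup G) (u + v + 1) := by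
  induction v generalizing u with
  | zero =>
    rw [Subgroup.lowerCentralSeries_zero]
    exact le_of_eq (lcs_succ_comm_s4 u).symm
  | succ v ih =>
    set N := Subgroup.lowerCentralSeries (⊤ : Subgroup G) (u + (v + 1) + 1) with hN
    have hN2 : N = Subgroup.lowerCentralSeries (⊤ : Subgroup G) ((u + 1) + v + 1) := by rw [hN]; ring_nf
    rw [lcs_succ_comm_s4 v, commutator_comm]
    have hker : N = MonoidHom.ker (QuotientGroup.mk' N) := (QuotientGroup.ker_mk' N).symm
    rw [hker, ← Subgroup.map_eq_bot_iff, Subgroup.map_commutator, Subgroup.map_commutator]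
    apply Subgroup.commutator_commutator_eq_bot_of_rotate
    · -- ⁅⁅map ⊤, map (lcs u)⁆, map (lcs v)⁆ = ⊥
      rw [← Subgroup.map_commutator, ← Subgroup.map_commutator,
        Subgroup.map_eq_bot_iff, QuotientGroup.ker_mk']
      calc ⁅⁅(⊤ : Subgroup G), Subgroup.lowerCentralSeries (⊤ : Subgroup G) u⁆, Subgroup.lowerCentralSeries (⊤ : Subgroup G) v⁆
          = ⁅⁅Subgroup.lowerCentralSeries (⊤ : Subgroup G) u, (⊤ : Subgroup G)⁆, Subgroup.lowerCentralSeries (⊤ : Subgroup G) v⁆ := by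
            rw [commutator_comm (⊤ : Subgroup G)]
        _ = ⁅Subgroup.lowerCentralSeries (⊤ : Subgroup G) (u + 1), Subgroup.lowerCentralSeries (⊤ : Subgroup G) v⁆ := by
            rw [← lcs_succ_comm_s4]
        _ ≤ Subgroup.lowerCentralSeries (⊤ : Subgroup G) ((u + 1) + v + 1) := ih (u + 1)
        _ = N := hN2.symm
    · -- ⁅⁅map (lcs u), map (lcs v)⁆, map ⊤⁆ = ⊥
      rw [← Subgroup.map_commutator, ← Subgroup.map_commutator,
        Subgroup.map_eq_bot_iff, QuotientGroup.ker_mk']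
      calc ⁅⁅Subgroup.lowerCentralSeries (⊤ : Subgroup G) u, Subgroup.lowerCentralSeries (⊤ : Subgroup G) v⁆, (⊤ : Subgroup G)⁆
          ≤ ⁅Subgroup.lowerCentralSeries (⊤ : Subgroup G) (u + v + 1), (⊤ : Subgroup G)⁆ :=
            Subgroup.commutator_mono (ih u) le_rfl
        _ = Subgroup.lowerCentralSeries (⊤ : Subgroup G) (u + v + 2) := (lcs_succ_comm_s4 (u + v + 1)).symm
        _ = N := by rw [hN]; ring_nf
  
theorem lcs_map_surjective {G G' : Type*} [Group G] [Group G'] (f : G →* G')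
    (hf : Function.Surjective f) (n : ℕ) :
    Subgroup.map f (Subgroup.lowerCentralSeries (⊤ : Subgroup G) n) = Subgroup.lowerCentralSeries (⊤ : Subgroup G') n := by
  induction n with
  | zero =>
    rw [Subgroup.lowerCentralSeries_zero, Subgroup.lowerCentralSeries_zero]
    exact Subgroup.map_top_of_surjective f hf
  | succ n ih =>
    rw [lcs_succ_comm_s4, lcs_succ_comm_s4, Subgroup.map_commutator, ih,
      Subgroup.map_top_of_surjective f hf]

/-- A group generated by two commuting elements is abelian on the nose. -/
theorem commute_all_of_gen {G : Type*} [Group G] {x y : G}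
    (hgen : Subgroup.closure ({x, y} : Set G) = ⊤) (hxy : Commute x y) :
    ∀ a b : G, Commute a b := by
  have step1 : ∀ a : G, Commute x a ∧ Commute y a := by
    intro a
    have ha : a ∈ Subgroup.closure ({x, y} : Set G) := hgen ▸ Subgroup.mem_top a
    induction ha using Subgroup.closure_induction with
    | mem z hz =>
      rcases hz with rfl | hz
      · exact ⟨Commute.refl z, hxy.symm⟩
      · rw [Set.mem_singleton_iff] at hz
        subst hz
        exact ⟨hxy, Commute.refl z⟩
    | one => exact ⟨Commute.one_right x, Commute.one_right y⟩
    | mul a b _ _ iha ihb => exact ⟨iha.1.mul_right ihb.1, iha.2.mul_right ihb.2⟩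
    | inv a _ iha => exact ⟨iha.1.inv_right, iha.2.inv_right⟩
  intro a b
  have ha : a ∈ Subgroup.closure ({x, y} : Set G) := hgen ▸ Subgroup.mem_top a
  induction ha using Subgroup.closure_induction with
  | mem z hz =>
    rcases hz with rfl | hz
    · exact (step1 b).1
    · rw [Set.mem_singleton_iff] at hz
      subst hz
      exact (step1 b).2
  | one => exact Commute.one_left b
  | mul a c _ _ iha ihc => exact iha.mul_left ihc
  | inv a _ iha => exact iha.inv_left

/-- γ₂ of a 2-generated group is the normal closure of the single commutator. -/
theorem lcs_one_le_ncl {G : Type*} [Group G] {x y : G}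
    (hgen : Subgroup.closure ({x, y} : Set G) = ⊤) :
    Subgroup.lowerCentralSeries (⊤ : Subgroup G) 1 ≤ Subgroup.normalClosure {⁅x, y⁆} := by
  set N := Subgroup.normalClosure ({⁅x, y⁆} : Set G) with hNdef
  haveI : N.Normal := Subgroup.normalClosure_normal
  rw [Subgroup.top_lowerCentralSeries_one]
  show commutator G ≤ N
  rw [commutator_def, Subgroup.commutator_le]
  intro g1 _ g2 _
  rw [← QuotientGroup.eq_one_iff]
  have hc1 : ((⁅x, y⁆ : G) : G ⧸ N) = 1 :=
    (QuotientGroup.eq_one_iff _).2 (Subgroup.subset_normalClosure (Set.mem_singleton _))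
  have hcomm : Commute ((x : G ⧸ N)) ((y : G ⧸ N)) := by
    rw [← commutatorElement_eq_one_iff_commute]
    have heq : (⁅(x : G ⧸ N), (y : G ⧸ N)⁆) = ((⁅x, y⁆ : G) : G ⧸ N) := by
      simp [commutatorElement_def]
    rw [heq, hc1]
  have hgenQ : Subgroup.closure ({(x : G ⧸ N), (y : G ⧸ N)} : Set (G ⧸ N)) = ⊤ := by
    have : Subgroup.map (QuotientGroup.mk' N) (Subgroup.closure ({x, y} : Set G))
        = Subgroup.closure ((QuotientGroup.mk' N) '' ({x, y} : Set G)) :=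
      MonoidHom.map_closure _ _
    rw [hgen, Subgroup.map_top_of_surjective _ (QuotientGroup.mk'_surjective N)] at this
    have himg : (QuotientGroup.mk' N) '' ({x, y} : Set G)
        = ({(x : G ⧸ N), (y : G ⧸ N)} : Set (G ⧸ N)) := by
      simp [Set.image_insert_eq]
    rw [himg] at this
    exact this.symm
  have hcc := commute_all_of_gen hgenQ hcomm ((g1 : G ⧸ N)) ((g2 : G ⧸ N))
  rw [← commutatorElement_eq_one_iff_commute] at hcc
  show ((⁅g1, g2⁆ : G) : G ⧸ N) = 1
  have heq2 : ((⁅g1, g2⁆ : G) : G ⧸ N) = ⁅(g1 : G ⧸ N), (g2 : G ⧸ N)⁆ := by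
    simp [commutatorElement_def]
  rw [heq2]
  exact hcc

end LCS
section PowN

variable {G : Type*} [Group G]

/-- The subgroup generated by `p^r`-th powers of elements of `D`. -/
def PowN (p r : ℕ) (D : Subgroup G) : Subgroup G :=
  Subgroup.closure {x : G | ∃ d ∈ D, d ^ (p ^ r) = x}

theorem pow_mem_powN (p r : ℕ) {D : Subgroup G} {d : G} (hd : d ∈ D) :
    d ^ (p ^ r) ∈ PowN p r D :=
  Subgroup.subset_closure ⟨d, hd, rfl⟩

theorem powN_mono (p r : ℕ) {D D' : Subgroup G} (h : D ≤ D') : PowN p r D ≤ PowN p r D' :=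
  Subgroup.closure_mono (fun x ⟨d, hd, hx⟩ => ⟨d, h hd, hx⟩)

theorem powN_exp_mono (p : ℕ) {r r' : ℕ} (h : r' ≤ r) (D : Subgroup G) :
    PowN p r D ≤ PowN p r' D := by
  rw [PowN, Subgroup.closure_le]
  rintro x ⟨d, hd, rfl⟩
  have hexp : p ^ r = p ^ (r - r') * p ^ r' := by
    rw [← pow_add]
    congr 1
    omega
  rw [hexp, pow_mul]
  exact pow_mem_powN p r' (pow_mem hd _)

theorem le_powN_zero (p : ℕ) (D : Subgroup G) : D ≤ PowN p 0 D := by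
  intro d hd
  have : d = d ^ (p ^ 0) := by simp
  rw [this]
  exact pow_mem_powN p 0 hd

theorem powN_normal (p r : ℕ) (D : Subgroup G) [hD : D.Normal] : (PowN p r D).Normal := by
  constructor
  intro x hx g
  have : ∀ (y : G), y ∈ PowN p r D → g * y * g⁻¹ ∈ PowN p r D := by
    intro y hy
    induction hy using Subgroup.closure_induction with
    | mem z hz =>
      obtain ⟨d, hd, rfl⟩ := hz
      have : g * d ^ (p ^ r) * g⁻¹ = (g * d * g⁻¹) ^ (p ^ r) := by
        rw [conj_pow]
      rw [this]
      exact pow_mem_powN p r (hD.conj_mem d hd g)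
    | one => simpa using one_mem _
    | mul u v _ _ ihu ihv =>
      have : g * (u * v) * g⁻¹ = (g * u * g⁻¹) * (g * v * g⁻¹) := by group
      rw [this]
      exact mul_mem ihu ihv
    | inv u _ ihu =>
      have : g * u⁻¹ * g⁻¹ = (g * u * g⁻¹)⁻¹ := by group
      rw [this]
      exact inv_mem ihu
  exact this x hx

theorem powN_bot (p r : ℕ) : PowN p r (⊥ : Subgroup G) = ⊥ := by
  rw [eq_bot_iff, PowN, Subgroup.closure_le]
  rintro x ⟨d, hd, rfl⟩
  rw [Subgroup.mem_bot] at hd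
  simp [hd]

end PowN

section Universal

/-- The universal (free class-≤c nilpotent) group on two generators. -/
abbrev FH (c : ℕ) := FreeGroup (Fin 2) ⧸ Subgroup.lowerCentralSeries (⊤ : Subgroup (FreeGroup (Fin 2))) c

def xh (c : ℕ) : FH c := QuotientGroup.mk (FreeGroup.of 0)
def yh (c : ℕ) : FH c := QuotientGroup.mk (FreeGroup.of 1)

theorem FH_lcs_bot (c : ℕ) : Subgroup.lowerCentralSeries (⊤ : Subgroup (FH c)) c = ⊥ := by
  have h := lcs_map_surjective (QuotientGroup.mk' (Subgroup.lowerCentralSeries (⊤ : Subgroup (FreeGroup (Fin 2))) c))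
    (QuotientGroup.mk'_surjective _) c
  rw [← h, Subgroup.map_eq_bot_iff, QuotientGroup.ker_mk']

theorem FH_gen (c : ℕ) : Subgroup.closure ({xh c, yh c} : Set (FH c)) = ⊤ := by
  have h1 : Subgroup.closure (Set.range (FreeGroup.of : Fin 2 → FreeGroup (Fin 2))) = ⊤ := by
    exact FreeGroup.closure_range_of _
  have h2 : Subgroup.map (QuotientGroup.mk' (Subgroup.lowerCentralSeries (⊤ : Subgroup (FreeGroup (Fin 2))) c))
      (Subgroup.closure (Set.range (FreeGroup.of : Fin 2 → FreeGroup (Fin 2))))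
      = Subgroup.closure ((QuotientGroup.mk' (Subgroup.lowerCentralSeries (⊤ : Subgroup (FreeGroup (Fin 2))) c)) ''
        (Set.range (FreeGroup.of : Fin 2 → FreeGroup (Fin 2)))) := MonoidHom.map_closure _ _
  rw [h1, Subgroup.map_top_of_surjective _ (QuotientGroup.mk'_surjective _)] at h2
  have h3 : (QuotientGroup.mk' (Subgroup.lowerCentralSeries (⊤ : Subgroup (FreeGroup (Fin 2))) c)) ''
      (Set.range (FreeGroup.of : Fin 2 → FreeGroup (Fin 2)))
      = ({xh c, yh c} : Set (FH c)) := by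
    ext z
    simp only [Set.mem_image, Set.mem_range, Set.mem_insert_iff, Set.mem_singleton_iff]
    constructor
    · rintro ⟨w, ⟨i, rfl⟩, rfl⟩
      fin_cases i
      · exact Or.inl rfl
      · exact Or.inr rfl
    · rintro (rfl | rfl)
      exacts [⟨FreeGroup.of 0, ⟨0, rfl⟩, rfl⟩, ⟨FreeGroup.of 1, ⟨1, rfl⟩, rfl⟩]
  rw [h3] at h2
  exact h2.symm

theorem polybound {H' : Type*} [Group H'] :
    ∀ L : List (En H'), (∀ e ∈ L, IsPolyE e.2.1) → ∃ E, ∀ e ∈ L, PolyDeg E e.2.1 := by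
  intro L
  induction L with
  | nil => exact fun _ => ⟨0, fun e he => absurd he (List.not_mem_nil)⟩
  | cons e L ih =>
    intro h
    obtain ⟨E₁, hE₁⟩ := ih (fun x hx => h x (List.mem_cons_of_mem _ hx))
    obtain ⟨B, hB⟩ := h e (List.mem_cons_self)
    refine ⟨max B E₁, fun x hx => ?_⟩
    rcases List.mem_cons.1 hx with rfl | hx
    · exact polyDeg_mono (le_max_left _ _) hB
    · exact polyDeg_mono (le_max_right _ _) (hE₁ x hx)

theorem evl_mem_powN {H' G : Type*} [Group H'] [Group G] (φ : H' →* G) (D : Subgroup G)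
    {p : ℕ} (hp : p.Prime) (E : ℕ) :
    ∀ L : List (En H'), (∀ e ∈ L, φ e.1 ∈ D) → (∀ e ∈ L, PolyDeg E e.2.1) →
    (∀ e ∈ L, e.2.1 0 = 0) → ∀ N : ℕ, φ (EvL L (p ^ N)) ∈ PowN p (N - E) D := by
  intro L
  induction L with
  | nil => intro _ _ _ N; rw [EvL_nil, map_one]; exact one_mem _
  | cons e L ih =>
    intro hmem hdeg hvan N
    rw [EvL_cons, map_mul]
    refine mul_mem ?_ (ih (fun x hx => hmem x (List.mem_cons_of_mem _ hx))
      (fun x hx => hdeg x (List.mem_cons_of_mem _ hx))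
      (fun x hx => hvan x (List.mem_cons_of_mem _ hx)) N)
    rw [map_zpow]
    obtain ⟨k, hk⟩ := polyDeg_val hp (hdeg e (List.mem_cons_self))
      (hvan e (List.mem_cons_self)) N
    rw [hk, mul_comm, zpow_mul]
    have hcast : ((p : ℤ) ^ (N - E)) = (((p ^ (N - E) : ℕ)) : ℤ) := by push_cast; ring
    rw [hcast, zpow_natCast]
    exact pow_mem_powN p (N - E) (Subgroup.zpow_mem _ (hmem e (List.mem_cons_self)) k)

theorem HPmainG {G : Type*} [Group G] {c : ℕ} (hG : Subgroup.lowerCentralSeries (⊤ : Subgroup G) c = ⊥)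
    (p : ℕ) (hp : p.Prime) :
    ∃ E : ℕ, ∀ a b : G, ∀ D : Subgroup G, D.Normal → ⁅a, b⁆ ∈ D → ∀ N : ℕ,
      ∃ z ∈ PowN p (N - E) D, a ^ (p ^ N) * b ^ (p ^ N) = (a * b) ^ (p ^ N) * z := by
  -- run the engine in the universal group
  have hbot' : ∀ x : FH c, x ∈ (fun i => Subgroup.lowerCentralSeries (⊤ : Subgroup (FH c)) (i - 1)) (c + 1) → x = 1 := by
    intro x hx
    simp only [Nat.add_sub_cancel] at hx
    rw [FH_lcs_bot c] at hx
    exact hx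
  have hA' : ∀ i j : ℕ, i ≤ j →
      (fun i => Subgroup.lowerCentralSeries (⊤ : Subgroup (FH c)) (i - 1)) j ≤ (fun i => Subgroup.lowerCentralSeries (⊤ : Subgroup (FH c)) (i - 1)) i :=
    fun i j hij => Subgroup.lowerCentralSeries_antitone _ (by omega)
  have hcomm' : ∀ i j : ℕ, 1 ≤ i → 1 ≤ j → ∀ x y : FH c,
      x ∈ (fun i => Subgroup.lowerCentralSeries (⊤ : Subgroup (FH c)) (i - 1)) i →
      y ∈ (fun i => Subgroup.lowerCentralSeries (⊤ : Subgroup (FH c)) (i - 1)) j →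
      ⁅x, y⁆ ∈ (fun i => Subgroup.lowerCentralSeries (⊤ : Subgroup (FH c)) (i - 1)) (i + j) := by
    intro i j hi hj x y hx hy
    have h1 : ⁅x, y⁆ ∈ ⁅Subgroup.lowerCentralSeries (⊤ : Subgroup (FH c)) (i - 1), Subgroup.lowerCentralSeries (⊤ : Subgroup (FH c)) (j - 1)⁆ :=
      Subgroup.commutator_mem_commutator hx hy
    have h2 := lcs_commutator_le (FH c) (j - 1) (i - 1) h1
    have harith : (i - 1) + (j - 1) + 1 = i + j - 1 := by omega
    rw [harith] at h2
    exact h2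
  obtain ⟨L, hLok, hLvan, hLev⟩ := engineMain (fun i => Subgroup.lowerCentralSeries (⊤ : Subgroup (FH c)) (i - 1))
    (c + 1) hA' hbot' hcomm' (xh c) (yh c) (Subgroup.mem_top _) (Subgroup.mem_top _)
  obtain ⟨E, hE⟩ := polybound L (fun e he => (hLok e he).2.1)
  refine ⟨E, ?_⟩
  intro a b D hD hab N
  -- the transport homomorphism
  set f0 : Fin 2 → G := ![a, b] with hf0
  set φ₀ : FreeGroup (Fin 2) →* G := FreeGroup.lift f0 with hφ₀
  have hker : Subgroup.lowerCentralSeries (⊤ : Subgroup (FreeGroup (Fin 2))) c ≤ φ₀.ker := by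
    intro g hg
    have h1 : φ₀ g ∈ Subgroup.map φ₀ (Subgroup.lowerCentralSeries (⊤ : Subgroup (FreeGroup (Fin 2))) c) :=
      Subgroup.mem_map_of_mem _ hg
    have h2 := Subgroup.lowerCentralSeries.map φ₀ c h1
    rw [hG, Subgroup.mem_bot] at h2
    exact h2
  set φ : FH c →* G := QuotientGroup.lift _ φ₀ hker with hφ
  have hφx : φ (xh c) = a := by
    rw [hφ, xh]
    rw [QuotientGroup.lift_mk]
    rw [hφ₀, FreeGroup.lift_apply_of, hf0]
    rfl
  have hφy : φ (yh c) = b := by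
    rw [hφ, yh]
    rw [QuotientGroup.lift_mk]
    rw [hφ₀, FreeGroup.lift_apply_of, hf0]
    rfl
  -- membership of entries
  have hncl : Subgroup.lowerCentralSeries (⊤ : Subgroup (FH c)) 1 ≤ Subgroup.normalClosure {⁅xh c, yh c⁆} :=
    lcs_one_le_ncl (FH_gen c)
  have hmem : ∀ e ∈ L, φ e.1 ∈ D := by
    intro e he
    have h1 : e.1 ∈ Subgroup.lowerCentralSeries (⊤ : Subgroup (FH c)) (e.2.2 - 1) := (hLok e he).1
    have h2 : e.1 ∈ Subgroup.lowerCentralSeries (⊤ : Subgroup (FH c)) 1 :=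
      Subgroup.lowerCentralSeries_antitone _ (by have := (hLok e he).2.2.1; omega) h1
    have h3 : e.1 ∈ Subgroup.normalClosure {⁅xh c, yh c⁆} := hncl h2
    haveI : (D.comap φ).Normal := hD.comap φ
    have h4 : Subgroup.normalClosure {⁅xh c, yh c⁆} ≤ D.comap φ := by
      apply Subgroup.normalClosure_le_normal
      intro z hz
      rw [Set.mem_singleton_iff] at hz
      subst hz
      show φ ⁅xh c, yh c⁆ ∈ D
      rw [map_commutatorElement, hφx, hφy]
      exact hab
    exact h4 h3
  -- assemble
  refine ⟨φ (EvL L (p ^ N)), evl_mem_powN φ D hp E L hmem (fun e he => hE e he) hLvan N, ?_⟩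
  have hid := hLev (p ^ N)
  have := congrArg φ hid
  rw [map_mul, map_mul, map_pow, map_pow, map_pow, hφx, hφy] at this
  rw [map_mul, hφx, hφy] at this
  exact this

end Universal
section Outer

variable {G : Type*} [Group G]

theorem fold_lemma (p : ℕ) {E : ℕ}
    (hHP : ∀ a b : G, ∀ D : Subgroup G, D.Normal → ⁅a, b⁆ ∈ D → ∀ N : ℕ,
      ∃ z ∈ PowN p (N - E) D, a ^ (p ^ N) * b ^ (p ^ N) = (a * b) ^ (p ^ N) * z)
    (l n : ℕ) :
    ∀ x ∈ PowN p n (Subgroup.lowerCentralSeries (⊤ : Subgroup G) l),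
      ∃ h ∈ Subgroup.lowerCentralSeries (⊤ : Subgroup G) l,
        ∃ z ∈ PowN p (n - E) (Subgroup.lowerCentralSeries (⊤ : Subgroup G) (l + 1)), x = h ^ (p ^ n) * z := by
  intro x hx
  haveI hMnormal : (PowN p (n - E) (Subgroup.lowerCentralSeries (⊤ : Subgroup G) (l + 1))).Normal :=
    powN_normal p (n - E) _
  have hcommΓ : ∀ h₁ h₂ : G, h₁ ∈ Subgroup.lowerCentralSeries (⊤ : Subgroup G) l → h₂ ∈ Subgroup.lowerCentralSeries (⊤ : Subgroup G) l →
      ⁅h₁, h₂⁆ ∈ Subgroup.lowerCentralSeries (⊤ : Subgroup G) (l + 1) := by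
    intro h₁ h₂ hh₁ hh₂
    have h1 : ⁅h₁, h₂⁆ ∈ ⁅Subgroup.lowerCentralSeries (⊤ : Subgroup G) l, (⊤ : Subgroup G)⁆ :=
      Subgroup.commutator_mem_commutator hh₁ (Subgroup.mem_top h₂)
    rwa [← lcs_succ_comm_s4] at h1
  induction hx using Subgroup.closure_induction with
  | mem y hy =>
    obtain ⟨d, hd, rfl⟩ := hy
    exact ⟨d, hd, 1, one_mem _, by rw [mul_one]⟩
  | one => exact ⟨1, one_mem _, 1, one_mem _, by simp⟩
  | mul x₁ x₂ hx₁ hx₂ ih₁ ih₂ =>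
    obtain ⟨h₁, hh₁, z₁, hz₁, rfl⟩ := ih₁
    obtain ⟨h₂, hh₂, z₂, hz₂, rfl⟩ := ih₂
    obtain ⟨z₃, hz₃, hmerge⟩ := hHP h₁ h₂ (Subgroup.lowerCentralSeries (⊤ : Subgroup G) (l + 1)) inferInstance
      (hcommΓ h₁ h₂ hh₁ hh₂) n
    refine ⟨h₁ * h₂, mul_mem hh₁ hh₂,
      z₃ * ((h₂ ^ (p ^ n))⁻¹ * z₁ * h₂ ^ (p ^ n)) * z₂, ?_, ?_⟩
    · refine mul_mem (mul_mem hz₃ ?_) hz₂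
      have := hMnormal.conj_mem z₁ hz₁ (h₂ ^ (p ^ n))⁻¹
      simpa using this
    · calc h₁ ^ p ^ n * z₁ * (h₂ ^ p ^ n * z₂)
          = h₁ ^ p ^ n * h₂ ^ p ^ n * ((h₂ ^ p ^ n)⁻¹ * z₁ * h₂ ^ p ^ n) * z₂ := by group
        _ = (h₁ * h₂) ^ p ^ n * z₃ * ((h₂ ^ p ^ n)⁻¹ * z₁ * h₂ ^ p ^ n) * z₂ := by rw [hmerge]
        _ = (h₁ * h₂) ^ p ^ n * (z₃ * ((h₂ ^ p ^ n)⁻¹ * z₁ * h₂ ^ p ^ n) * z₂) := by group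
  | inv x hx ih =>
    obtain ⟨h, hh, z, hz, rfl⟩ := ih
    refine ⟨h⁻¹, inv_mem hh, h ^ p ^ n * z⁻¹ * (h ^ p ^ n)⁻¹, ?_, ?_⟩
    · exact hMnormal.conj_mem z⁻¹ (inv_mem hz) (h ^ p ^ n)
    · rw [inv_pow]
      group

theorem TU_lemma (p : ℕ) {E : ℕ}
    (hHP : ∀ a b : G, ∀ D : Subgroup G, D.Normal → ⁅a, b⁆ ∈ D → ∀ N : ℕ,
      ∃ z ∈ PowN p (N - E) D, a ^ (p ^ N) * b ^ (p ^ N) = (a * b) ^ (p ^ N) * z)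
    {c : ℕ} (hG : Subgroup.lowerCentralSeries (⊤ : Subgroup G) c = ⊥) :
    ∀ k l, l + k = c →
      ((∀ m : ℕ, ∃ n : ℕ, ∀ x ∈ PowN p n (Subgroup.lowerCentralSeries (⊤ : Subgroup G) l),
          ∃ y ∈ Subgroup.lowerCentralSeries (⊤ : Subgroup G) l, y ^ (p ^ m) = x) ∧
       (∀ m : ℕ, ∃ n : ℕ, ∀ β : G, ∀ z ∈ PowN p n (Subgroup.lowerCentralSeries (⊤ : Subgroup G) l),
          ∃ y ∈ (Subgroup.closure {β}) ⊔ Subgroup.lowerCentralSeries (⊤ : Subgroup G) l, y ^ (p ^ m) = β ^ (p ^ n) * z)) := by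
  intro k
  induction k with
  | zero =>
    intro l hl
    have hl' : l = c := by omega
    subst hl'
    rw [hG]
    constructor
    · intro m
      refine ⟨m, fun x hx => ?_⟩
      rw [powN_bot, Subgroup.mem_bot] at hx
      exact ⟨1, one_mem _, by rw [hx, one_pow]⟩
    · intro m
      refine ⟨m, fun β z hz => ?_⟩
      rw [powN_bot, Subgroup.mem_bot] at hz
      exact ⟨β, Subgroup.mem_sup_left (Subgroup.mem_closure_singleton_self β),
        by rw [hz, mul_one]⟩
  | succ k ih =>
    intro l hl
    obtain ⟨Tn, Un⟩ := ih (l + 1) (by omega)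
    have Tl : ∀ m : ℕ, ∃ n : ℕ, ∀ x ∈ PowN p n (Subgroup.lowerCentralSeries (⊤ : Subgroup G) l),
        ∃ y ∈ Subgroup.lowerCentralSeries (⊤ : Subgroup G) l, y ^ (p ^ m) = x := by
      intro m
      obtain ⟨n₃, hU⟩ := Un m
      refine ⟨n₃ + E, fun x hx => ?_⟩
      obtain ⟨h, hh, z, hz, rfl⟩ := fold_lemma p hHP l (n₃ + E) x hx
      rw [show n₃ + E - E = n₃ by omega] at hz
      obtain ⟨y, hy, hyeq⟩ := hU (h ^ (p ^ E)) z hz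
      refine ⟨y, ?_, ?_⟩
      · have hle : (Subgroup.closure {h ^ (p ^ E)}) ⊔ Subgroup.lowerCentralSeries (⊤ : Subgroup G) (l + 1)
            ≤ Subgroup.lowerCentralSeries (⊤ : Subgroup G) l := by
          refine sup_le ?_ (Subgroup.lowerCentralSeries_antitone _ (by omega))
          rw [Subgroup.closure_le]
          intro u hu
          rw [Set.mem_singleton_iff] at hu
          subst hu
          exact pow_mem hh _
        exact hle hy
      · rw [hyeq, ← pow_mul, ← pow_add, Nat.add_comm E n₃]
    refine ⟨Tl, ?_⟩
    intro m
    obtain ⟨n₂, hU2⟩ := Un m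
    obtain ⟨nT, hT⟩ := Tl (n₂ + E)
    refine ⟨nT + (n₂ + E), fun β z hz => ?_⟩
    have hz' : z ∈ PowN p nT (Subgroup.lowerCentralSeries (⊤ : Subgroup G) l) :=
      powN_exp_mono p (by omega) _ hz
    obtain ⟨γ, hγ, hγeq⟩ := hT z hz'
    set α := β ^ (p ^ (nT + (n₂ + E) - (n₂ + E))) with hα
    have hαγ : ⁅α, γ⁆ ∈ Subgroup.lowerCentralSeries (⊤ : Subgroup G) (l + 1) := by
      have h1 : ⁅α, γ⁆ ∈ ⁅(⊤ : Subgroup G), Subgroup.lowerCentralSeries (⊤ : Subgroup G) l⁆ :=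
        Subgroup.commutator_mem_commutator (Subgroup.mem_top α) hγ
      rw [Subgroup.commutator_comm, ← lcs_succ_comm_s4] at h1
      exact h1
    obtain ⟨z₂, hz₂, hmerge⟩ := hHP α γ (Subgroup.lowerCentralSeries (⊤ : Subgroup G) (l + 1)) inferInstance hαγ (n₂ + E)
    rw [show n₂ + E - E = n₂ by omega] at hz₂
    obtain ⟨y, hy, hyeq⟩ := hU2 ((α * γ) ^ (p ^ E)) z₂ hz₂
    refine ⟨y, ?_, ?_⟩
    · have hle : (Subgroup.closure {(α * γ) ^ (p ^ E)}) ⊔ Subgroup.lowerCentralSeries (⊤ : Subgroup G) (l + 1)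
          ≤ (Subgroup.closure {β}) ⊔ Subgroup.lowerCentralSeries (⊤ : Subgroup G) l := by
        refine sup_le ?_ (le_trans (Subgroup.lowerCentralSeries_antitone _ (by omega)) le_sup_right)
        rw [Subgroup.closure_le]
        intro u hu
        rw [Set.mem_singleton_iff] at hu
        subst hu
        refine SetLike.mem_coe.2 (pow_mem (mul_mem ?_ ?_) _)
        · exact Subgroup.mem_sup_left (pow_mem (Subgroup.mem_closure_singleton_self β) _)
        · exact Subgroup.mem_sup_right hγ
      exact hle hy
    · rw [hyeq]
      have h1 : ((α * γ) ^ p ^ E) ^ p ^ n₂ = (α * γ) ^ p ^ (n₂ + E) := by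
        rw [← pow_mul, ← pow_add, Nat.add_comm E n₂]
      have h2 : α ^ p ^ (n₂ + E) = β ^ p ^ (nT + (n₂ + E)) := by
        rw [hα, ← pow_mul, ← pow_add,
          show nT + (n₂ + E) - (n₂ + E) + (n₂ + E) = nT + (n₂ + E) by omega]
      rw [h1, ← hmerge, h2, hγeq]
end Outer

/-- In a nilpotent `p`-group `G`, the quotient by the subgroup `G₀` of elements of
infinite `p`-height has no nontrivial elements of infinite `p`-height. -/
theorem stmt4 {G : Type*} [Group G] [Group.IsNilpotent G] (p : ℕ) (hp : p.Prime)
    (hpG : IsPGroup p G) (N : Subgroup G) [N.Normal]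
    (hN : ↑N = {g : G | ∀ n : ℕ, ∃ h : G, h ^ (p ^ n) = g}) :
    ∀ x : G ⧸ N, (∀ n : ℕ, ∃ h : G ⧸ N, h ^ (p ^ n) = x) → x = 1 := by
  obtain ⟨c, hGc⟩ := (Subgroup.nilpotent_iff_lowerCentralSeries (G := G)).mp ‹Group.IsNilpotent G›
  obtain ⟨E, hHP⟩ := HPmainG hGc p hp
  intro x hx
  obtain ⟨x₀, rfl⟩ := QuotientGroup.mk_surjective x
  have hx₀ : ∀ n : ℕ, x₀ ∈ PowN p n (Subgroup.lowerCentralSeries (⊤ : Subgroup G) 0) := by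
    intro n
    obtain ⟨h, hh⟩ := hx n
    obtain ⟨h₀, rfl⟩ := QuotientGroup.mk_surjective h
    have h1 : ((h₀ ^ (p ^ n) : G) : G ⧸ N) = ((x₀ : G) : G ⧸ N) := by
      rw [QuotientGroup.mk_pow]
      exact hh
    have h2 : (h₀ ^ (p ^ n))⁻¹ * x₀ ∈ N := QuotientGroup.eq.mp h1
    have h3 : (h₀ ^ (p ^ n))⁻¹ * x₀ ∈ {g : G | ∀ m : ℕ, ∃ w : G, w ^ (p ^ m) = g} := by
      rw [← hN]
      exact h2
    obtain ⟨w, hw⟩ := h3 n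
    have h4 : x₀ = h₀ ^ (p ^ n) * ((h₀ ^ (p ^ n))⁻¹ * x₀) := by group
    rw [h4, ← hw]
    exact mul_mem (pow_mem_powN p n (Subgroup.mem_top h₀))
      (pow_mem_powN p n (Subgroup.mem_top w))
  have hT := (TU_lemma p hHP hGc c 0 (by omega)).1
  have hset : x₀ ∈ {g : G | ∀ m : ℕ, ∃ h : G, h ^ (p ^ m) = g} := by
    intro m
    obtain ⟨n, hTn⟩ := hT m
    obtain ⟨y, -, hy⟩ := hTn x₀ (hx₀ n)
    exact ⟨y, hy⟩
  have hxN : x₀ ∈ N := by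
    rw [← SetLike.mem_coe, hN]
    exact hset
  exact (QuotientGroup.eq_one_iff x₀).2 hxN
end

section
/- Let G be a nilpotent p-group whose first Ulm factor G/G₀ has bounded period (i.e., there exists l with x^(p^l) = 1 for all x ∈ G/G₀). Then the subgroup G₀ of elements of infinite p-height is divisible. -/
/-- If `G` is a nilpotent `p`-group whose first Ulm factor `G/G₀` has bounded period,
then the subgroup `G₀` of elements of infinite `p`-height is divisible. -/
theorem stmt5 {G : Type*} [Group G] [Group.IsNilpotent G] (p : ℕ) (hp : p.Prime)
    (hpG : IsPGroup p G) (N : Subgroup G) [N.Normal]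
    (hN : ↑N = {g : G | ∀ n : ℕ, ∃ h : G, h ^ (p ^ n) = g})
    (hbdd : ∃ l : ℕ, ∀ x : G ⧸ N, x ^ (p ^ l) = 1) :
    ∀ g ∈ N, ∀ n : ℕ, 0 < n → ∃ h ∈ N, h ^ n = g := by
  obtain ⟨l, hl⟩ := hbdd
  -- every p^l-th power lies in N
  have hA : ∀ x : G, x ^ (p ^ l) ∈ N := by
    intro x
    have := hl (QuotientGroup.mk x)
    rw [← QuotientGroup.mk_pow, QuotientGroup.eq_one_iff] at this
    exact this
  -- p-th roots exist in N
  have hB : ∀ g ∈ N, ∃ h ∈ N, h ^ p = g := by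
    intro g hg
    have hg' : g ∈ ({g : G | ∀ n : ℕ, ∃ h : G, h ^ (p ^ n) = g} : Set G) := hN ▸ hg
    obtain ⟨y, hy⟩ := hg' (l + 1)
    refine ⟨y ^ (p ^ l), hA y, ?_⟩
    rw [← pow_mul, ← pow_succ]
    exact hy
  -- p^k-th roots exist in N
  have hC : ∀ k : ℕ, ∀ g ∈ N, ∃ h ∈ N, h ^ (p ^ k) = g := by
    intro k
    induction k with
    | zero => intro g hg; exact ⟨g, hg, pow_one g⟩
    | succ k ih =>
      intro g hg
      obtain ⟨h, hh, hhp⟩ := hB g hg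
      obtain ⟨h', hh', hh'p⟩ := ih h hh
      exact ⟨h', hh', by rw [pow_succ, pow_mul, hh'p, hhp]⟩
  intro g hg n hn
  -- handle g = 1
  by_cases hg1 : g = 1
  · exact ⟨1, N.one_mem, by rw [one_pow, hg1]⟩
  set k := n.factorization p with hk
  set m := n / p ^ k with hm
  have hnkm : p ^ k * m = n := Nat.ordProj_mul_ordCompl_eq_self n p
  have hpm : ¬ p ∣ m := Nat.not_dvd_ordCompl hp hn.ne'
  have hcop : Nat.Coprime m p := (Nat.coprime_comm.mp ((Nat.Prime.coprime_iff_not_dvd hp).mpr hpm))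
  -- g has finite p-power order
  haveI := Fact.mk hp
  obtain ⟨K, hK⟩ := (IsPGroup.iff_orderOf.mp hpG) g
  have hfin : orderOf g ≠ 0 := by rw [hK]; exact pow_ne_zero K hp.pos.ne'
  have ht1 : 1 < orderOf g :=
    Nat.lt_of_le_of_ne (Nat.one_le_iff_ne_zero.mpr hfin)
      (fun h => hg1 (orderOf_eq_one_iff.mp h.symm))
  have hcopt : Nat.Coprime m (orderOf g) := by
    have : Nat.Coprime m (p ^ K) := hcop.pow_right K
    exact this.coprime_dvd_right (hK ▸ dvd_refl _)
  obtain ⟨a, -, ha⟩ := Nat.exists_mul_mod_eq_one_of_coprime hcopt ht1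
  have hga : g ^ (m * a) = g := by
    conv_rhs => rw [← pow_one g, ← ha]
    exact (pow_mod_orderOf g (m * a)).symm ▸ (pow_mod_orderOf g (m * a))
  obtain ⟨h, hh, hhp⟩ := hC k (g ^ a) (N.pow_mem hg a)
  refine ⟨h, hh, ?_⟩
  rw [← hnkm, pow_mul, hhp, ← pow_mul, mul_comm a m, hga]
end

section
/- Let A be a reduced abelian p-group of unbounded period with no nontrivial elements of infinite height. Then for every natural number r there is a decomposition A = ⟨a⟩ ⊕ B where ⟨a⟩ is a cyclic direct summand of order greater than r. -/
/-- An additive subgroup `D` is divisible if every element of `D` has an `n`-th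
"root" (i.e. is an `n`-th multiple) within `D` for every positive `n`. -/
def AddSubgroup.IsDivisible {A : Type*} [AddCommGroup A] (D : AddSubgroup A) : Prop :=
  ∀ d ∈ D, ∀ n : ℕ, 0 < n → ∃ x ∈ D, n • x = d

/-- The subgroup `n • A` of an abelian group `A`. -/
private def smulSub {A : Type*} [AddCommGroup A] (n : ℕ) : AddSubgroup A where
  carrier := Set.range fun x : A => n • x
  zero_mem' := ⟨0, smul_zero n⟩
  add_mem' := by rintro a b ⟨x, rfl⟩ ⟨y, rfl⟩; exact ⟨x + y, smul_add n x y⟩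
  neg_mem' := by rintro a ⟨x, rfl⟩; exact ⟨-x, smul_neg n x⟩

private lemma mem_smulSub {A : Type*} [AddCommGroup A] {n : ℕ} {x : A} :
    x ∈ smulSub (A := A) n ↔ ∃ y : A, n • y = x := Iff.rfl

/-- A reduced abelian `p`-group of unbounded period with no nontrivial elements of
infinite height has cyclic direct summands of arbitrarily large order. -/
theorem stmt8 {A : Type*} [AddCommGroup A] (p : ℕ) (hp : p.Prime)
    (hpA : ∀ a : A, ∃ n : ℕ, p ^ n • a = 0)
    (hred : ∀ D : AddSubgroup A, D.IsDivisible → D = ⊥)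
    (hsep : ∀ a : A, a ≠ 0 → ¬ (∀ n : ℕ, ∃ b : A, p ^ n • b = a))
    (hunbdd : ∀ n : ℕ, ∃ a : A, n < addOrderOf a) :
    ∀ r : ℕ, ∃ (a : A) (B : AddSubgroup A),
      IsCompl (AddSubgroup.zmultiples a) B ∧ r < addOrderOf a := by
  classical
  intro r
  have cast_pow_smul : ∀ (j : ℕ) (x : A), ((p : ℤ) ^ j) • x = p ^ j • x := by
    intro j x
    rw [← Nat.cast_pow, natCast_zsmul]
  -- Step 1: an element of order p with large finite height
  obtain ⟨c, hc⟩ := hunbdd (p ^ r)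
  obtain ⟨k, hk⟩ := hpA c
  obtain ⟨n, hn, hcn⟩ := (Nat.dvd_prime_pow hp).mp (addOrderOf_dvd_of_nsmul_eq_zero hk)
  have hrn : r < n := by
    rw [hcn] at hc
    exact (Nat.pow_lt_pow_iff_right hp.one_lt).mp hc
  obtain ⟨n', rfl⟩ : ∃ n'', n = n'' + 1 := ⟨n - 1, by omega⟩
  set a0 : A := p ^ n' • c with ha0def
  have ha0ne : a0 ≠ 0 := by
    intro h0
    have hdvd : addOrderOf c ∣ p ^ n' := addOrderOf_dvd_of_nsmul_eq_zero h0
    rw [hcn] at hdvd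
    have h1 := Nat.le_of_dvd (pow_pos hp.pos n') hdvd
    have h2 : p ^ n' < p ^ (n' + 1) := Nat.pow_lt_pow_right hp.one_lt (by omega)
    omega
  have hpa0 : p • a0 = 0 := by
    rw [ha0def, smul_smul, ← pow_succ']
    exact addOrderOf_dvd_iff_nsmul_eq_zero.mp (hcn ▸ dvd_refl _)
  -- the height of a0
  set P : ℕ → Prop := fun m => ∃ x : A, p ^ m • x = a0 with hPdef
  have hPmono : ∀ {i j : ℕ}, i ≤ j → P j → P i := by
    rintro i j hij ⟨x, hx⟩
    exact ⟨p ^ (j - i) • x, by rw [smul_smul, ← pow_add, ← hx]; congr 2; omega⟩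
  obtain ⟨M, hM⟩ : ∃ M : ℕ, ∀ x : A, p ^ M • x ≠ a0 := by
    have := hsep a0 ha0ne
    push_neg at this
    exact this
  have hMP : ¬ P M := by rintro ⟨x, hx⟩; exact hM x hx
  have hn'M : n' ≤ M := by
    by_contra hlt
    exact hMP (hPmono (by omega) ⟨c, rfl⟩)
  set h := Nat.findGreatest P M with hhdef
  have hPh : P h := Nat.findGreatest_spec hn'M ⟨c, rfl⟩
  have hhn' : n' ≤ h := Nat.le_findGreatest hn'M ⟨c, rfl⟩
  have hPh1 : ¬ P (h + 1) := by
    intro hp1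
    have hhM : h ≠ M := by intro he; rw [← he] at hMP; exact hMP hPh
    have hle : h + 1 ≤ M := Nat.lt_of_le_of_ne (Nat.findGreatest_le M) hhM
    have := Nat.le_findGreatest hle hp1
    omega
  obtain ⟨b, hb⟩ := hPh
  -- order of b
  have hbord1 : p ^ h • b ≠ 0 := by rw [hb]; exact ha0ne
  have hbord2 : p ^ (h + 1) • b = 0 := by rw [pow_succ', mul_smul, hb, hpa0]
  have hbz0 : ((p : ℤ) ^ (h + 1)) • b = 0 := by rw [cast_pow_smul]; exact hbord2
  have hordb : addOrderOf b = p ^ (h + 1) := by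
    obtain ⟨j, hj, hbj⟩ :=
      (Nat.dvd_prime_pow hp).mp (addOrderOf_dvd_of_nsmul_eq_zero hbord2)
    rcases Nat.lt_or_ge j (h + 1) with hlt | hge
    · exfalso
      apply hbord1
      have : addOrderOf b ∣ p ^ h := hbj ▸ pow_dvd_pow p (by omega)
      exact addOrderOf_dvd_iff_nsmul_eq_zero.mp this
    · rw [hbj]; congr 1; omega
  have hrb : r < addOrderOf b := by
    rw [hordb]
    calc r < p ^ r := Nat.lt_pow_self hp.one_lt
      _ ≤ p ^ (h + 1) := Nat.pow_le_pow_right hp.pos (by omega)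
  -- Key purity claim
  have hclaim : ∀ (j : ℕ) (u : ℤ), ¬ (p : ℤ) ∣ u → ∀ y : A,
      (u * (p : ℤ) ^ j) • b = p ^ (h + 1) • y → (u * (p : ℤ) ^ j) • b = 0 := by
    intro j u hu y hy
    have hyz : (u * (p : ℤ) ^ j) • b = ((p : ℤ) ^ (h + 1)) • y := by
      rw [cast_pow_smul]; exact hy
    rcases le_or_gt j h with hj | hj
    · exfalso
      have hcop : IsCoprime u ((p : ℤ) ^ (h + 1)) :=
        (((Nat.prime_iff_prime_int.mp hp).coprime_iff_not_dvd.mpr hu).symm).pow_right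
      obtain ⟨s, v, hsv⟩ := hcop
      have e1 : ((s * u + v * (p : ℤ) ^ (h + 1)) * (p : ℤ) ^ j) • b = ((p : ℤ) ^ j) • b := by
        rw [hsv, one_mul]
      have e2 : ((s * u + v * (p : ℤ) ^ (h + 1)) * (p : ℤ) ^ j) • b
          = s • ((u * (p : ℤ) ^ j) • b) + (v * (p : ℤ) ^ j) • (((p : ℤ) ^ (h + 1)) • b) := by
        rw [smul_smul, smul_smul, ← add_smul]; congr 1; ring
      have key : ((p : ℤ) ^ j) • b = ((p : ℤ) ^ (h + 1)) • (s • y) := by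
        rw [← e1, e2, hyz, hbz0, smul_zero, add_zero, smul_smul, smul_smul]
        congr 1; ring
      obtain ⟨d, hd⟩ : ∃ d, h = d + j := ⟨h - j, by omega⟩
      have e3 : a0 = ((p : ℤ) ^ d) • (((p : ℤ) ^ j) • b) := by
        rw [smul_smul, ← pow_add, cast_pow_smul, ← hd, hb]
      have ha0p : p ^ (h + 1) • (((p : ℤ) ^ d * s) • y) = a0 := by
        rw [← cast_pow_smul (h + 1), smul_smul, e3, key, smul_smul, smul_smul]
        congr 1; ring
      exact hPh1 ⟨((p : ℤ) ^ d * s) • y, ha0p⟩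
    · obtain ⟨d, rfl⟩ : ∃ d, j = d + (h + 1) := ⟨j - h - 1, by omega⟩
      have : (u * (p : ℤ) ^ (d + (h + 1))) • b = (u * (p : ℤ) ^ d) • (((p : ℤ) ^ (h + 1)) • b) := by
        rw [smul_smul]
        congr 1; ring
      rw [this, hbz0, smul_zero]
  -- decomposition of integers
  have hdecomp : ∀ m : ℤ, m ≠ 0 → ∃ (u : ℤ) (j : ℕ), ¬ (p : ℤ) ∣ u ∧ m = u * (p : ℤ) ^ j := by
    intro m hm
    have hna : m.natAbs ≠ 0 := Int.natAbs_ne_zero.mpr hm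
    have hnd := Nat.pow_succ_factorization_not_dvd hna hp
    obtain ⟨u₀, hu₀⟩ := Nat.ordProj_dvd m.natAbs p
    revert hu₀ hnd
    generalize m.natAbs.factorization p = j
    intro hnd hu₀
    have hu : ¬ p ∣ u₀ := by
      rintro ⟨v, rfl⟩
      exact hnd ⟨v, by rw [hu₀, pow_succ]; ring⟩
    have hu' : ¬ (p : ℤ) ∣ (u₀ : ℤ) := by
      rw [Int.natCast_dvd_natCast]; exact hu
    have habs : (m.natAbs : ℤ) = (u₀ : ℤ) * (p : ℤ) ^ j := by
      rw [hu₀]; push_cast; ring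
    rcases Int.natAbs_eq m with he | he
    · exact ⟨(u₀ : ℤ), j, hu', by rw [he, habs]⟩
    · exact ⟨-(u₀ : ℤ), j, by rwa [dvd_neg], by rw [he, habs]; ring⟩
  -- Pb = p^(h+1) A, disjoint from ⟨b⟩
  set Pb : AddSubgroup A := smulSub (A := A) (p ^ (h + 1)) with hPbdef
  have hdisj : Disjoint (AddSubgroup.zmultiples b) Pb := by
    rw [AddSubgroup.disjoint_def]
    intro x hxC hxP
    obtain ⟨m, rfl⟩ := AddSubgroup.mem_zmultiples_iff.mp hxC
    obtain ⟨y, hy⟩ := mem_smulSub.mp hxP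
    by_cases hm0 : m = 0
    · rw [hm0, zero_smul]
    · obtain ⟨u, j, hu, rfl⟩ := hdecomp m hm0
      exact hclaim j u hu y hy.symm
  -- Zorn: maximal B ⊇ Pb disjoint from ⟨b⟩
  set S : Set (AddSubgroup A) := {B | Pb ≤ B ∧ Disjoint (AddSubgroup.zmultiples b) B}
    with hSdef
  obtain ⟨B, hPbB, hBmax⟩ := zorn_le_nonempty₀ S (by
    intro ch hchS hchain y hych
    refine ⟨sSup ch, ⟨le_trans (hchS hych).1 (le_sSup hych), ?_⟩, fun z hz => le_sSup hz⟩
    rw [AddSubgroup.disjoint_def]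
    intro x hxC hxS
    rw [AddSubgroup.mem_sSup_of_directedOn ⟨y, hych⟩ hchain.directedOn] at hxS
    obtain ⟨B', hB'c, hxB'⟩ := hxS
    exact AddSubgroup.disjoint_def.mp (hchS hB'c).2 hxC hxB') Pb ⟨le_rfl, hdisj⟩
  have hB : B ∈ S := hBmax.1
  -- every element lies in ⟨b⟩ ⊔ B
  have hsup : ∀ (N : ℕ) (x : A), p ^ N • x = 0 → x ∈ AddSubgroup.zmultiples b ⊔ B := by
    intro N
    induction N with
    | zero =>
      intro x hx
      have : x = 0 := by simpa using hx
      rw [this]; exact zero_mem _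
    | succ N ih =>
      intro x hx
      have hpx : p ^ N • (p • x) = 0 := by rw [smul_smul, ← pow_succ]; exact hx
      have hmem := ih (p • x) hpx
      rw [AddSubgroup.mem_sup] at hmem
      obtain ⟨w, hwC, e, heB, hsum⟩ := hmem
      obtain ⟨m, rfl⟩ := AddSubgroup.mem_zmultiples_iff.mp hwC
      by_cases hpm : (p : ℤ) ∣ m
      · obtain ⟨m', rfl⟩ := hpm
        have hy : p • (x - m' • b) = e := by
          rw [← natCast_zsmul (x - m' • b) p, smul_sub, smul_smul, natCast_zsmul x p, ← hsum]
          abel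
        set y := x - m' • b with hydef
        by_cases hyB : y ∈ AddSubgroup.zmultiples b ⊔ B
        · have hx' : x = y + m' • b := by rw [hydef]; abel
          rw [hx']
          exact add_mem hyB
            (AddSubgroup.mem_sup_left (AddSubgroup.zsmul_mem _ (AddSubgroup.mem_zmultiples b) m'))
        · exfalso
          have hyBnot : y ∉ B := fun hyB' => hyB (AddSubgroup.mem_sup_right hyB')
          have hndisj : ¬ Disjoint (AddSubgroup.zmultiples b) (B ⊔ AddSubgroup.zmultiples y) := by
            intro hd
            have hS' : B ⊔ AddSubgroup.zmultiples y ∈ S := ⟨le_trans hB.1 le_sup_left, hd⟩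
            have hle := hBmax.2 hS' le_sup_left
            exact hyBnot (hle (AddSubgroup.mem_sup_right (AddSubgroup.mem_zmultiples y)))
          rw [AddSubgroup.disjoint_def] at hndisj
          push_neg at hndisj
          obtain ⟨w, hwC, hwB', hw0⟩ := hndisj
          rw [AddSubgroup.mem_sup] at hwB'
          obtain ⟨e', he'B, z, hzY, hsum'⟩ := hwB'
          obtain ⟨t, rfl⟩ := AddSubgroup.mem_zmultiples_iff.mp hzY
          have htyin : t • y ∈ AddSubgroup.zmultiples b ⊔ B := by
            have : t • y = w - e' := by rw [← hsum']; abel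
            rw [this]
            exact sub_mem (AddSubgroup.mem_sup_left hwC) (AddSubgroup.mem_sup_right he'B)
          by_cases hpt : (p : ℤ) ∣ t
          · obtain ⟨t', rfl⟩ := hpt
            have hty : ((p : ℤ) * t') • y ∈ B := by
              have : ((p : ℤ) * t') • y = t' • e := by
                rw [mul_comm, mul_smul, natCast_zsmul, hy]
              rw [this]
              exact AddSubgroup.zsmul_mem _ heB t'
            have hwB : w ∈ B := by rw [← hsum']; exact add_mem he'B hty
            exact hw0 (AddSubgroup.disjoint_def.mp hB.2 hwC hwB)
          · obtain ⟨K, hK⟩ := hpA y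
            have hcop : IsCoprime (t : ℤ) ((p : ℤ) ^ K) :=
              (((Nat.prime_iff_prime_int.mp hp).coprime_iff_not_dvd.mpr hpt).symm).pow_right
            obtain ⟨s, v, hsv⟩ := hcop
            have hyst : y = s • (t • y) := by
              have h2 : ((p : ℤ) ^ K) • y = 0 := by rw [cast_pow_smul]; exact hK
              calc y = (s * t + v * (p : ℤ) ^ K) • y := by rw [hsv, one_smul]
                _ = s • (t • y) + v • (((p : ℤ) ^ K) • y) := by
                    rw [add_smul, mul_smul, mul_smul]
                _ = s • (t • y) := by rw [h2, smul_zero, add_zero]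
            exact hyB (hyst ▸ AddSubgroup.zsmul_mem _ htyin s)
      · exfalso
        have hcop : IsCoprime (m : ℤ) ((p : ℤ) ^ (h + 1)) :=
          (((Nat.prime_iff_prime_int.mp hp).coprime_iff_not_dvd.mpr hpm).symm).pow_right
        obtain ⟨s, v, hsv⟩ := hcop
        have hbeq : b = s • (m • b) := by
          calc b = (s * m + v * (p : ℤ) ^ (h + 1)) • b := by rw [hsv, one_smul]
            _ = s • (m • b) + v • (((p : ℤ) ^ (h + 1)) • b) := by
                rw [add_smul, mul_smul, mul_smul]
            _ = s • (m • b) := by rw [hbz0, smul_zero, add_zero]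
        have hmb : m • b = (p : ℤ) • x - e := by
          rw [natCast_zsmul, ← hsum]; abel
        have ha0eq : a0 = p ^ (h + 1) • (s • x) + p ^ h • ((-s) • e) := by
          have e0 : a0 = ((p : ℤ) ^ h) • b := by rw [cast_pow_smul]; exact hb.symm
          calc a0 = ((p : ℤ) ^ h) • (s • ((p : ℤ) • x - e)) := by rw [e0, hbeq, hmb]
            _ = ((p : ℤ) ^ h * s * p) • x - ((p : ℤ) ^ h * s) • e := by
                rw [smul_smul, smul_sub, smul_smul]
            _ = p ^ (h + 1) • (s • x) + p ^ h • ((-s) • e) := by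
                rw [← cast_pow_smul (h + 1), ← cast_pow_smul h, smul_smul, smul_smul,
                  sub_eq_add_neg, ← neg_smul]
                congr 1
                · congr 1; ring
                · congr 1; ring
        have ha0B : a0 ∈ B := by
          rw [ha0eq]
          exact add_mem (hB.1 ⟨s • x, rfl⟩)
            (AddSubgroup.nsmul_mem _ (AddSubgroup.zsmul_mem _ heB (-s)) _)
        have ha0C : a0 ∈ AddSubgroup.zmultiples b := by
          rw [← hb]
          exact AddSubgroup.nsmul_mem _ (AddSubgroup.mem_zmultiples b) _
        exact ha0ne (AddSubgroup.disjoint_def.mp hB.2 ha0C ha0B)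
  refine ⟨b, B, ⟨hB.2, ?_⟩, hrb⟩
  rw [codisjoint_iff]
  rw [AddSubgroup.eq_top_iff']
  intro x
  obtain ⟨N, hN⟩ := hpA x
  exact hsup N x hN
end

section
/- In a nilpotent torsion-free group G, the subgroup generated by any family of divisible subgroups is divisible; consequently G possesses a largest divisible subgroup H containing all divisible subgroups of G. -/
open scoped commutatorElement

open Subgroup hiding lowerCentralSeries lowerCentralSeries_succ lowerCentralSeries_zero nilpotent_iff_lowerCentralSeries

universe u

section Aux

variable {G : Type*} [Group G]

/-- The subgroup generated by `m`-th powers of elements of `A`. -/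
def pcl (A : Subgroup G) (m : ℕ) : Subgroup G :=
  Subgroup.closure {x : G | ∃ a ∈ A, a ^ m = x}

lemma mem_pcl_self {A : Subgroup G} {a : G} (ha : a ∈ A) (m : ℕ) : a ^ m ∈ pcl A m :=
  subset_closure ⟨a, ha, rfl⟩

lemma pcl_normal (A : Subgroup G) [hA : A.Normal] (m : ℕ) : (pcl A m).Normal := by
  constructor
  intro x hx g
  induction hx using closure_induction with
  | mem y hy =>
      obtain ⟨a, ha, rfl⟩ := hy
      exact subset_closure ⟨g * a * g⁻¹, hA.conj_mem a ha g, by rw [conj_pow]⟩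
  | one => simpa using one_mem _
  | mul y z hy hz h1 h2 =>
      have : g * (y * z) * g⁻¹ = (g * y * g⁻¹) * (g * z * g⁻¹) := by group
      rw [this]; exact mul_mem h1 h2
  | inv y hy h1 =>
      have : g * y⁻¹ * g⁻¹ = (g * y * g⁻¹)⁻¹ := by group
      rw [this]; exact inv_mem h1

lemma comm_mem_lcs_succ {j : ℕ} {a : G} (ha : a ∈ (⊤ : Subgroup G).lowerCentralSeries j) (b : G) :
    ⁅a, b⁆ ∈ (⊤ : Subgroup G).lowerCentralSeries (j + 1) := by
  rw [lowerCentralSeries_succ]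
  exact commutator_mem_commutator ha (mem_top b)

lemma comm_pow_left {j : ℕ} {a : G} (ha : a ∈ (⊤ : Subgroup G).lowerCentralSeries j) (b : G) (s : ℕ) :
    ∃ r ∈ (⊤ : Subgroup G).lowerCentralSeries (j + 2), ⁅a ^ s, b⁆ = ⁅a, b⁆ ^ s * r := by
  have hc : ⁅a, b⁆ ∈ (⊤ : Subgroup G).lowerCentralSeries (j + 1) := comm_mem_lcs_succ ha b
  induction s with
  | zero => exact ⟨1, one_mem _, by simp⟩
  | succ s ih =>
    obtain ⟨r, hr, heq⟩ := ih
    have hX : ⁅(⁅a, b⁆ ^ s)⁻¹, a⁆ * (a * r * a⁻¹) ∈ (⊤ : Subgroup G).lowerCentralSeries (j + 2) :=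
      mul_mem (comm_mem_lcs_succ (inv_mem (pow_mem hc s)) a)
        ((Subgroup.lowerCentralSeries_normal ⊤ (j + 2)).conj_mem r hr a)
    refine ⟨⁅a, b⁆⁻¹ * (⁅(⁅a, b⁆ ^ s)⁻¹, a⁆ * (a * r * a⁻¹)) * ⁅a, b⁆, ?_, ?_⟩
    · have := (Subgroup.lowerCentralSeries_normal ⊤ (j + 2)).conj_mem _ hX ⁅a, b⁆⁻¹
      rwa [inv_inv] at this
    · have key : ⁅a ^ (s + 1), b⁆ = a * ⁅a ^ s, b⁆ * a⁻¹ * ⁅a, b⁆ := by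
        rw [pow_succ']
        simp only [commutatorElement_def]
        group
      rw [key, heq, pow_succ]
      generalize ⁅a, b⁆ ^ s = d
      simp only [commutatorElement_def]
      group

lemma comm_pow_right {j : ℕ} {a : G} (ha : a ∈ (⊤ : Subgroup G).lowerCentralSeries j) (b : G) (s : ℕ) :
    ∃ r ∈ (⊤ : Subgroup G).lowerCentralSeries (j + 2), ⁅a, b ^ s⁆ = ⁅a, b⁆ ^ s * r := by
  have hc : ⁅a, b⁆ ∈ (⊤ : Subgroup G).lowerCentralSeries (j + 1) := comm_mem_lcs_succ ha b
  induction s with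
  | zero => exact ⟨1, one_mem _, by simp⟩
  | succ s ih =>
    obtain ⟨r, hr, heq⟩ := ih
    refine ⟨⁅(⁅a, b⁆ ^ s)⁻¹, b⁆ * (b * r * b⁻¹),
      mul_mem (comm_mem_lcs_succ (inv_mem (pow_mem hc s)) b)
        ((Subgroup.lowerCentralSeries_normal ⊤ (j + 2)).conj_mem r hr b), ?_⟩
    have key : ⁅a, b ^ (s + 1)⁆ = ⁅a, b⁆ * (b * ⁅a, b ^ s⁆ * b⁻¹) := by
      rw [pow_succ']
      simp only [commutatorElement_def]
      group
    rw [key, heq, pow_succ']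
    generalize ⁅a, b⁆ ^ s = d
    simp only [commutatorElement_def]
    group

lemma comm_pow_pow {j : ℕ} {a : G} (ha : a ∈ (⊤ : Subgroup G).lowerCentralSeries j) (g : G) (s t : ℕ) :
    ∃ r ∈ (⊤ : Subgroup G).lowerCentralSeries (j + 2), ⁅a ^ s, g ^ t⁆ = ⁅a, g⁆ ^ (s * t) * r := by
  set N := (⊤ : Subgroup G).lowerCentralSeries (j + 2)
  let π := QuotientGroup.mk' N
  refine ⟨(⁅a, g⁆ ^ (s * t))⁻¹ * ⁅a ^ s, g ^ t⁆, ?_, by group⟩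
  have hmem : ∀ x : G, π x = 1 → x ∈ N := by
    intro x hx
    exact (QuotientGroup.ker_mk' N) ▸ (MonoidHom.mem_ker (f := π)).mpr hx
  apply hmem
  have h1 : π ⁅a ^ s, g ^ t⁆ = (π ⁅a, g ^ t⁆) ^ s := by
    obtain ⟨r, hr, heq⟩ := comm_pow_left ha (g ^ t) s
    have hr1 : π r = 1 := (QuotientGroup.eq_one_iff r).mpr hr
    rw [heq, map_mul, map_pow, hr1, mul_one]
  have h2 : π ⁅a, g ^ t⁆ = (π ⁅a, g⁆) ^ t := by
    obtain ⟨r, hr, heq⟩ := comm_pow_right ha g t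
    have hr1 : π r = 1 := (QuotientGroup.eq_one_iff r).mpr hr
    rw [heq, map_mul, map_pow, hr1, mul_one]
  rw [map_mul, h1, h2, ← pow_mul, map_inv, map_pow, mul_comm t s]
  group

/-- P. Hall's lemma: the `j`-th lower central term of the subgroup generated by `n`-th
powers is contained in the subgroup generated by `n^(j+1)`-th powers of the `j`-th lower
central term, modulo the next term. -/
lemma hall (n j : ℕ) :
    Subgroup.map (pcl (⊤ : Subgroup G) n).subtype
        ((⊤ : Subgroup (pcl (⊤ : Subgroup G) n)).lowerCentralSeries j)
      ≤ pcl ((⊤ : Subgroup G).lowerCentralSeries j) (n ^ (j + 1)) ⊔ (⊤ : Subgroup G).lowerCentralSeries (j + 1) := by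
  induction j with
  | zero =>
    rintro x ⟨y, -, rfl⟩
    apply Subgroup.mem_sup_left
    rw [lowerCentralSeries_zero, pow_one]
    exact y.2
  | succ j ih =>
    set K := pcl (⊤ : Subgroup G) n with hK
    set R := pcl ((⊤ : Subgroup G).lowerCentralSeries (j + 1)) (n ^ (j + 2)) ⊔ (⊤ : Subgroup G).lowerCentralSeries (j + 2)
      with hR
    haveI hn1 : (pcl ((⊤ : Subgroup G).lowerCentralSeries (j + 1)) (n ^ (j + 2))).Normal := pcl_normal _ _
    haveI hn2 : R.Normal := Subgroup.sup_normal _ _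
    have hgen : ∀ a ∈ (⊤ : Subgroup G).lowerCentralSeries j, ∀ k ∈ K, ⁅a ^ n ^ (j + 1), k⁆ ∈ R := by
      intro a ha k hk
      induction hk using closure_induction with
      | mem g hg =>
        obtain ⟨g, -, rfl⟩ := hg
        obtain ⟨r, hr, heq⟩ := comm_pow_pow ha g (n ^ (j + 1)) n
        rw [heq, ← pow_succ]
        exact mul_mem (Subgroup.mem_sup_left (mem_pcl_self (comm_mem_lcs_succ ha g) _))
          (Subgroup.mem_sup_right hr)
      | one => rw [commutatorElement_one_right]; exact one_mem _
      | mul k₁ k₂ hk₁ hk₂ h₁ h₂ =>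
        have key : ⁅a ^ n ^ (j + 1), k₁ * k₂⁆ =
            ⁅a ^ n ^ (j + 1), k₁⁆ * (k₁ * ⁅a ^ n ^ (j + 1), k₂⁆ * k₁⁻¹) := by
          simp only [commutatorElement_def]; group
        rw [key]
        exact mul_mem h₁ (hn2.conj_mem _ h₂ k₁)
      | inv k hkk h =>
        have key : ⁅a ^ n ^ (j + 1), k⁻¹⁆ = k⁻¹ * ⁅a ^ n ^ (j + 1), k⁆⁻¹ * (k⁻¹)⁻¹ := by
          simp only [commutatorElement_def]; group
        rw [key]
        exact hn2.conj_mem _ (inv_mem h) k⁻¹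
    have hstep : (⊤ : Subgroup (↥K)).lowerCentralSeries (j + 1) =
        ⁅(⊤ : Subgroup (↥K)).lowerCentralSeries j, (⊤ : Subgroup ↥K)⁆ := rfl
    rw [hstep, Subgroup.map_commutator, Subgroup.commutator_le]
    intro x hx k hk
    have hk' : k ∈ K := by
      obtain ⟨y, -, rfl⟩ := hk
      exact y.2
    have hx' : x ∈ Subgroup.closure
        ({y : G | ∃ a ∈ (⊤ : Subgroup G).lowerCentralSeries j, a ^ n ^ (j + 1) = y} ∪
          ((⊤ : Subgroup G).lowerCentralSeries (j + 1) : Set G)) := by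
      rw [Subgroup.closure_union, Subgroup.closure_eq]
      exact ih hx
    clear hx hk
    induction hx' using closure_induction with
    | mem y hy =>
      rcases hy with ⟨a, ha, rfl⟩ | hy
      · exact hgen a ha k hk'
      · exact Subgroup.mem_sup_right (comm_mem_lcs_succ hy k)
    | one => rw [commutatorElement_one_left]; exact one_mem _
    | mul x y hx hy hpx hpy =>
      have key : ⁅x * y, k⁆ = x * ⁅y, k⁆ * x⁻¹ * ⁅x, k⁆ := by
        simp only [commutatorElement_def]; group
      rw [key]
      exact mul_mem (by simpa using hn2.conj_mem _ hpy x) hpx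
    | inv x hx hpx =>
      have key : ⁅x⁻¹, k⁆ = x⁻¹ * ⁅x, k⁆⁻¹ * (x⁻¹)⁻¹ := by
        simp only [commutatorElement_def]; group
      rw [key]
      exact hn2.conj_mem _ (inv_mem hpx) x⁻¹

lemma lcs_le_map_of_surjective {H : Type*} [Group H] (f : G →* H)
    (hf : Function.Surjective f) (j : ℕ) :
    (⊤ : Subgroup H).lowerCentralSeries j ≤ Subgroup.map f ((⊤ : Subgroup G).lowerCentralSeries j) := by
  induction j with
  | zero =>
    rw [lowerCentralSeries_zero (G := G), Subgroup.map_top_of_surjective f hf]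
    exact le_rfl
  | succ j ih =>
    have h1 : (⊤ : Subgroup H).lowerCentralSeries (j + 1) = ⁅(⊤ : Subgroup H).lowerCentralSeries j, (⊤ : Subgroup H)⁆ := rfl
    have h2 : (⊤ : Subgroup G).lowerCentralSeries (j + 1) = ⁅(⊤ : Subgroup G).lowerCentralSeries j, (⊤ : Subgroup G)⁆ := rfl
    rw [h1, h2, Subgroup.map_commutator]
    exact Subgroup.commutator_mono ih (by rw [Subgroup.map_top_of_surjective f hf])

lemma pcl_top_map {H : Type*} [Group H] (f : G →* H) (m : ℕ) {x : G}
    (hx : x ∈ pcl (⊤ : Subgroup G) m) : f x ∈ pcl (⊤ : Subgroup H) m := by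
  induction hx using closure_induction with
  | mem y hy =>
      obtain ⟨g, -, rfl⟩ := hy
      rw [map_pow]; exact mem_pcl_self (mem_top (f g)) m
  | one => rw [map_one]; exact one_mem _
  | mul a b _ _ h1 h2 => rw [map_mul]; exact mul_mem h1 h2
  | inv a _ h => rw [map_inv]; exact inv_mem h

end Aux

/-- Mal'cev's power theorem: in a nilpotent group of class at most `c`, every element of
the subgroup generated by `n^c`-th powers is an `n`-th power. -/
theorem malcev_pow (c : ℕ) : ∀ {G : Type u} [Group G], (⊤ : Subgroup G).lowerCentralSeries c = ⊥ →
    ∀ (n : ℕ) (w : G), w ∈ pcl (⊤ : Subgroup G) (n ^ c) → ∃ x : G, x ^ n = w := by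
  induction c with
  | zero =>
    intro G _ hbot n w _
    have hw1 : w ∈ (⊥ : Subgroup G) := by
      rw [← hbot]; exact Subgroup.mem_top w
    exact ⟨1, by rw [one_pow]; exact (Subgroup.mem_bot.mp hw1).symm⟩
  | succ c ih =>
    intro G _ hbot n w hw
    set K := pcl (⊤ : Subgroup G) n with hKdef
    have hsub : pcl (⊤ : Subgroup G) (n ^ (c + 1)) ≤
        Subgroup.map K.subtype (pcl (⊤ : Subgroup ↥K) (n ^ c)) := by
      rw [pcl, Subgroup.closure_le]
      rintro x ⟨g, -, rfl⟩
      have hgnK : g ^ n ∈ K := mem_pcl_self (Subgroup.mem_top g) n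
      refine ⟨(⟨g ^ n, hgnK⟩ : ↥K) ^ n ^ c,
        Subgroup.subset_closure ⟨⟨g ^ n, hgnK⟩, Subgroup.mem_top _, rfl⟩, ?_⟩
      show ((⟨g ^ n, hgnK⟩ : ↥K) : G) ^ n ^ c = g ^ n ^ (c + 1)
      rw [← pow_mul, ← pow_succ']
    obtain ⟨w', hw', hww⟩ := hsub hw
    set N := (⊤ : Subgroup ↥K).lowerCentralSeries c with hN
    set π := QuotientGroup.mk' N with hπ
    have hQ : (⊤ : Subgroup (↥K ⧸ N)).lowerCentralSeries c = ⊥ := by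
      apply le_bot_iff.mp
      refine le_trans (lcs_le_map_of_surjective π (QuotientGroup.mk'_surjective N) c) ?_
      have hmap : Subgroup.map π N = ⊥ :=
        (Subgroup.map_eq_bot_iff N).mpr (by rw [hπ, QuotientGroup.ker_mk'])
      exact hmap.le
    obtain ⟨ybar, hy⟩ := ih hQ n (π w') (pcl_top_map π (n ^ c) hw')
    obtain ⟨y, rfl⟩ := QuotientGroup.mk'_surjective N ybar
    set u := (y ^ n)⁻¹ * w' with hu
    have huN : u ∈ N := by
      have h1 : π u = 1 := by
        rw [hu, map_mul, map_inv, map_pow, hy]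
        group
      exact (QuotientGroup.eq_one_iff u).mp h1
    have huG : (u : G) ∈ pcl ((⊤ : Subgroup G).lowerCentralSeries c) (n ^ (c + 1)) := by
      have h2 := hall (G := G) n c (⟨u, huN, rfl⟩ : (u : G) ∈ Subgroup.map K.subtype N)
      rwa [hbot, sup_bot_eq] at h2
    have hcen : ∀ l ∈ (⊤ : Subgroup G).lowerCentralSeries c, ∀ g : G, Commute l g := by
      intro l hl g
      have h1 : ⁅l, g⁆ ∈ (⊤ : Subgroup G).lowerCentralSeries (c + 1) := comm_mem_lcs_succ hl g
      rw [hbot, Subgroup.mem_bot] at h1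
      exact commutatorElement_eq_one_iff_commute.mp h1
    have hdiv : ∀ z ∈ pcl ((⊤ : Subgroup G).lowerCentralSeries c) (n ^ (c + 1)),
        ∃ l ∈ (⊤ : Subgroup G).lowerCentralSeries c, l ^ n ^ (c + 1) = z := by
      intro z hz
      induction hz using Subgroup.closure_induction with
      | mem v hv => obtain ⟨a, ha, rfl⟩ := hv; exact ⟨a, ha, rfl⟩
      | one => exact ⟨1, one_mem _, one_pow _⟩
      | mul z₁ z₂ h₁ h₂ p₁ p₂ =>
        obtain ⟨l₁, hl₁, rfl⟩ := p₁
        obtain ⟨l₂, hl₂, rfl⟩ := p₂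
        exact ⟨l₁ * l₂, mul_mem hl₁ hl₂, by rw [(hcen l₁ hl₁ l₂).mul_pow]⟩
      | inv z h p =>
        obtain ⟨l, hl, rfl⟩ := p
        exact ⟨l⁻¹, inv_mem hl, by rw [inv_pow]⟩
    obtain ⟨l, hl, hlu⟩ := hdiv _ huG
    refine ⟨(y : G) * l ^ n ^ c, ?_⟩
    have hcom : Commute ((y : G)) (l ^ n ^ c) := ((hcen l hl (y : G)).pow_left _).symm
    rw [hcom.mul_pow]
    have h3 : (l ^ n ^ c) ^ n = (u : G) := by
      rw [← pow_mul, ← pow_succ]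
      exact hlu
    rw [h3]
    have h4 : y ^ n * u = w' := by rw [hu]; group
    calc (y : G) ^ n * (u : G) = ((y ^ n * u : ↥K) : G) := by norm_cast
    _ = (w' : G) := by rw [h4]
    _ = w := hww

/-- In a nilpotent group, the subgroup generated by a family of divisible subgroups is
divisible. -/
theorem iSup_isDivisible {G : Type*} [Group G] [Group.IsNilpotent G] {ι : Sort*}
    (D : ι → Subgroup G) (hD : ∀ i, (D i).IsDivisible) : (⨆ i, D i).IsDivisible := by
  obtain ⟨c, hc⟩ :=
    nilpotent_iff_lowerCentralSeries.mp (Subgroup.isNilpotent (⨆ i, D i))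
  intro d hd n hn
  have hnc : 0 < n ^ c := pow_pos hn c
  have hT : (⨆ i, D i) ≤
      Subgroup.map (⨆ i, D i).subtype (pcl (⊤ : Subgroup ↥(⨆ i, D i)) (n ^ c)) := by
    apply iSup_le
    intro i x hx
    obtain ⟨e, he, hen⟩ := hD i x hx (n ^ c) hnc
    have heS : e ∈ ⨆ i, D i := (le_iSup D i) he
    refine ⟨(⟨e, heS⟩ : ↥(⨆ i, D i)) ^ n ^ c,
      Subgroup.subset_closure ⟨⟨e, heS⟩, Subgroup.mem_top _, rfl⟩, ?_⟩
    show ((⟨e, heS⟩ : ↥(⨆ i, D i)) : G) ^ n ^ c = x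
    exact hen
  obtain ⟨w', hw', hww⟩ := hT hd
  obtain ⟨x, hx⟩ := malcev_pow c hc n w' hw'
  refine ⟨(x : G), x.2, ?_⟩
  rw [← hww, ← hx]
  norm_cast

/-- In a nilpotent torsion-free group, the subgroup generated by any family of
divisible subgroups is divisible; consequently there is a largest divisible subgroup. -/
theorem stmt12 {G : Type*} [Group G] [Group.IsNilpotent G]
    (htf : ∀ g : G, g ≠ 1 → ¬IsOfFinOrder g) :
    (∀ (ι : Type) (D : ι → Subgroup G), (∀ i, (D i).IsDivisible) →
      (⨆ i, D i).IsDivisible) ∧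
    ∃ H : Subgroup G, H.IsDivisible ∧ ∀ D : Subgroup G, D.IsDivisible → D ≤ H := by
  constructor
  · intro ι D h
    exact iSup_isDivisible D h
  · refine ⟨⨆ p : {D : Subgroup G // D.IsDivisible}, (p : Subgroup G),
      iSup_isDivisible _ (fun p => p.2), ?_⟩
    intro D hD
    exact le_iSup (fun p : {D : Subgroup G // D.IsDivisible} => (p : Subgroup G)) ⟨D, hD⟩
end

section
/- Let G be a nilpotent torsion-free group and H its largest divisible subgroup. Then the quotient G/H is reduced, i.e., G/H has no nontrivial divisible subgroup. -/
open scoped commutatorElement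

section Aux

variable {K : Type*} [Group K]

/-- The image of `(⊤ : Subgroup K).lowerCentralSeries j` in `K ⧸ (⊤ : Subgroup K).lowerCentralSeries (j+1)` is central. -/
private lemma aux_central {j : ℕ} {y : K} (hy : y ∈ (⊤ : Subgroup K).lowerCentralSeries j)
    (z : K ⧸ (⊤ : Subgroup K).lowerCentralSeries (j + 1)) :
    Commute (QuotientGroup.mk y : K ⧸ (⊤ : Subgroup K).lowerCentralSeries (j + 1)) z := by
  induction z using QuotientGroup.induction_on with
  | H z =>
    have h : ⁅y, z⁆ ∈ (⊤ : Subgroup K).lowerCentralSeries (j + 1) :=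
      Subgroup.commutator_mem_commutator hy (Subgroup.mem_top z)
    have : (QuotientGroup.mk ⁅y, z⁆ : K ⧸ (⊤ : Subgroup K).lowerCentralSeries (j + 1)) = 1 :=
      (QuotientGroup.eq_one_iff _).2 h
    rw [show (QuotientGroup.mk ⁅y, z⁆ : K ⧸ (⊤ : Subgroup K).lowerCentralSeries (j + 1))
        = ⁅(QuotientGroup.mk y : K ⧸ (⊤ : Subgroup K).lowerCentralSeries (j + 1)), QuotientGroup.mk z⁆ from
      map_commutatorElement (QuotientGroup.mk' _) y z] at this
    exact commutatorElement_eq_one_iff_commute.1 this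

private lemma aux_comm_pow_s14 {M : Type*} [Group M] (a b : M)
    (h : ∀ z, Commute ⁅a, b⁆ z) (m : ℕ) : ⁅a ^ m, b⁆ = ⁅a, b⁆ ^ m := by
  induction m with
  | zero => simp [commutatorElement_def]
  | succ m ih =>
    have key : ⁅a * a ^ m, b⁆ = a * ⁅a ^ m, b⁆ * a⁻¹ * ⁅a, b⁆ := by
      simp only [commutatorElement_def]; group
    rw [pow_succ', key, ih, ← ((h a).pow_left m).eq, mul_inv_cancel_right, ← pow_succ]

/-- `m`-divisibility propagates down the lower central series, modulo the next term. -/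
private lemma aux_Q (m : ℕ)
    (hab : ∀ k : K, ∃ x : K, ∃ g ∈ (⊤ : Subgroup K).lowerCentralSeries 1, k = x ^ m * g) :
    ∀ n : ℕ, ∀ g ∈ (⊤ : Subgroup K).lowerCentralSeries n, ∃ y ∈ (⊤ : Subgroup K).lowerCentralSeries n,
      (QuotientGroup.mk (y ^ m) : K ⧸ (⊤ : Subgroup K).lowerCentralSeries (n + 1)) = QuotientGroup.mk g := by
  intro n
  induction n with
  | zero =>
    intro g _
    obtain ⟨x, g₁, hg₁, hk⟩ := hab g
    refine ⟨x, Subgroup.mem_top x, ?_⟩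
    have h1 : (QuotientGroup.mk g₁ : K ⧸ (⊤ : Subgroup K).lowerCentralSeries 1) = 1 :=
      (QuotientGroup.eq_one_iff _).2 hg₁
    rw [hk, QuotientGroup.mk_mul, h1, mul_one]
  | succ n ih =>
    intro g hg
    rw [Subgroup.mem_lowerCentralSeries_succ_iff] at hg
    induction hg using Subgroup.closure_induction with
    | mem g hgen =>
      obtain ⟨p, hp, q, -, hpq⟩ := hgen
      obtain ⟨y, hy, hy2⟩ := ih p hp
      -- y' = ⁅y, q⁆ is the root of ⁅p, q⁆ mod γ (n+2)
      refine ⟨⁅y, q⁆, Subgroup.commutator_mem_commutator hy (Subgroup.mem_top q), ?_⟩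
      set π : K →* K ⧸ (⊤ : Subgroup K).lowerCentralSeries (n + 2) := QuotientGroup.mk' _
      -- p = y^m * h with h ∈ γ (n+1)
      have hmem : (y ^ m)⁻¹ * p ∈ (⊤ : Subgroup K).lowerCentralSeries (n + 1) := QuotientGroup.eq.1 hy2
      set h := (y ^ m)⁻¹ * p with hh
      have hp_eq : p = y ^ m * h := by rw [hh]; group
      have hcentral : ∀ z, Commute (π h) z := fun z => aux_central hmem z
      have hyq : ⁅y, q⁆ ∈ (⊤ : Subgroup K).lowerCentralSeries (n + 1) :=
        Subgroup.commutator_mem_commutator hy (Subgroup.mem_top q)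
      have hyqc : ∀ z, Commute (π ⁅y, q⁆) z := fun z => aux_central hyq z
      have step1 : π g = ⁅π p, π q⁆ := by
        rw [← hpq]
        exact (map_commutatorElement π p q : π ⁅p, q⁆ = _) ▸ rfl
      have step2 : ⁅π p, π q⁆ = ⁅(π y) ^ m, π q⁆ := by
        rw [hp_eq, map_mul, map_pow]
        simp only [commutatorElement_def]
        rw [mul_inv_rev]
        have hc := hcentral (π q)
        have hc' := hcentral ((π y) ^ m)⁻¹
        -- ((πy)^m * πh) * πq * (πh⁻¹ * (πy)^(-m)) * πq⁻¹ = (πy)^m * πq * (πy)^(-m) * πq⁻¹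
        calc (π y) ^ m * π h * π q * (π h⁻¹ * ((π y) ^ m)⁻¹) * (π q)⁻¹
            = (π y) ^ m * (π h * π q * π h⁻¹) * ((π y) ^ m)⁻¹ * (π q)⁻¹ := by group
          _ = (π y) ^ m * π q * ((π y) ^ m)⁻¹ * (π q)⁻¹ := by
              rw [show π h * π q * π h⁻¹ = π q by
                rw [map_inv]; rw [hc.eq]; group]
      have step3 : ⁅(π y) ^ m, π q⁆ = (π ⁅y, q⁆) ^ m := by
        rw [map_commutatorElement]
        exact aux_comm_pow_s14 (π y) (π q)
          (fun z => (map_commutatorElement π y q : π ⁅y, q⁆ = _) ▸ hyqc z) m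
      show π (⁅y, q⁆ ^ m) = π g
      rw [map_pow, step1, step2, step3]
    | one =>
      exact ⟨1, Subgroup.one_mem _, by rw [one_pow]⟩
    | mul g₁ g₂ hg₁ hg₂ ih₁ ih₂ =>
      obtain ⟨y₁, hy₁, hy₁2⟩ := ih₁
      obtain ⟨y₂, hy₂, hy₂2⟩ := ih₂
      refine ⟨y₁ * y₂, Subgroup.mul_mem _ hy₁ hy₂, ?_⟩
      have hc : Commute (QuotientGroup.mk y₁ : K ⧸ (⊤ : Subgroup K).lowerCentralSeries (n + 2))
          (QuotientGroup.mk y₂) := aux_central hy₁ _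
      calc (QuotientGroup.mk ((y₁ * y₂) ^ m) : K ⧸ (⊤ : Subgroup K).lowerCentralSeries (n + 2))
          = (QuotientGroup.mk y₁ * QuotientGroup.mk y₂ : K ⧸ (⊤ : Subgroup K).lowerCentralSeries (n + 2)) ^ m :=
            by push_cast; rfl
        _ = (QuotientGroup.mk y₁ : K ⧸ (⊤ : Subgroup K).lowerCentralSeries (n + 2)) ^ m
            * (QuotientGroup.mk y₂) ^ m := hc.mul_pow m
        _ = QuotientGroup.mk (y₁ ^ m) * QuotientGroup.mk (y₂ ^ m) := by push_cast; rfl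
        _ = QuotientGroup.mk g₁ * QuotientGroup.mk g₂ := by rw [hy₁2, hy₂2]
        _ = QuotientGroup.mk (g₁ * g₂) := rfl
    | inv g hgmem ihg =>
      obtain ⟨y, hy, hy2⟩ := ihg
      refine ⟨y⁻¹, Subgroup.inv_mem _ hy, ?_⟩
      rw [inv_pow]
      calc (QuotientGroup.mk (y ^ m)⁻¹ : K ⧸ (⊤ : Subgroup K).lowerCentralSeries (n + 2))
          = (QuotientGroup.mk (y ^ m) : K ⧸ (⊤ : Subgroup K).lowerCentralSeries (n + 2))⁻¹ := by push_cast; rfl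
        _ = (QuotientGroup.mk g : K ⧸ (⊤ : Subgroup K).lowerCentralSeries (n + 2))⁻¹ := by rw [hy2]
        _ = QuotientGroup.mk g⁻¹ := by push_cast; rfl

/-- A nilpotent group whose abelianization is `m`-divisible is `m`-divisible. -/
private lemma aux_divisible_of_ab [Group.IsNilpotent K] (m : ℕ)
    (hab : ∀ k : K, ∃ x : K, ∃ g ∈ (⊤ : Subgroup K).lowerCentralSeries 1, k = x ^ m * g) :
    ∀ k : K, ∃ x : K, x ^ m = k := by
  have P : ∀ n : ℕ, ∀ k : K, ∃ x : K, ∃ g ∈ (⊤ : Subgroup K).lowerCentralSeries n, k = x ^ m * g := by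
    intro n
    induction n with
    | zero => exact fun k => ⟨1, k, Subgroup.mem_top k, by rw [one_pow, one_mul]⟩
    | succ n ih =>
      intro k
      obtain ⟨x, g, hg, hk⟩ := ih k
      obtain ⟨y, hy, hy2⟩ := aux_Q m hab n g hg
      -- g = y^m * h, h ∈ γ (n+1)
      have hmem : (y ^ m)⁻¹ * g ∈ (⊤ : Subgroup K).lowerCentralSeries (n + 1) := QuotientGroup.eq.1 hy2
      -- x^m * y^m = (x*y)^m * c, c ∈ γ (n+1)
      have hcomm : Commute (QuotientGroup.mk x : K ⧸ (⊤ : Subgroup K).lowerCentralSeries (n + 1))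
          (QuotientGroup.mk y) := ((aux_central hy (QuotientGroup.mk x)).symm)
      have hq : (QuotientGroup.mk ((x * y) ^ m) : K ⧸ (⊤ : Subgroup K).lowerCentralSeries (n + 1))
          = QuotientGroup.mk (x ^ m * y ^ m) := by
        calc (QuotientGroup.mk ((x * y) ^ m) : K ⧸ (⊤ : Subgroup K).lowerCentralSeries (n + 1))
            = (QuotientGroup.mk x * QuotientGroup.mk y : K ⧸ (⊤ : Subgroup K).lowerCentralSeries (n + 1)) ^ m :=
              by push_cast; rfl
          _ = (QuotientGroup.mk x : K ⧸ (⊤ : Subgroup K).lowerCentralSeries (n + 1)) ^ m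
              * (QuotientGroup.mk y) ^ m := hcomm.mul_pow m
          _ = QuotientGroup.mk (x ^ m * y ^ m) := by push_cast; rfl
      have hc : ((x * y) ^ m)⁻¹ * (x ^ m * y ^ m) ∈ (⊤ : Subgroup K).lowerCentralSeries (n + 1) :=
        QuotientGroup.eq.1 hq
      refine ⟨x * y, (((x * y) ^ m)⁻¹ * (x ^ m * y ^ m)) * ((y ^ m)⁻¹ * g),
        Subgroup.mul_mem _ hc hmem, ?_⟩
      rw [hk]; group
  intro k
  obtain ⟨n, hn⟩ := Subgroup.nilpotent_iff_lowerCentralSeries.1 ‹Group.IsNilpotent K›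
  obtain ⟨x, g, hg, hk⟩ := P n k
  rw [hn, Subgroup.mem_bot] at hg
  exact ⟨x, by rw [hk, hg, mul_one]⟩

/-- In any group, `a^m * b^m` agrees with `(a*b)^m` modulo the commutator subgroup. -/
private lemma aux_ab_identity (a b : K) (m : ℕ) :
    ((a * b) ^ m)⁻¹ * (a ^ m * b ^ m) ∈ commutator K := by
  have hcomm : Commute ((a : K ⧸ commutator K)) (b : K ⧸ commutator K) := by
    have hm : ⁅a, b⁆ ∈ commutator K := by
      rw [commutator_def]
      exact Subgroup.commutator_mem_commutator (Subgroup.mem_top a) (Subgroup.mem_top b)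
    have h1 : ((⁅a, b⁆ : K) : K ⧸ commutator K) = 1 := (QuotientGroup.eq_one_iff _).2 hm
    rw [show ((⁅a, b⁆ : K) : K ⧸ commutator K) = ⁅(a : K ⧸ commutator K), (b : K ⧸ commutator K)⁆
      from map_commutatorElement (QuotientGroup.mk' _) a b] at h1
    exact commutatorElement_eq_one_iff_commute.1 h1
  have key : ((((a * b) ^ m)⁻¹ * (a ^ m * b ^ m) : K) : K ⧸ commutator K) = 1 := by
    simp only [QuotientGroup.mk_mul, QuotientGroup.mk_inv, QuotientGroup.mk_pow]
    rw [hcomm.mul_pow]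
    group
  exact (QuotientGroup.eq_one_iff _).1 key

end Aux

/-- If `H` is the largest divisible subgroup of a nilpotent torsion-free group `G`,
then `G/H` is reduced. -/
theorem stmt14 {G : Type*} [Group G] [Group.IsNilpotent G]
    (htf : ∀ g : G, g ≠ 1 → ¬IsOfFinOrder g)
    (H : Subgroup G) [H.Normal] (hHdiv : H.IsDivisible)
    (hHmax : ∀ D : Subgroup G, D.IsDivisible → D ≤ H) :
    ∀ D : Subgroup (G ⧸ H), D.IsDivisible → D = ⊥ := by
  intro D hDdiv
  set π : G →* G ⧸ H := QuotientGroup.mk' H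
  set L : Subgroup G := D.comap π with hL
  have hHL : H ≤ L := fun h hh => by
    show π h ∈ D
    have : π h = 1 := (QuotientGroup.eq_one_iff h).2 hh
    rw [this]; exact D.one_mem
  -- L is divisible
  have hLdiv : L.IsDivisible := by
    intro d hd m hm
    -- find x₀ ∈ L, w ∈ H with d = x₀^m * w^m
    obtain ⟨y, hy, hy2⟩ := hDdiv (π d) hd m hm
    obtain ⟨x₀, rfl⟩ := QuotientGroup.mk'_surjective H y
    have hx₀ : x₀ ∈ L := hy
    have hmem : (x₀ ^ m)⁻¹ * d ∈ H := by
      have : π (x₀ ^ m) = π d := by rw [map_pow]; exact hy2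
      have := QuotientGroup.eq.1 this
      simpa using this
    obtain ⟨w, hw, hw2⟩ := hHdiv _ hmem m hm
    have hwL : w ∈ L := hHL hw
    have hd_eq : d = x₀ ^ m * w ^ m := by rw [hw2]; group
    -- now use divisibility of the nilpotent group ↥L
    have hab : ∀ k : ↥L, ∃ x : ↥L, ∃ g ∈ (⊤ : Subgroup ↥L).lowerCentralSeries 1, k = x ^ m * g := by
      intro k
      obtain ⟨y', hy', hy'2⟩ := hDdiv (π k) k.2 m hm
      obtain ⟨x₁, rfl⟩ := QuotientGroup.mk'_surjective H y'
      have hx₁ : x₁ ∈ L := hy'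
      have hmem' : (x₁ ^ m)⁻¹ * (k : G) ∈ H := by
        have : π (x₁ ^ m) = π k := by rw [map_pow]; exact hy'2
        simpa using QuotientGroup.eq.1 this
      obtain ⟨w', hw', hw'2⟩ := hHdiv _ hmem' m hm
      have hw'L : w' ∈ L := hHL hw'
      have hk_eq : (k : G) = x₁ ^ m * w' ^ m := by rw [hw'2]; group
      set a : ↥L := ⟨x₁, hx₁⟩
      set b : ↥L := ⟨w', hw'L⟩
      have hk' : k = a ^ m * b ^ m := by
        apply Subtype.ext
        push_cast
        exact hk_eq
      refine ⟨a * b, ((a * b) ^ m)⁻¹ * (a ^ m * b ^ m), ?_, ?_⟩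
      · rw [Subgroup.top_lowerCentralSeries_one]
        exact aux_ab_identity a b m
      · rw [hk']; group
    have := aux_divisible_of_ab (K := ↥L) m hab ⟨d, hd⟩
    obtain ⟨x, hx⟩ := this
    exact ⟨(x : G), x.2, by simpa using congrArg Subtype.val hx⟩
  -- conclude
  have hLH : L ≤ H := hHmax L hLdiv
  have : D = Subgroup.map π L :=
    (Subgroup.map_comap_eq_self_of_surjective (QuotientGroup.mk'_surjective H) D).symm
  rw [this, eq_bot_iff]
  intro z hz
  obtain ⟨g, hg, rfl⟩ := hz
  rw [Subgroup.mem_bot]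
  exact (QuotientGroup.eq_one_iff g).2 (hLH hg)
end

section
/- Let G be a reduced torsion-free nilpotent group of class s. Then G/Z_{s-1}(G) is a reduced torsion-free abelian group. -/
/-- `Monoid.IsTorsionFree`, removed from Mathlib, with its former definition. -/
def Monoid.IsTorsionFree (G : Type*) [Monoid G] : Prop :=
  ∀ g : G, g ≠ 1 → ¬IsOfFinOrder g

open scoped commutatorElement

section Aux
variable {H : Type*} [Group H]

lemma aux_comm_mul (x y b : H) : ⁅x * y, b⁆ = x * ⁅y, b⁆ * x⁻¹ * ⁅x, b⁆ := by
  simp only [commutatorElement_def]; group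

lemma aux_center_comm {z : H} (hz : z ∈ Subgroup.center H) (b : H) : ⁅z, b⁆ = 1 :=
  commutatorElement_eq_one_iff_commute.mpr ((Subgroup.mem_center_iff.mp hz b).symm)

lemma aux_comm_pow_s16 (a b : H) (hc : ⁅a, b⁆ ∈ Subgroup.center H) :
    ∀ n : ℕ, ⁅a ^ n, b⁆ = ⁅a, b⁆ ^ n := by
  intro n
  induction n with
  | zero => simp
  | succ n ih =>
    rw [pow_succ' a n, aux_comm_mul, ih, pow_succ]
    have h := Subgroup.mem_center_iff.mp (pow_mem hc n) a
    rw [h]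
    group

lemma aux_comm_central_mul (a b : H) {z : H} (hz : z ∈ Subgroup.center H) :
    ⁅a * z, b⁆ = ⁅a, b⁆ := by
  rw [aux_comm_mul, aux_center_comm hz]
  group

end Aux

section Main
variable {G : Type*} [Group G]

lemma aux_central_s16 (i : ℕ) {x : G} (hx : x ∈ Subgroup.upperCentralSeries G (i + 1)) :
    (x : G ⧸ Subgroup.upperCentralSeries G i) ∈ Subgroup.center (G ⧸ Subgroup.upperCentralSeries G i) := by
  rw [Subgroup.mem_center_iff]
  intro q
  refine QuotientGroup.induction_on q fun g => ?_
  show ((g * x : G) : G ⧸ Subgroup.upperCentralSeries G i) = ((x * g : G) : G ⧸ Subgroup.upperCentralSeries G i)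
  refine QuotientGroup.eq.mpr ?_
  have h := mem_upperCentralSeries_succ_iff.mp (inv_mem hx) g⁻¹
  have heq : (g * x)⁻¹ * (x * g) = x⁻¹ * g⁻¹ * (x⁻¹)⁻¹ * (g⁻¹)⁻¹ := by group
  rw [heq]
  exact h

lemma aux_mk_comm (i : ℕ) (x g : G) :
    ((⁅x, g⁆ : G) : G ⧸ Subgroup.upperCentralSeries G i)
      = ⁅(x : G ⧸ Subgroup.upperCentralSeries G i), (g : G ⧸ Subgroup.upperCentralSeries G i)⁆ := by
  simp [commutatorElement_def]

lemma tf_step (htf : Monoid.IsTorsionFree G) :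
    ∀ i : ℕ, ∀ x : G, ∀ n : ℕ, 0 < n → x ∈ Subgroup.upperCentralSeries G (i + 1) →
      x ^ n ∈ Subgroup.upperCentralSeries G i → x ∈ Subgroup.upperCentralSeries G i := by
  intro i
  induction i with
  | zero =>
    intro x n hn _ hxn
    rw [upperCentralSeries_zero] at hxn ⊢
    have hx1 : x = 1 := by
      by_contra h
      exact htf x h (isOfFinOrder_iff_pow_eq_one.mpr ⟨n, hn, Subgroup.mem_bot.mp hxn⟩)
    simp [hx1]
  | succ i ih =>
    intro x n hn hx1 hxn
    rw [mem_upperCentralSeries_succ_iff]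
    intro g
    have hcom : ⁅x, g⁆ ∈ Subgroup.upperCentralSeries G (i + 1) :=
      mem_upperCentralSeries_succ_iff.mp hx1 g
    show ⁅x, g⁆ ∈ Subgroup.upperCentralSeries G i
    refine ih ⁅x, g⁆ n hn hcom ?_
    rw [← QuotientGroup.eq_one_iff]
    have hc : ⁅(x : G ⧸ Subgroup.upperCentralSeries G i), (g : G ⧸ Subgroup.upperCentralSeries G i)⁆ ∈
        Subgroup.center (G ⧸ Subgroup.upperCentralSeries G i) := by
      rw [← aux_mk_comm]; exact aux_central_s16 i hcom
    calc ((⁅x, g⁆ ^ n : G) : G ⧸ Subgroup.upperCentralSeries G i)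
        = ⁅(x : G ⧸ Subgroup.upperCentralSeries G i), (g : G ⧸ Subgroup.upperCentralSeries G i)⁆ ^ n := by
          rw [QuotientGroup.mk_pow, aux_mk_comm]
      _ = ⁅(x : G ⧸ Subgroup.upperCentralSeries G i) ^ n, (g : G ⧸ Subgroup.upperCentralSeries G i)⁆ :=
          (aux_comm_pow_s16 _ _ hc n).symm
      _ = ⁅((x ^ n : G) : G ⧸ Subgroup.upperCentralSeries G i), (g : G ⧸ Subgroup.upperCentralSeries G i)⁆ := by
          rw [QuotientGroup.mk_pow]
      _ = 1 := aux_center_comm (aux_central_s16 i hxn) _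

lemma tf_full [Group.IsNilpotent G] (htf : Monoid.IsTorsionFree G) (i : ℕ) (x : G) (n : ℕ)
    (hn : 0 < n) (hxn : x ^ n ∈ Subgroup.upperCentralSeries G i) : x ∈ Subgroup.upperCentralSeries G i := by
  have key : ∀ k : ℕ, ∀ y : G, y ∈ Subgroup.upperCentralSeries G (i + k) →
      y ^ n ∈ Subgroup.upperCentralSeries G i → y ∈ Subgroup.upperCentralSeries G i := by
    intro k
    induction k with
    | zero => intro y hy _; simpa using hy
    | succ k ih =>
      intro y hy hyn
      refine ih y ?_ hyn
      exact tf_step htf (i + k) y n hn hy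
        (upperCentralSeries_mono G (Nat.le_add_right i k) hyn)
  refine key (Group.nilpotencyClass G) x ?_ hxn
  have : Subgroup.upperCentralSeries G (Group.nilpotencyClass G) = ⊤ := upperCentralSeries_nilpotencyClass
  exact upperCentralSeries_mono G (Nat.le_add_left _ i) (by rw [this]; trivial)

lemma red_full (hred : ∀ D : Subgroup G, D.IsDivisible → D = ⊥) :
    ∀ i : ℕ, ∀ D : Subgroup G, D ≤ Subgroup.upperCentralSeries G (i + 1) →
      (∀ d ∈ D, ∀ n : ℕ, 0 < n → ∃ x ∈ D,
        ((x ^ n : G) : G ⧸ Subgroup.upperCentralSeries G i) = (d : G ⧸ Subgroup.upperCentralSeries G i)) →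
      D ≤ Subgroup.upperCentralSeries G i := by
  intro i
  induction i with
  | zero =>
    intro D _ hdiv
    have hdiv' : D.IsDivisible := by
      intro d hd n hn
      obtain ⟨x, hxD, hx⟩ := hdiv d hd n hn
      refine ⟨x, hxD, ?_⟩
      have := QuotientGroup.eq.mp hx
      rw [upperCentralSeries_zero] at this
      have := Subgroup.mem_bot.mp this
      exact (inv_mul_eq_one.mp this)
    rw [hred D hdiv']
    exact bot_le
  | succ i ih =>
    intro D hD1 hdiv
    set S : Set G := {c | ∃ d ∈ D, ∃ g : G, c = ⁅d, g⁆} with hS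
    set E := Subgroup.closure S with hEdef
    have hSE : S ⊆ (E : Set G) := Subgroup.subset_closure
    have hE1 : E ≤ Subgroup.upperCentralSeries G (i + 1) := by
      rw [hEdef, Subgroup.closure_le]
      rintro c ⟨d, hd, g, rfl⟩
      exact mem_upperCentralSeries_succ_iff.mp (hD1 hd) g
    have hgen : ∀ c ∈ S, ∀ n : ℕ, 0 < n → ∃ x ∈ E,
        ((x ^ n : G) : G ⧸ Subgroup.upperCentralSeries G i) = (c : G ⧸ Subgroup.upperCentralSeries G i) := by
      rintro c ⟨d, hd, g, rfl⟩ n hn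
      obtain ⟨x, hxD, hx⟩ := hdiv d hd n hn
      have hw : (x ^ n)⁻¹ * d ∈ Subgroup.upperCentralSeries G (i + 1) := QuotientGroup.eq.mp hx
      refine ⟨⁅x, g⁆, hSE ⟨x, hxD, g, rfl⟩, ?_⟩
      have hwc : (((x ^ n)⁻¹ * d : G) : G ⧸ Subgroup.upperCentralSeries G i) ∈
          Subgroup.center (G ⧸ Subgroup.upperCentralSeries G i) := aux_central_s16 i hw
      have hcc : ⁅(x : G ⧸ Subgroup.upperCentralSeries G i), (g : G ⧸ Subgroup.upperCentralSeries G i)⁆ ∈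
          Subgroup.center (G ⧸ Subgroup.upperCentralSeries G i) := by
        rw [← aux_mk_comm]
        exact aux_central_s16 i (mem_upperCentralSeries_succ_iff.mp (hD1 hxD) g)
      have hd_eq : (d : G ⧸ Subgroup.upperCentralSeries G i)
          = ((x ^ n : G) : G ⧸ Subgroup.upperCentralSeries G i) * (((x ^ n)⁻¹ * d : G) : _) := by
        rw [← QuotientGroup.mk_mul]
        congr 1
        group
      calc ((⁅x, g⁆ ^ n : G) : G ⧸ Subgroup.upperCentralSeries G i)
          = ⁅(x : G ⧸ Subgroup.upperCentralSeries G i), (g : G ⧸ Subgroup.upperCentralSeries G i)⁆ ^ n := by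
            rw [QuotientGroup.mk_pow, aux_mk_comm]
        _ = ⁅(x : G ⧸ Subgroup.upperCentralSeries G i) ^ n, (g : G ⧸ Subgroup.upperCentralSeries G i)⁆ :=
            (aux_comm_pow_s16 _ _ hcc n).symm
        _ = ⁅(x : G ⧸ Subgroup.upperCentralSeries G i) ^ n * (((x ^ n)⁻¹ * d : G) : _),
              (g : G ⧸ Subgroup.upperCentralSeries G i)⁆ := (aux_comm_central_mul _ _ hwc).symm
        _ = ⁅(d : G ⧸ Subgroup.upperCentralSeries G i), (g : G ⧸ Subgroup.upperCentralSeries G i)⁆ := by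
            rw [← QuotientGroup.mk_pow, ← hd_eq]
        _ = ((⁅d, g⁆ : G) : G ⧸ Subgroup.upperCentralSeries G i) := (aux_mk_comm i d g).symm
    have hEdiv : ∀ e ∈ E, ∀ n : ℕ, 0 < n → ∃ x ∈ E,
        ((x ^ n : G) : G ⧸ Subgroup.upperCentralSeries G i) = (e : G ⧸ Subgroup.upperCentralSeries G i) := by
      intro e he n hn
      rw [hEdef] at he
      induction he using Subgroup.closure_induction with
      | mem c hc => exact hgen c hc n hn
      | one => exact ⟨1, one_mem _, by simp⟩
      | mul e₁ e₂ he₁ he₂ ih₁ ih₂ =>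
        obtain ⟨x₁, hx₁, h₁⟩ := ih₁
        obtain ⟨x₂, hx₂, h₂⟩ := ih₂
        refine ⟨x₁ * x₂, mul_mem hx₁ hx₂, ?_⟩
        have c₁ : (x₁ : G ⧸ Subgroup.upperCentralSeries G i) ∈ Subgroup.center _ :=
          aux_central_s16 i (hE1 hx₁)
        have hcomm : Commute (x₁ : G ⧸ Subgroup.upperCentralSeries G i) (x₂ : G ⧸ _) :=
          (Subgroup.mem_center_iff.mp c₁ _).symm
        rw [QuotientGroup.mk_pow, QuotientGroup.mk_mul, hcomm.mul_pow,
          ← QuotientGroup.mk_pow, ← QuotientGroup.mk_pow, h₁, h₂, QuotientGroup.mk_mul]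
      | inv e he ihe =>
        obtain ⟨x, hx, h⟩ := ihe
        refine ⟨x⁻¹, inv_mem hx, ?_⟩
        rw [inv_pow, QuotientGroup.mk_inv, h, ← QuotientGroup.mk_inv]
    have hEZ : E ≤ Subgroup.upperCentralSeries G i := ih E hE1 hEdiv
    intro d hd
    rw [mem_upperCentralSeries_succ_iff]
    intro g
    exact hEZ (hSE ⟨d, hd, g, rfl⟩)

end Main

/-- If `G` is a reduced torsion-free nilpotent group of class `s`, then
`G/Z_{s-1}(G)` is a reduced torsion-free abelian group. -/
theorem stmt16 {G : Type*} [Group G] [Group.IsNilpotent G]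
    (htf : Monoid.IsTorsionFree G)
    (hred : ∀ D : Subgroup G, D.IsDivisible → D = ⊥)
    (s : ℕ) (hs : Group.nilpotencyClass G = s) :
    (∀ a b : G ⧸ Subgroup.upperCentralSeries G (s - 1), a * b = b * a) ∧
    Monoid.IsTorsionFree (G ⧸ Subgroup.upperCentralSeries G (s - 1)) ∧
    (∀ D : Subgroup (G ⧸ Subgroup.upperCentralSeries G (s - 1)), D.IsDivisible → D = ⊥) := by
  have Hkey : Subgroup.upperCentralSeries G (s - 1 + 1) = ⊤ :=
    upperCentralSeries_eq_top_iff_nilpotencyClass_le.mpr (by omega)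
  refine ⟨?_, ?_, ?_⟩
  · intro a b
    refine QuotientGroup.induction_on a fun x => QuotientGroup.induction_on b fun y => ?_
    have hx : x ∈ Subgroup.upperCentralSeries G (s - 1 + 1) := by rw [Hkey]; trivial
    exact (Subgroup.mem_center_iff.mp (aux_central_s16 (s - 1) hx) _).symm
  · intro q hq hfin
    obtain ⟨n, hn, hqn⟩ := isOfFinOrder_iff_pow_eq_one.mp hfin
    obtain ⟨x, rfl⟩ := QuotientGroup.mk_surjective q
    rw [← QuotientGroup.mk_pow, QuotientGroup.eq_one_iff] at hqn
    exact hq ((QuotientGroup.eq_one_iff x).mpr (tf_full htf (s - 1) x n hn hqn))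
  · intro D hDdiv
    set D₀ : Subgroup G := Subgroup.comap (QuotientGroup.mk' (Subgroup.upperCentralSeries G (s - 1))) D
      with hD₀
    have hD₀le : D₀ ≤ Subgroup.upperCentralSeries G (s - 1 + 1) := by rw [Hkey]; exact le_top
    have hD₀div : ∀ d ∈ D₀, ∀ n : ℕ, 0 < n → ∃ x ∈ D₀,
        ((x ^ n : G) : G ⧸ Subgroup.upperCentralSeries G (s - 1)) = (d : G ⧸ _) := by
      intro d hd n hn
      obtain ⟨q, hqD, hq⟩ := hDdiv ((d : G ⧸ Subgroup.upperCentralSeries G (s - 1))) hd n hn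
      obtain ⟨x, rfl⟩ := QuotientGroup.mk_surjective q
      exact ⟨x, hqD, by rw [QuotientGroup.mk_pow]; exact hq⟩
    have hfin : D₀ ≤ Subgroup.upperCentralSeries G (s - 1) := red_full hred (s - 1) D₀ hD₀le hD₀div
    rw [eq_bot_iff]
    intro q hqD
    obtain ⟨x, rfl⟩ := QuotientGroup.mk_surjective q
    have hx : x ∈ D₀ := hqD
    exact Subgroup.mem_bot.mpr ((QuotientGroup.eq_one_iff x).mpr (hfin hx))
end
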